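/- arXiv:1201.5592 — 7 statements merged into one kernel-verified Lean document; each statement's English description precedes it below -/
import Mathlib

section
/- There exists a constant C′ > 0, independent of z and w, such that C′ · k(z,w) · k(z,−w) = 1 for all z, w ∈ 𝔸; equivalently, 1/k(z,w) = C′ · k(z,−w) on 𝔸 × 𝔸. -/
open Complex

noncomputable def aR (q : ℝ) (n : ℤ) : ℝ := 1 / (1 + q ^ (2*n))

noncomputable def bR (q : ℝ) (n : ℤ) : ℝ := aR q n - aR q (n-1)

section Real
variable {q : ℝ} (hq0 : 0 < q) (hq1 : q < 1)

include hq0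

lemma den_pos (n : ℤ) : 0 < 1 + q ^ (2*n) := by
  have := zpow_pos hq0 (2*n); linarith

lemma aR_pos (n : ℤ) : 0 < aR q n := by
  have := den_pos hq0 (n := n); rw [aR]; positivity

lemma aR_le_one (n : ℤ) : aR q n ≤ 1 := by
  rw [aR, div_le_one (den_pos hq0 n)]
  have := zpow_pos hq0 (2*n); linarith

lemma aR_le_zpow (n : ℤ) : aR q n ≤ q ^ (-(2*n)) := by
  rw [aR, zpow_neg]
  have h1 := zpow_pos hq0 (2*n)
  rw [← one_div]
  exact one_div_le_one_div_of_le h1 (by linarith)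

lemma aR_neg (n : ℤ) : aR q (-n) = 1 - aR q n := by
  have h1 := zpow_pos hq0 (2*n)
  have h2 : q ^ (2*n) ≠ 0 := ne_of_gt h1
  have h3 : 1 + q ^ (2*n) ≠ 0 := by linarith
  have key : 1 + (q ^ (2*n))⁻¹ = (1 + q^(2*n)) / q^(2*n) := by field_simp; ring
  rw [aR, aR, mul_neg, zpow_neg, key, one_div_div, eq_sub_iff_add_eq, ← add_div]
  have h4 : q^(2*n)+1 = 1+q^(2*n) := add_comm _ _
  rw [h4, div_self h3]

lemma zpow_cast_eq (n : ℕ) : q ^ (2*(n:ℤ)) = (q^2)^n := by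
  rw [zpow_mul, zpow_natCast, zpow_two, sq]

include hq1

lemma aR_mono (n : ℤ) : aR q (n-1) ≤ aR q n := by
  have h1 := zpow_pos hq0 (2*n)
  have h2 : q ^ (2*(n-1)) = q ^ (2*n) * q^(-2 : ℤ) := by
    rw [← zpow_add₀ (ne_of_gt hq0)]; ring_nf
  have h3 : (1:ℝ) ≤ q^(-2:ℤ) := by
    rw [zpow_neg, one_le_inv_iff₀]
    refine ⟨by positivity, ?_⟩
    calc q^(2:ℤ) = q^(2:ℕ) := by norm_cast
      _ ≤ 1 := by nlinarith
  have h4 : q ^ (2*n) ≤ q ^ (2*(n-1)) := by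
    rw [h2]; nlinarith
  exact one_div_le_one_div_of_le (den_pos hq0 _) (by linarith)

lemma bR_nonneg (n : ℤ) : 0 ≤ bR q n := sub_nonneg.2 (aR_mono hq0 hq1 n)

omit hq1

lemma summable_int_of_bounds {f : ℤ → ℝ} {C r s : ℝ} (hf : ∀ n, 0 ≤ f n)
    (hr0 : 0 ≤ r) (hr : r < 1) (hs0 : 0 ≤ s) (hs : s < 1)
    (h1 : ∀ n : ℕ, f n ≤ C * r ^ n) (h2 : ∀ n : ℕ, f (-(n+1)) ≤ C * s ^ n) :
    Summable f := by
  apply Summable.of_nat_of_neg_add_one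
  · exact Summable.of_nonneg_of_le (fun n => hf n) h1
      ((summable_geometric_of_lt_one hr0 hr).mul_left C)
  · exact Summable.of_nonneg_of_le (fun n => hf _) h2
      ((summable_geometric_of_lt_one hs0 hs).mul_left C)

include hq1

lemma summable_bR : Summable (bR q) := by
  have hq2 : (0:ℝ) < q^2 := by positivity
  have hq21 : q^2 < 1 := by nlinarith
  apply summable_int_of_bounds hq0 (C := q^(-2:ℤ)) (r := q^2) (s := q^2)
    (bR_nonneg hq0 hq1) (le_of_lt hq2) hq21 (le_of_lt hq2) hq21
  · intro n
    have h1 : bR q n ≤ aR q (-((n:ℤ)-1)) := by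
      rw [aR_neg hq0]
      have := aR_le_one hq0 (q := q) (n := (n:ℤ))
      have := aR_pos hq0 (q := q) (n := (n:ℤ)-1)
      rw [bR]; linarith
    have h2 : aR q (-((n:ℤ)-1)) ≤ q ^ (-(2*(-((n:ℤ)-1)))) := aR_le_zpow hq0 _
    have h3 : q ^ (-(2*(-((n:ℤ)-1)))) = q^(-2:ℤ) * (q^2)^n := by
      rw [show (-(2*(-((n:ℤ)-1)))) = (-2) + 2*(n:ℤ) by ring,
        zpow_add₀ (ne_of_gt hq0), zpow_cast_eq hq0]
    linarith
  · intro n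
    have h1 : bR q (-((n:ℤ)+1)) ≤ aR q (-((n:ℤ)+1)) := by
      have := aR_pos hq0 (q := q) (n := -((n:ℤ)+1) - 1)
      rw [bR]; linarith
    have h2 : aR q (-((n:ℤ)+1)) ≤ q ^ (-(2*(-((n:ℤ)+1)))) := aR_le_zpow hq0 _
    have h3 : q ^ (-(2*(-((n:ℤ)+1)))) = q^(2:ℤ) * (q^2)^n := by
      rw [show (-(2*(-((n:ℤ)+1)))) = (2:ℤ) + 2*(n:ℤ) by ring,
        zpow_add₀ (ne_of_gt hq0), zpow_cast_eq hq0]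
    have h4 : q^(2:ℤ) ≤ q^(-2:ℤ) := by
      have e2 : q^(2:ℤ) = q^(2:ℕ) := by norm_cast
      have h5 : (0:ℝ) < q^(2:ℕ) := by positivity
      have h6 : q^(2:ℕ) ≤ 1 := by nlinarith
      rw [zpow_neg, e2]
      have h7 : (1:ℝ) ≤ (q^(2:ℕ))⁻¹ := by rw [one_le_inv_iff₀]; exact ⟨h5, h6⟩
      nlinarith
    have h7 : (0:ℝ) ≤ (q^2)^n := by positivity
    calc bR q (-((n:ℤ)+1)) ≤ q^(2:ℤ) * (q^2)^n := by linarith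
      _ ≤ q^(-2:ℤ) * (q^2)^n := by nlinarith
end Real

section Signs

lemma neg_one_zpow_sq (m : ℤ) : ((-1:ℝ))^m * (-1)^m = 1 := by
  rw [← zpow_add₀ (by norm_num : (-1:ℝ) ≠ 0), show m + m = 2*m by ring, zpow_mul]
  norm_num

lemma neg_one_zpow_inv (k : ℤ) : (((-1:ℝ))^k)⁻¹ = (-1)^k :=
  inv_eq_of_mul_eq_one_right (neg_one_zpow_sq k)

lemma neg_one_zpow_sub (m k : ℤ) : ((-1:ℝ))^(m-k) = (-1)^m * (-1)^k := by
  rw [zpow_sub₀ (by norm_num : (-1:ℝ) ≠ 0), div_eq_mul_inv, neg_one_zpow_inv]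

lemma neg_one_zpow_add (m k : ℤ) : ((-1:ℝ))^(m+k) = (-1)^m * (-1)^k := by
  rw [zpow_add₀ (by norm_num : (-1:ℝ) ≠ 0)]

lemma neg_one_zpow_abs (m : ℤ) : |((-1:ℝ))^m| = 1 := by
  rcases Int.even_or_odd m with h | h
  · rw [h.neg_one_zpow, abs_one]
  · rw [h.neg_one_zpow, abs_neg, abs_one]

end Signs

section Part2
variable {q : ℝ} (hq0 : 0 < q) (hq1 : q < 1)
include hq0 hq1

lemma bR_reflect (n : ℤ) : bR q (1 - n) = bR q n := by
  rw [bR, bR, show (1:ℤ) - n = -(n-1) from by ring, show -(n-1) - 1 = -n from by ring,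
    aR_neg hq0, aR_neg hq0]
  ring

lemma summable_signed_bR_shift (c : ℤ) :
    Summable (fun n : ℤ => (-1:ℝ)^n * bR q (n + c)) := by
  rw [← summable_abs_iff]
  have hpt : ∀ n : ℤ, |(-1:ℝ)^n * bR q (n+c)| = bR q (n+c) := by
    intro n
    rw [abs_mul, neg_one_zpow_abs, one_mul, _root_.abs_of_nonneg (bR_nonneg hq0 hq1 _)]
  have hsum : Summable (fun n : ℤ => bR q (n + c)) :=
    (summable_bR hq0 hq1).comp_injective (add_left_injective c)
  exact hsum.congr (fun n => (hpt n).symm)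

lemma tsum_signed_bR : ∑' n : ℤ, (-1:ℝ)^n * bR q n = 0 := by
  have h := (Equiv.subLeft (1:ℤ)).tsum_eq (fun n : ℤ => (-1:ℝ)^n * bR q n)
  simp only [Equiv.subLeft_apply] at h
  have hpt : ∀ n : ℤ, (-1:ℝ)^((1:ℤ)-n) * bR q (1-n) = -((-1)^n * bR q n) := by
    intro n
    rw [bR_reflect hq0 hq1, neg_one_zpow_sub]
    norm_num
  have h2 : ∑' n : ℤ, (-1:ℝ)^((1:ℤ)-n) * bR q (1-n) = ∑' n : ℤ, -((-1:ℝ)^n * bR q n) :=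
    tsum_congr hpt
  rw [h2, tsum_neg] at h
  linarith [h]

lemma tsum_signed_bR_shift (c : ℤ) : ∑' n : ℤ, (-1:ℝ)^n * bR q (n + c) = 0 := by
  have h := (Equiv.subRight c).tsum_eq (fun n : ℤ => (-1:ℝ)^n * bR q (n + c))
  simp only [Equiv.subRight_apply] at h
  have hpt : ∀ m : ℤ, (-1:ℝ)^(m-c) * bR q (m - c + c) = (-1:ℝ)^c * ((-1)^m * bR q m) := by
    intro m
    rw [show m - c + c = m by ring, neg_one_zpow_sub]
    ring
  have h2 : ∑' m : ℤ, (-1:ℝ)^(m-c) * bR q (m - c + c)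
      = ∑' m : ℤ, (-1:ℝ)^c * ((-1:ℝ)^m * bR q m) := tsum_congr hpt
  rw [h2, tsum_mul_left, tsum_signed_bR hq0 hq1, mul_zero] at h
  exact h.symm

lemma tsum_signed_diff_nat (N : ℕ) :
    ∑' n : ℤ, (-1:ℝ)^n * (aR q n - aR q (n - (N:ℤ))) = 0 := by
  have hpt : ∀ n : ℤ, (-1:ℝ)^n * (aR q n - aR q (n - (N:ℤ))) =
      ∑ j ∈ Finset.range N, (-1:ℝ)^n * bR q (n + ((j:ℤ) + 1 - (N:ℤ))) := by
    intro n
    rw [← Finset.mul_sum]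
    congr 1
    have key : ∑ j ∈ Finset.range N, bR q (n + ((j:ℤ) + 1 - (N:ℤ)))
        = aR q n - aR q (n - (N:ℤ)) := by
      have h := Finset.sum_range_sub (fun j : ℕ => aR q (n - (N:ℤ) + (j:ℤ))) N
      calc ∑ j ∈ Finset.range N, bR q (n + ((j:ℤ) + 1 - (N:ℤ)))
          = ∑ j ∈ Finset.range N,
            (aR q (n - (N:ℤ) + ((j:ℤ)+1)) - aR q (n - (N:ℤ) + (j:ℤ))) := by
            refine Finset.sum_congr rfl fun j _ => ?_
            have e1 : n + ((j:ℤ) + 1 - (N:ℤ)) = n - (N:ℤ) + ((j:ℤ)+1) := by ring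
            have e2 : n + ((j:ℤ) + 1 - (N:ℤ)) - 1 = n - (N:ℤ) + (j:ℤ) := by ring
            rw [bR, e2, e1]
        _ = aR q (n - (N:ℤ) + ((N:ℕ):ℤ)) - aR q (n - (N:ℤ) + ((0:ℕ):ℤ)) := by
            rw [← h]
            refine Finset.sum_congr rfl fun j _ => ?_
            push_cast
            ring_nf
        _ = aR q n - aR q (n - (N:ℤ)) := by
            norm_num
    rw [key]
  rw [tsum_congr hpt, Summable.tsum_finsetSum (fun j _ => summable_signed_bR_shift hq0 hq1 _)]
  simp [tsum_signed_bR_shift hq0 hq1]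

lemma tsum_signed_diff_int (N : ℤ) (hN : N ≠ 0) :
    ∑' n : ℤ, (-1:ℝ)^n * (aR q n - aR q (n - N)) = 0 := by
  rcases lt_or_gt_of_ne hN with hneg | hpos
  · -- N < 0 : reindex n ↦ n + N
    have h := (Equiv.subRight (-N)).tsum_eq
      (fun n : ℤ => (-1:ℝ)^n * (aR q n - aR q (n - N)))
    simp only [Equiv.subRight_apply] at h
    have hpt : ∀ m : ℤ, (-1:ℝ)^(m - -N) * (aR q (m - -N) - aR q (m - -N - N))
        = (-(-1:ℝ)^N) * ((-1:ℝ)^m * (aR q m - aR q (m - (-N)))) := by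
      intro m
      have e2 : m - -N - N = m := by ring
      have e1 : m - -N = m + N := by ring
      rw [e2, e1, neg_one_zpow_add]
      ring
    rw [tsum_congr hpt, tsum_mul_left] at h
    have hNpos : (0:ℤ) < -N := by omega
    obtain ⟨M, hM⟩ : ∃ M : ℕ, (-N) = (M:ℤ) := ⟨(-N).toNat, (Int.toNat_of_nonneg hNpos.le).symm⟩
    rw [hM] at h
    rw [← h, tsum_signed_diff_nat hq0 hq1 M, mul_zero]
  · obtain ⟨M, hM⟩ : ∃ M : ℕ, N = (M:ℤ) := ⟨N.toNat, (Int.toNat_of_nonneg hpos.le).symm⟩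
    rw [hM]
    exact tsum_signed_diff_nat hq0 hq1 M

lemma q_zpow_ne_one (N : ℤ) (hN : N ≠ 0) : q ^ (2*N) ≠ 1 := by
  rcases lt_or_gt_of_ne hN with hneg | hpos
  · exact ne_of_gt (one_lt_zpow_of_neg₀ hq0 hq1 (by omega))
  · exact ne_of_lt (zpow_lt_one₀ hq0 hq1 (by omega))

lemma partial_fraction (N n : ℤ) (hN : N ≠ 0) :
    aR q n * aR q (N - n) = (aR q n - aR q (n - N)) / (1 - q^(2*N)) := by
  have hA := zpow_pos hq0 (2*n)
  have hB := zpow_pos hq0 (2*N)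
  have h1 := den_pos hq0 (q := q) (n := n)
  have h2 := den_pos hq0 (q := q) (n := N - n)
  have h3 := den_pos hq0 (q := q) (n := n - N)
  have h4 : 1 - q^(2*N) ≠ 0 := sub_ne_zero.2 (Ne.symm (q_zpow_ne_one hq0 hq1 N hN))
  have e1 : q^(2*(N-n)) = q^(2*N) * (q^(2*n))⁻¹ := by
    rw [← zpow_neg, ← zpow_add₀ (ne_of_gt hq0)]
    ring_nf
  have e2 : q^(2*(n-N)) = q^(2*n) * (q^(2*N))⁻¹ := by
    rw [← zpow_neg, ← zpow_add₀ (ne_of_gt hq0)]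
    ring_nf
  simp only [aR]
  rw [e1, e2]
  have k1 : 1 + q^(2*n) ≠ 0 := ne_of_gt h1
  have k2 : 1 + q^(2*N) * (q^(2*n))⁻¹ ≠ 0 := ne_of_gt (by positivity)
  have k3 : 1 + q^(2*n) * (q^(2*N))⁻¹ ≠ 0 := ne_of_gt (by positivity)
  field_simp
  ring

end Part2

noncomputable def fC (q : ℝ) (x : ℂ) (n : ℤ) : ℂ := x ^ n / (1 + (q:ℂ) ^ (2*n))

noncomputable def FF (q : ℝ) (x : ℂ) : ℂ := ∑' n : ℤ, fC q x n

noncomputable def PP (q : ℝ) (N : ℤ) : ℝ := ∑' n : ℤ, (-1:ℝ)^n * (aR q n * aR q (N - n))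

section SignsC

lemma neg_one_zpow_sqC (m : ℤ) : ((-1:ℂ))^m * (-1)^m = 1 := by
  rw [← zpow_add₀ (by norm_num : (-1:ℂ) ≠ 0), show m + m = 2*m by ring, zpow_mul]
  norm_num

lemma neg_one_zpow_invC (k : ℤ) : (((-1:ℂ))^k)⁻¹ = (-1)^k :=
  inv_eq_of_mul_eq_one_right (neg_one_zpow_sqC k)

lemma neg_one_zpow_subC (m k : ℤ) : ((-1:ℂ))^(m-k) = (-1)^m * (-1)^k := by
  rw [zpow_sub₀ (by norm_num : (-1:ℂ) ≠ 0), div_eq_mul_inv, neg_one_zpow_invC]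

end SignsC

section Part3
variable {q : ℝ} (hq0 : 0 < q) (hq1 : q < 1)

lemma denC (n : ℤ) : (1 : ℂ) + (q:ℂ)^(2*n) = ((1 + q^(2*n) : ℝ) : ℂ) := by
  rw [Complex.ofReal_add, Complex.ofReal_one, Complex.ofReal_zpow]

include hq0

lemma fC_eq (x : ℂ) (n : ℤ) : fC q x n = x^n * ((aR q n : ℝ) : ℂ) := by
  rw [fC, denC, aR]
  push_cast [Complex.ofReal_zpow]
  rw [mul_one_div]

lemma norm_fC (x : ℂ) (n : ℤ) : ‖fC q x n‖ = ‖x‖^n * aR q n := by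
  rw [fC_eq hq0, norm_mul, Complex.norm_real, Real.norm_eq_abs,
    _root_.abs_of_nonneg (aR_pos hq0 n).le]
  congr 1
  rw [norm_zpow]

include hq1

lemma summable_abs_pow {r : ℝ} (hr1 : q^2 < r) (hr2 : r < 1) :
    Summable (fun n : ℤ => r^n * aR q n) := by
  have hq2 : (0:ℝ) < q^2 := by positivity
  have hr0 : 0 < r := lt_trans hq2 hr1
  have hs1 : 0 < q^2 / r := by positivity
  have hs2 : q^2 / r < 1 := (div_lt_one hr0).2 hr1
  apply summable_int_of_bounds hq0 (C := 1) (r := r) (s := q^2/r)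
    (fun n => mul_nonneg (zpow_pos hr0 _).le (aR_pos hq0 _).le) hr0.le hr2 hs1.le hs2
  · intro n
    rw [one_mul, zpow_natCast]
    calc r^(n:ℕ) * aR q (n:ℤ) ≤ r^(n:ℕ) * 1 :=
          mul_le_mul_of_nonneg_left (aR_le_one hq0 _) (pow_nonneg hr0.le n)
      _ = r^(n:ℕ) := mul_one _
  · intro n
    rw [one_mul]
    have h1 : aR q (-((n:ℤ)+1)) ≤ q ^ (2*((n:ℤ)+1)) := by
      have := aR_le_zpow hq0 (q := q) (n := -((n:ℤ)+1))
      rwa [show -(2 * -((n:ℤ)+1)) = 2*((n:ℤ)+1) by ring] at this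
    have h2 : r ^ (-((n:ℤ)+1)) = (r^(n+1:ℕ))⁻¹ := by
      rw [← zpow_natCast r (n+1), ← zpow_neg]
      norm_num
    have h3 : q ^ (2*((n:ℤ)+1)) = (q^2)^(n+1:ℕ) := by
      rw [show 2*((n:ℤ)+1) = 2*(((n+1:ℕ)):ℤ) by push_cast; ring, zpow_cast_eq hq0]
    have h4 : (0:ℝ) < r^(n+1:ℕ) := by positivity
    have h5 : r ^ (-((n:ℤ)+1)) * aR q (-((n:ℤ)+1)) ≤ (q^2/r)^(n+1:ℕ) := by
      rw [div_pow, h2, inv_mul_le_iff₀ h4,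
        show r^(n+1:ℕ) * ((q^2)^(n+1:ℕ)/r^(n+1:ℕ)) = (q^2)^(n+1:ℕ) from by field_simp, ← h3]
      exact h1
    calc r ^ (-((n:ℤ)+1)) * aR q (-((n:ℤ)+1)) ≤ (q^2/r)^(n+1:ℕ) := h5
      _ ≤ (q^2/r)^(n:ℕ) := by
          apply pow_le_pow_of_le_one hs1.le hs2.le
          omega

lemma summable_norm_fC {x : ℂ} (hx1 : q^2 < ‖x‖) (hx2 : ‖x‖ < 1) :
    Summable (fun n : ℤ => ‖fC q x n‖) := by
  have := summable_abs_pow hq0 hq1 hx1 hx2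
  exact this.congr (fun n => (norm_fC hq0 x n).symm)

end Part3

section Part4
variable {q : ℝ} (hq0 : 0 < q) (hq1 : q < 1)
include hq0 hq1

lemma PP_eq_zero (N : ℤ) (hN : N ≠ 0) : PP q N = 0 := by
  have hpt : ∀ n : ℤ, (-1:ℝ)^n * (aR q n * aR q (N - n))
      = ((-1:ℝ)^n * (aR q n - aR q (n - N))) * (1/(1 - q^(2*N))) := by
    intro n
    rw [partial_fraction hq0 hq1 N n hN]
    ring
  rw [PP, tsum_congr hpt, tsum_mul_right, tsum_signed_diff_int hq0 hq1 N hN, zero_mul]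

lemma inner_eq {x : ℂ} (hx0 : x ≠ 0) (N : ℤ) :
    ∑' n : ℤ, fC q x n * fC q (-x) (N - n)
      = ((-1:ℂ)^N * x^N) * ((PP q N : ℝ) : ℂ) := by
  have hpt : ∀ n : ℤ, fC q x n * fC q (-x) (N - n)
      = ((-1:ℂ)^N * x^N) * ((((-1:ℝ)^n * (aR q n * aR q (N - n)) : ℝ)) : ℂ) := by
    intro n
    rw [fC_eq hq0, fC_eq hq0]
    have h1 : (-x)^(N-n) = (-1:ℂ)^(N-n) * x^(N-n) := by
      rw [show -x = (-1:ℂ) * x from by ring, mul_zpow]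
    have h2 : (-1:ℂ)^(N-n) = (-1:ℂ)^N * (-1:ℂ)^n := neg_one_zpow_subC N n
    have h3 : x^n * x^(N-n) = x^N := by
      rw [← zpow_add₀ hx0]
      congr 1
      ring
    rw [h1, h2]
    push_cast [Complex.ofReal_zpow]
    rw [show x ^ n * (aR q n : ℂ) * ((-1:ℂ)^N * (-1:ℂ)^n * x^(N-n) * (aR q (N-n) : ℂ))
        = ((-1:ℂ)^N * (-1:ℂ)^n) * ((x^n * x^(N-n)) * ((aR q n : ℂ) * (aR q (N-n) : ℂ)))
      from by ring, h3]
    ring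
  rw [tsum_congr hpt, tsum_mul_left, ← Complex.ofReal_tsum]
  rfl

lemma FF_mul {x : ℂ} (hx1 : q^2 < ‖x‖) (hx2 : ‖x‖ < 1) :
    FF q x * FF q (-x) = ((PP q 0 : ℝ) : ℂ) := by
  have hq2 : (0:ℝ) < q^2 := by positivity
  have hx0 : x ≠ 0 := by
    intro h
    rw [h, norm_zero] at hx1
    linarith
  have hax : ‖-x‖ = ‖x‖ := by rw [norm_neg]
  have hf := summable_norm_fC hq0 hq1 hx1 hx2
  have hg := summable_norm_fC hq0 hq1 (x := -x) (by rwa [hax]) (by rwa [hax])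
  rw [FF, FF, tsum_mul_tsum_of_summable_norm hf hg]
  have hsum2 : Summable (fun p : ℤ×ℤ => fC q x p.1 * fC q (-x) p.2) :=
    summable_mul_of_summable_norm hf hg
  let e : ℤ×ℤ ≃ ℤ×ℤ :=
    ⟨fun p => (p.2, p.1 - p.2), fun p => (p.1 + p.2, p.1),
      fun p => by simp, fun p => by simp⟩
  have he := e.tsum_eq (fun p : ℤ×ℤ => fC q x p.1 * fC q (-x) p.2)
  have hsum3 : Summable (fun p : ℤ×ℤ => fC q x p.2 * fC q (-x) (p.1 - p.2)) :=
    (e.summable_iff (f := fun p : ℤ×ℤ => fC q x p.1 * fC q (-x) p.2)).2 hsum2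
  rw [← he]
  have step : ∑' (p : ℤ×ℤ), fC q x ((e p).1) * fC q (-x) ((e p).2)
      = ∑' N : ℤ, ∑' n : ℤ, fC q x n * fC q (-x) (N - n) := by
    rw [show (fun p : ℤ×ℤ => fC q x ((e p).1) * fC q (-x) ((e p).2))
        = fun p : ℤ×ℤ => fC q x p.2 * fC q (-x) (p.1 - p.2) from rfl]
    exact Summable.tsum_prod hsum3
  rw [step, tsum_congr (fun N => inner_eq hq0 hq1 hx0 N)]
  rw [tsum_eq_single 0 (fun N hN => by
    rw [PP_eq_zero hq0 hq1 N hN, Complex.ofReal_zero, mul_zero])]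
  simp

end Part4

section Part5
variable {q : ℝ} (hq0 : 0 < q) (hq1 : q < 1)
include hq0

lemma zpow_le_zpow_base {a b : ℝ} (h0 : 0 ≤ a) (hab : a ≤ b) {n : ℤ} (hn : 0 ≤ n) :
    a^n ≤ b^n := by
  lift n to ℕ using hn
  rw [zpow_natCast, zpow_natCast]
  exact pow_le_pow_left₀ h0 hab n

lemma FF_real (r : ℝ) : FF q (r:ℂ) = ((∑' n : ℤ, r^n * aR q n : ℝ) : ℂ) := by
  rw [FF, Complex.ofReal_tsum]
  refine tsum_congr fun n => ?_
  rw [fC_eq hq0]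
  push_cast [Complex.ofReal_zpow]
  ring

lemma FF_conj (x : ℂ) : FF q ((starRingEnd ℂ) x) = (starRingEnd ℂ) (FF q x) := by
  rw [FF, FF]
  calc ∑' n : ℤ, fC q ((starRingEnd ℂ) x) n = ∑' n : ℤ, star (fC q x n) := by
        refine tsum_congr fun n => ?_
        simp only [fC, denC, starRingEnd_apply, star_div₀, star_zpow₀]
        congr 1
        rw [← starRingEnd_apply, Complex.conj_ofReal]
    _ = star (∑' n : ℤ, fC q x n) := tsum_star.symm

include hq1

lemma FR_pos {r : ℝ} (hr1 : q^2 < r) (hr2 : r < 1) : 0 < ∑' n : ℤ, r^n * aR q n := by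
  have hr0 : 0 < r := lt_trans (by positivity) hr1
  refine Summable.tsum_pos (summable_abs_pow hq0 hq1 hr1 hr2)
    (fun n => mul_nonneg (zpow_pos hr0 n).le (aR_pos hq0 n).le) 0 ?_
  rw [zpow_zero, one_mul]
  exact aR_pos hq0 0

lemma PP0_eq_normSq : PP q 0 = Complex.normSq (FF q ((q:ℂ)*Complex.I)) := by
  have habs : ‖(q:ℂ)*Complex.I‖ = q := by
    rw [norm_mul, Complex.norm_I, Complex.norm_real, mul_one, Real.norm_eq_abs, abs_of_pos hq0]
  have h1 : q^2 < ‖(q:ℂ)*Complex.I‖ := by rw [habs]; nlinarith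
  have h2 : ‖(q:ℂ)*Complex.I‖ < 1 := by rw [habs]; exact hq1
  have key := FF_mul hq0 hq1 h1 h2
  have hconj : -((q:ℂ)*Complex.I) = (starRingEnd ℂ) ((q:ℂ)*Complex.I) := by
    rw [map_mul, Complex.conj_ofReal, Complex.conj_I, mul_neg]
  rw [hconj, FF_conj hq0, Complex.mul_conj] at key
  exact_mod_cast key.symm

lemma annulus2_isOpen : IsOpen {x : ℂ | q^2 < ‖x‖ ∧ ‖x‖ < 1} := by
  have : {x : ℂ | q^2 < ‖x‖ ∧ ‖x‖ < 1}
      = (fun x : ℂ => ‖x‖) ⁻¹' (Set.Ioo (q^2) 1) := rfl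
  rw [this]
  exact IsOpen.preimage continuous_norm isOpen_Ioo

lemma FF_differentiableOn : DifferentiableOn ℂ (FF q)
    {x : ℂ | q^2 < ‖x‖ ∧ ‖x‖ < 1} := by
  intro x₀ hx₀
  obtain ⟨h1, h2⟩ := hx₀
  have hq2 : (0:ℝ) < q^2 := by positivity
  set r₁ := (q^2 + ‖x₀‖)/2 with hr₁def
  set r₂ := (‖x₀‖ + 1)/2 with hr₂def
  have hr₁a : q^2 < r₁ := by rw [hr₁def]; linarith
  have hr₁b : r₁ < ‖x₀‖ := by rw [hr₁def]; linarith
  have hr₂a : ‖x₀‖ < r₂ := by rw [hr₂def]; linarith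
  have hr₂b : r₂ < 1 := by rw [hr₂def]; linarith
  have hr₁pos : 0 < r₁ := lt_trans hq2 hr₁a
  have hr₂pos : 0 < r₂ := lt_trans (lt_trans hq2 (lt_trans hr₁a hr₁b)) hr₂a
  set s := q^2 / r₁ with hsdef
  have hs0 : 0 < s := by positivity
  have hs1 : s < 1 := (div_lt_one hr₁pos).2 hr₁a
  set U := {x : ℂ | r₁ < ‖x‖ ∧ ‖x‖ < r₂} with hUdef
  have hUopen : IsOpen U := by
    have : U = (fun x : ℂ => ‖x‖) ⁻¹' (Set.Ioo r₁ r₂) := rfl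
    rw [this]
    exact IsOpen.preimage continuous_norm isOpen_Ioo
  have hx₀U : x₀ ∈ U := ⟨hr₁b, hr₂a⟩
  have hu : Summable (fun n : ℤ => if 0 ≤ n then r₂^n else s^(-n)) := by
    apply Summable.of_nat_of_neg_add_one
    · have heq : (fun n : ℕ => if 0 ≤ (n:ℤ) then r₂^(n:ℤ) else s^(-(n:ℤ)))
          = fun n : ℕ => r₂^(n:ℕ) := by
        funext n
        rw [if_pos (Int.natCast_nonneg n), zpow_natCast]
      rw [heq]
      exact summable_geometric_of_lt_one hr₂pos.le hr₂b
    · have heq : (fun n : ℕ => if 0 ≤ (-((n:ℤ)+1)) then r₂^(-((n:ℤ)+1)) else s^(-(-((n:ℤ)+1))))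
          = fun n : ℕ => s * s^(n:ℕ) := by
        funext n
        have hneg : ¬ (0 ≤ -((n:ℤ)+1)) := by omega
        rw [if_neg hneg, neg_neg, show ((n:ℤ)+1) = ((n+1:ℕ):ℤ) from by push_cast; ring,
          zpow_natCast, pow_succ]
        ring
      rw [heq]
      exact (summable_geometric_of_lt_one hs0.le hs1).mul_left s
  have hbound : ∀ (n : ℤ) (x : ℂ), x ∈ U →
      ‖fC q x n‖ ≤ (if 0 ≤ n then r₂^n else s^(-n)) := by
    intro n x hx
    obtain ⟨hxa, hxb⟩ := hx
    have hxpos : 0 < ‖x‖ := lt_trans hr₁pos hxa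
    rw [norm_fC hq0]
    rcases le_or_gt 0 n with hn | hn
    · rw [if_pos hn]
      calc ‖x‖ ^ n * aR q n ≤ ‖x‖ ^ n * 1 :=
            mul_le_mul_of_nonneg_left (aR_le_one hq0 _) (zpow_pos hxpos _).le
        _ = ‖x‖ ^ n := mul_one _
        _ ≤ r₂ ^ n := zpow_le_zpow_base hq0 hxpos.le hxb.le hn
    · rw [if_neg (by omega : ¬ (0 ≤ n))]
      have key1 : aR q n ≤ (q^2)^(-n) := by
        have := aR_le_zpow hq0 (q := q) (n := n)
        rwa [show -(2*n) = 2*(-n) from by ring, zpow_mul,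
          show (q:ℝ)^(2:ℤ) = q^2 from by norm_cast] at this
      have key2 : ‖x‖ ^ n * aR q n ≤ (q^2 / ‖x‖)^(-n) := by
        rw [div_zpow]
        have : ‖x‖ ^ n = (‖x‖ ^ (-n))⁻¹ := by
          rw [← zpow_neg, neg_neg]
        rw [this, inv_mul_le_iff₀ (zpow_pos hxpos _),
          show ‖x‖ ^ (-n) * ((q^2)^(-n) / ‖x‖ ^ (-n)) = (q^2)^(-n)
            from by field_simp]
        exact key1
      calc ‖x‖ ^ n * aR q n ≤ (q^2 / ‖x‖)^(-n) := key2
        _ ≤ s^(-n) := by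
            apply zpow_le_zpow_base hq0 (by positivity) ?_ (by omega)
            rw [hsdef]
            exact div_le_div_of_nonneg_left hq2.le hr₁pos hxa.le
  have hdiffpartial : ∀ t : Finset ℤ, DifferentiableOn ℂ (fun x => ∑ n ∈ t, fC q x n) U := by
    intro t
    apply DifferentiableOn.fun_sum
    intro n _
    intro x hx
    have hx0 : x ≠ 0 := by
      intro h
      have hx1' : r₁ < ‖x‖ := hx.1
      rw [h, norm_zero] at hx1'
      exact absurd hx1' (not_lt.2 hr₁pos.le)
    have : DifferentiableAt ℂ (fun x : ℂ => fC q x n) x := by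
      have hdz : DifferentiableAt ℂ (fun x : ℂ => x ^ n) x :=
        differentiableAt_zpow.2 (Or.inl hx0)
      simpa [fC, div_eq_mul_inv] using hdz.mul_const ((1 + (q:ℂ)^(2*n))⁻¹)
    exact this.differentiableWithinAt
  have hTLU : TendstoLocallyUniformlyOn (fun (t : Finset ℤ) x => ∑ n ∈ t, fC q x n)
      (fun x => ∑' n : ℤ, fC q x n) Filter.atTop U :=
    (tendstoUniformlyOn_tsum hu hbound).tendstoLocallyUniformlyOn
  have hdiff : DifferentiableOn ℂ (fun x => ∑' n : ℤ, fC q x n) U :=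
    hTLU.differentiableOn (Filter.Eventually.of_forall hdiffpartial) hUopen
  exact ((hdiff.differentiableAt (hUopen.mem_nhds hx₀U)).differentiableWithinAt)

lemma annulus2_preconnected :
    IsPreconnected {x : ℂ | q^2 < ‖x‖ ∧ ‖x‖ < 1} := by
  have h1 : Convex ℝ ((Set.Ioo (q^2) (1:ℝ)) ×ˢ (Set.univ : Set ℝ)) :=
    (convex_Ioo _ _).prod convex_univ
  have h3 : Continuous (fun p : ℝ × ℝ => (p.1 : ℂ) * Complex.exp ((p.2 : ℂ) * Complex.I)) := by
    continuity
  have himg := h1.isPreconnected.image _ h3.continuousOn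
  have hset : (fun p : ℝ × ℝ => (p.1 : ℂ) * Complex.exp ((p.2 : ℂ) * Complex.I)) ''
      ((Set.Ioo (q^2) (1:ℝ)) ×ˢ (Set.univ : Set ℝ))
      = {x : ℂ | q^2 < ‖x‖ ∧ ‖x‖ < 1} := by
    ext x
    constructor
    · rintro ⟨⟨r, θ⟩, ⟨hr, -⟩, rfl⟩
      have hr0 : 0 < r := lt_trans (by positivity) hr.1
      have : ‖(r:ℂ) * Complex.exp ((θ:ℂ) * Complex.I)‖ = r := by
        rw [norm_mul, Complex.norm_exp_ofReal_mul_I, mul_one, Complex.norm_real, Real.norm_eq_abs, abs_of_pos hr0]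
      exact ⟨by rw [this]; exact hr.1, by rw [this]; exact hr.2⟩
    · rintro ⟨hx1, hx2⟩
      refine ⟨(‖x‖, x.arg), ⟨⟨hx1, hx2⟩, trivial⟩, ?_⟩
      exact Complex.norm_mul_exp_arg_mul_I x
  rwa [hset] at himg

lemma PP0_pos : 0 < PP q 0 := by
  have hq2 : (0:ℝ) < q^2 := by positivity
  have hq2q : q^2 < q := by nlinarith
  have hnn : 0 ≤ PP q 0 := by
    rw [PP0_eq_normSq hq0 hq1]
    exact Complex.normSq_nonneg _
  rcases hnn.lt_or_eq with h | h
  · exact h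
  exfalso
  have hc : PP q 0 = 0 := h.symm
  have hzero : ∀ r : ℝ, q^2 < r → r < 1 → FF q (-(r:ℂ)) = 0 := by
    intro r h1 h2
    have hr0 : 0 < r := lt_trans hq2 h1
    have habs : ‖(r:ℂ)‖ = r := by
      rw [Complex.norm_real, Real.norm_eq_abs, abs_of_pos hr0]
    have hmul := FF_mul hq0 hq1 (x := (r:ℂ)) (by rwa [habs]) (by rwa [habs])
    rw [hc, Complex.ofReal_zero] at hmul
    rcases mul_eq_zero.1 hmul with hzero | hzero
    · exfalso
      rw [FF_real hq0] at hzero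
      have hz : (∑' n : ℤ, r^n * aR q n) = 0 := by exact_mod_cast hzero
      have := FR_pos hq0 hq1 h1 h2
      linarith
    · exact hzero
  set A := {x : ℂ | q^2 < ‖x‖ ∧ ‖x‖ < 1} with hAdef
  have hopen : IsOpen A := annulus2_isOpen hq0 hq1
  have han : AnalyticOnNhd ℂ (FF q) A := (FF_differentiableOn hq0 hq1).analyticOnNhd hopen
  have hqA : (-(q:ℂ)) ∈ A := by
    constructor <;> rw [norm_neg, Complex.norm_real, Real.norm_eq_abs, abs_of_pos hq0]
    · exact hq2q
    · exact hq1
  have hfreq : ∃ᶠ z in nhdsWithin (-(q:ℂ)) {(-(q:ℂ))}ᶜ, FF q z = 0 := by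
    rw [Filter.frequently_iff]
    intro V hV
    rw [Metric.mem_nhdsWithin_iff] at hV
    obtain ⟨ε, hε, hball⟩ := hV
    set δ := min (ε/2) ((1-q)/2) with hδdef
    have hδ0 : 0 < δ := lt_min (by linarith) (by linarith)
    refine ⟨-(((q + δ : ℝ)) : ℂ), hball ⟨?_, ?_⟩, ?_⟩
    · rw [Metric.mem_ball, dist_eq_norm]
      have : -(((q + δ : ℝ)) : ℂ) - (-(q:ℂ)) = -((δ:ℝ):ℂ) := by
        push_cast
        ring
      rw [this, norm_neg, Complex.norm_real, Real.norm_eq_abs, abs_of_pos hδ0]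
      calc δ ≤ ε/2 := min_le_left _ _
        _ < ε := by linarith
    · simp only [Set.mem_compl_iff, Set.mem_singleton_iff]
      intro hEq
      rw [neg_inj] at hEq
      have : (q + δ : ℝ) = q := by exact_mod_cast hEq
      linarith
    · apply hzero
      · linarith
      · have : δ ≤ (1-q)/2 := min_le_right _ _
        linarith
  have heq := han.eqOn_zero_of_preconnected_of_frequently_eq_zero
    (annulus2_preconnected hq0 hq1) hqA hfreq
  have hq_inA : ((q:ℝ):ℂ) ∈ A := by
    constructor <;> rw [Complex.norm_real, Real.norm_eq_abs, abs_of_pos hq0]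
    · exact hq2q
    · exact hq1
  have hFq : FF q ((q:ℝ):ℂ) = 0 := heq hq_inA
  rw [FF_real hq0] at hFq
  have hpos := FR_pos hq0 hq1 hq2q hq1
  have hz : (∑' n : ℤ, q^n * aR q n) = 0 := by exact_mod_cast hFq
  linarith

end Part5

/-- The annulus `{z : ℂ | q < |z| < 1}`. -/
def annulus (q : ℝ) : Set ℂ := {z : ℂ | q < ‖z‖ ∧ ‖z‖ < 1}

/-- The kernel `k(z,w) = ∑_{n ∈ ℤ} (z ⬝ conj w)^n / (1 + q^{2n})`. -/
noncomputable def annKer (q : ℝ) (z w : ℂ) : ℂ :=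
  ∑' n : ℤ, (z * (starRingEnd ℂ) w) ^ n / (1 + (q : ℂ) ^ (2 * n))

/-- There is a constant `C′ > 0`, independent of `z` and `w`, with
`C′ ⬝ k(z,w) ⬝ k(z,−w) = 1` for all `z, w` in the annulus. -/
theorem stmt1 (q : ℝ) (hq : q ∈ Set.Ioo (0 : ℝ) 1) :
    ∃ C' : ℝ, 0 < C' ∧ ∀ z w : ℂ, z ∈ annulus q → w ∈ annulus q →
      (C' : ℂ) * annKer q z w * annKer q z (-w) = 1 := by
  obtain ⟨hq0, hq1⟩ := hq
  refine ⟨(PP q 0)⁻¹, inv_pos.2 (PP0_pos hq0 hq1), ?_⟩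
  intro z w hz hw
  obtain ⟨hz1, hz2⟩ := hz
  obtain ⟨hw1, hw2⟩ := hw
  have habs : ‖z * (starRingEnd ℂ) w‖ = ‖z‖ * ‖w‖ := by
    rw [norm_mul, Complex.norm_conj]
  have hx1 : q^2 < ‖z * (starRingEnd ℂ) w‖ := by
    rw [habs, sq]
    exact mul_lt_mul'' hz1 hw1 hq0.le hq0.le
  have hx2 : ‖z * (starRingEnd ℂ) w‖ < 1 := by
    rw [habs]
    nlinarith [norm_nonneg z, norm_nonneg w]
  have hker1 : annKer q z w = FF q (z * (starRingEnd ℂ) w) := rfl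
  have hker2 : annKer q z (-w) = FF q (-(z * (starRingEnd ℂ) w)) := by
    rw [annKer, FF]
    refine tsum_congr fun n => ?_
    rw [show z * (starRingEnd ℂ) (-w) = -(z * (starRingEnd ℂ) w) from by rw [map_neg, mul_neg]]
    rfl
  rw [hker1, hker2, mul_assoc, FF_mul hq0 hq1 hx1 hx2, ← Complex.ofReal_mul,
    inv_mul_cancel₀ (ne_of_gt (PP0_pos hq0 hq1)), Complex.ofReal_one]
end

section
/- If t > 0 and t ≠ q^{2m} for every integer m, then there exist z, w ∈ 𝔸 such that k(z,w;t) = 0. -/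
/-- The kernel `k(z,w;t) = ∑_{n ∈ ℤ} (z ⬝ conj w)^n / (1 + t ⬝ q^{2n})`. -/
noncomputable def annKerT (q t : ℝ) (z w : ℂ) : ℂ :=
  ∑' n : ℤ, (z * (starRingEnd ℂ) w) ^ n / (1 + (t : ℂ) * (q : ℂ) ^ (2 * n))

/-- Key vanishing lemma: for `0 < Q < s < 1`, the bilateral sum
`∑_{j ∈ ℤ} (-s)^j / (s + Q^j)` vanishes. -/

lemma keyS (Q s : ℝ) (hQ0 : 0 < Q) (hQ1 : Q < 1) (hsQ : Q < s) (hs1 : s < 1) :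
    ∑' j : ℤ, (-s) ^ j / (s + Q ^ j) = 0 := by
  have hs0 : 0 < s := hQ0.trans hsQ
  set a : ℤ → ℝ := fun j => (-s) ^ j / (s + Q ^ j) with ha
  set d : ℕ → ℕ → ℝ := fun n k => (-1) ^ (n + k + 1) * (s ^ n * (Q ^ (n + 1) / s) ^ k) with hd
  have hQs : ∀ n : ℕ, Q ^ (n+1) / s < 1 := by
    intro n
    rw [div_lt_one hs0]
    calc Q ^ (n+1) ≤ Q ^ 1 := pow_le_pow_of_le_one hQ0.le hQ1.le (by omega)
    _ = Q := pow_one Q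
    _ < s := hsQ
  have hQsn : ∀ n : ℕ, 0 ≤ Q ^ (n+1) / s := fun n => by positivity
  -- nat-pow forms of a
  have haP : ∀ n : ℕ, a ((n : ℤ) + 1) = (-s) ^ (n+1) / (s + Q ^ (n+1)) := by
    intro n
    have h2 : ((n : ℤ) + 1) = ((n + 1 : ℕ) : ℤ) := by push_cast; ring
    rw [ha]; simp only [h2, zpow_natCast]
  have haN : ∀ k : ℕ, a (-(k : ℤ)) = ((-s) ^ k)⁻¹ / (s + (Q ^ k)⁻¹) := by
    intro k
    rw [ha]; simp only [zpow_neg, zpow_natCast]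
  -- L1 : row sums
  have L1 : ∀ n : ℕ, HasSum (fun k => d n k) (a ((n : ℤ) + 1)) := by
    intro n
    have h := (hasSum_geometric_of_norm_lt_one (ξ := -(Q ^ (n+1) / s))
      (by rw [norm_neg, Real.norm_of_nonneg (hQsn n)]; exact hQs n)).mul_left ((-1) ^ (n+1) * s ^ n)
    convert h using 2 with k
    · rfl
    · simp only [hd]
      rw [neg_pow (Q ^ (n+1) / s) k]
      ring
    · rw [haP n, neg_pow s (n+1)]
      have h1 : (1 : ℝ) - -(Q ^ (n+1) / s) = (s + Q ^ (n+1)) / s := by field_simp; ring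
      rw [h1, inv_div]
      field_simp
      ring
  -- L2 : column sums
  have L2 : ∀ k : ℕ, HasSum (fun n => d n k) (-(a (-(k : ℤ)))) := by
    intro k
    have hr : ‖-(s * Q ^ k)‖ < 1 := by
      rw [norm_neg, Real.norm_of_nonneg (by positivity)]
      calc s * Q ^ k ≤ s * 1 := by
            apply mul_le_mul_of_nonneg_left _ hs0.le
            exact pow_le_one₀ hQ0.le hQ1.le
      _ < 1 := by rw [mul_one]; exact hs1
    have h := (hasSum_geometric_of_norm_lt_one (ξ := -(s * Q ^ k)) hr).mul_left
      ((-1) ^ (k+1) * (Q ^ k / s ^ k))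
    have hfun : (fun n => d n k) = fun n =>
        (-1) ^ (k+1) * (Q ^ k / s ^ k) * (-(s * Q ^ k)) ^ n := by
      funext n
      simp only [hd]
      rw [neg_pow (s * Q ^ k) n, div_pow, mul_pow, ← pow_mul]
      field_simp
      ring
    rw [hfun]
    have hval : -(a (-(k:ℤ))) = (-1) ^ (k+1) * (Q ^ k / s ^ k) * (1 - -(s * Q ^ k))⁻¹ := by
      rw [haN k, neg_pow s k]
      have h1 : (1 : ℝ) - -(s * Q ^ k) = s * Q ^ k + 1 := by ring
      rw [h1]
      have hQk : (0:ℝ) < Q ^ k := by positivity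
      have hden : (0:ℝ) < s + (Q ^ k)⁻¹ := by positivity
      have hden2 : (0:ℝ) < s * Q ^ k + 1 := by positivity
      field_simp
      have hm : ((-1:ℝ))^(k+1) * (-1)^k = -1 := by
        rw [← pow_add]
        exact Odd.neg_one_pow ⟨k, by ring⟩
      linear_combination (-(Q^k * s^k * (s*Q^k+1))) * hm
        + (1 - Q^k*s^k - Q^(k*2)*s*s^k) * (Even.neg_one_pow ⟨k, by ring⟩ : ((-1:ℝ))^(k*2) = 1)
    rw [hval]
    exact h
  -- summability of the double family
  have hu : Summable fun p : ℕ × ℕ => s ^ p.1 * (Q/s) ^ p.2 := by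
    apply Summable.mul_of_nonneg (summable_geometric_of_lt_one hs0.le hs1)
      (summable_geometric_of_lt_one (by positivity) ((div_lt_one hs0).mpr hsQ))
    · intro n; positivity
    · intro n; positivity
  have hdsum : Summable (Function.uncurry d) := by
    apply Summable.of_norm_bounded hu
    rintro ⟨n, k⟩
    simp only [Function.uncurry, hd]
    rw [Real.norm_eq_abs, abs_mul, abs_pow, abs_neg, abs_one, one_pow, one_mul, abs_mul,
      abs_pow, abs_pow, abs_of_nonneg hs0.le, abs_of_nonneg (by positivity : (0:ℝ) ≤ Q^(n+1)/s)]
    apply mul_le_mul_of_nonneg_left _ (by positivity)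
    apply pow_le_pow_left₀ (by positivity)
    apply (div_le_div_iff_of_pos_right hs0).mpr
    calc Q ^ (n+1) ≤ Q ^ 1 := pow_le_pow_of_le_one hQ0.le hQ1.le (by omega)
    _ = Q := pow_one Q
  -- summability of the two tails
  have hA : Summable fun n : ℕ => a ((n : ℤ) + 1) := by
    apply Summable.of_norm_bounded (summable_geometric_of_lt_one hs0.le hs1)
    intro n
    rw [haP n, Real.norm_eq_abs, abs_div, abs_pow, abs_neg, abs_of_nonneg hs0.le,
      abs_of_nonneg (by positivity : (0:ℝ) ≤ s + Q^(n+1))]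
    calc s ^ (n+1) / (s + Q ^ (n+1)) ≤ s ^ (n+1) / s := by
          apply div_le_div_of_nonneg_left (by positivity) hs0
          simp only [le_add_iff_nonneg_right]
          positivity
    _ = s ^ n := by
          rw [pow_succ]
          field_simp
  have hB : Summable fun n : ℕ => a (-(n : ℤ)) := by
    apply Summable.of_norm_bounded (summable_geometric_of_lt_one
      (by positivity : (0:ℝ) ≤ Q/s) ((div_lt_one hs0).mpr hsQ))
    intro k
    rw [haN k, Real.norm_eq_abs, abs_div, abs_inv, abs_pow, abs_neg, abs_of_nonneg hs0.le,
      abs_of_nonneg (by positivity : (0:ℝ) ≤ s + (Q^k)⁻¹)]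
    have hQk : (0:ℝ) < Q ^ k := by positivity
    calc (s ^ k)⁻¹ / (s + (Q ^ k)⁻¹) ≤ (s ^ k)⁻¹ / (Q ^ k)⁻¹ := by
          apply div_le_div_of_nonneg_left (by positivity) (by positivity)
          simp only [le_add_iff_nonneg_left]
          positivity
    _ = (Q/s) ^ k := by
          rw [div_pow]
          field_simp
  -- A = -B
  have hAB : (∑' n : ℕ, a ((n:ℤ)+1)) = -∑' n : ℕ, a (-(n:ℤ)) := by
    calc (∑' n : ℕ, a ((n:ℤ)+1)) = ∑' n : ℕ, ∑' k : ℕ, d n k :=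
          tsum_congr fun n => ((L1 n).tsum_eq).symm
    _ = ∑' k : ℕ, ∑' n : ℕ, d n k := (Summable.tsum_comm hdsum).symm
    _ = ∑' k : ℕ, -(a (-(k:ℤ))) := tsum_congr fun k => (L2 k).tsum_eq
    _ = -∑' n : ℕ, a (-(n:ℤ)) := tsum_neg
  -- split the integer sum
  have hB' : Summable fun n : ℕ => a (-((n:ℤ)+1)+1) := by
    have : (fun n : ℕ => a (-((n:ℤ)+1)+1)) = fun n : ℕ => a (-(n:ℤ)) := by
      funext n; congr 1; ring
    rw [this]; exact hB
  have hsplit := tsum_of_nat_of_neg_add_one (f := fun j : ℤ => a (j+1)) hA hB'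
  have hre : ∑' j : ℤ, a (j+1) = ∑' j : ℤ, a j := by
    have := (Equiv.addRight (1:ℤ)).tsum_eq a
    simpa using this
  show tsum a = 0
  rw [← hre, hsplit]
  have hfix : (∑' n : ℕ, a (-((n:ℤ)+1)+1)) = ∑' n : ℕ, a (-(n:ℤ)) :=
    tsum_congr fun n => by congr 1; ring
  rw [hfix, hAB]
  ring

/-- If `t > 0` and `t ≠ q^{2m}` for every integer `m`, then the kernel `k(·,·;t)`
has a zero in the annulus. -/
theorem stmt2 (q : ℝ) (hq : q ∈ Set.Ioo (0 : ℝ) 1) (t : ℝ) (ht : 0 < t)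
    (htq : ∀ m : ℤ, t ≠ q ^ (2 * m)) :
    ∃ z w : ℂ, z ∈ annulus q ∧ w ∈ annulus q ∧ annKerT q t z w = 0 := by
  obtain ⟨hq0, hq1⟩ := hq
  set Q : ℝ := q ^ 2 with hQdef
  have hQ0 : 0 < Q := by positivity
  have hQ1 : Q < 1 := by nlinarith
  have hQne : Q ≠ 0 := hQ0.ne'
  -- t is not an integer power of Q
  have hq2m : ∀ j : ℤ, t ≠ Q ^ j := by
    intro j
    have h := htq j
    have h2 : q ^ (2 * j) = Q ^ j := by
      rw [zpow_mul]
      norm_num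
      rfl
    rwa [h2] at h
  -- find m with Q^(m+1) < t < Q^m
  obtain ⟨n, hn1, hn2⟩ := exists_mem_Ico_zpow (x := t) (y := Q⁻¹) ht ((one_lt_inv₀ hQ0).mpr hQ1)
  set m : ℤ := -n - 1 with hmdef
  have hQinv : ∀ j : ℤ, (Q⁻¹) ^ j = Q ^ (-j) := by
    intro j; rw [inv_zpow, ← zpow_neg]
  have hQm : t < Q ^ m := by
    have : Q ^ m = Q⁻¹ ^ (n + 1) := by rw [hQinv, hmdef]; congr 1; ring
    rw [this]; exact hn2
  have hQm1 : Q ^ (m + 1) < t := by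
    have he : Q ^ (m+1) = Q⁻¹ ^ n := by rw [hQinv, hmdef]; congr 1; ring
    rcases lt_or_eq_of_le (he ▸ hn1 : Q ^ (m+1) ≤ t) with h | h
    · exact h
    · exact absurd h.symm (hq2m (m+1))
  have hQmpos : 0 < Q ^ m := zpow_pos hQ0 m
  set s : ℝ := t / Q ^ m with hsdef
  have hs1 : s < 1 := (div_lt_one hQmpos).mpr hQm
  have hsQ : Q < s := by
    rw [hsdef, lt_div_iff₀ hQmpos]
    calc Q * Q ^ m = Q ^ (m + 1) := by rw [zpow_add_one₀ hQne]; ring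
    _ < t := hQm1
  have hs0 : 0 < s := hQ0.trans hsQ
  have hsne : s ≠ 0 := hs0.ne'
  have ht' : t = s * Q ^ m := by rw [hsdef]; field_simp
  -- the zero point
  set ρ : ℝ := Q / s with hρdef
  have hρ0 : 0 < ρ := by positivity
  have hρ1 : ρ < 1 := (div_lt_one hs0).mpr hsQ
  have hρQ : Q < ρ := by
    rw [hρdef, lt_div_iff₀ hs0]
    nlinarith
  set x0 : ℝ := -(Q / s) with hx0def
  -- termwise identity
  have gterm : ∀ nn : ℤ, x0 ^ nn / (1 + t * Q ^ nn)
      = ((-s) ^ m / Q ^ m) * ((-s) ^ (-(nn + m)) / (s + Q ^ (-(nn + m)))) := by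
    intro nn
    have hnegs : (-s) ≠ 0 := by simpa using hsne
    have e1 : (-s) ^ m * (-s) ^ (-(nn + m)) = (-s) ^ (-nn) := by
      rw [← zpow_add₀ hnegs]; congr 1; ring
    have e2 : Q ^ m * Q ^ (-(nn + m)) = Q ^ (-nn) := by
      rw [← zpow_add₀ hQne]; congr 1; ring
    have e3 : Q ^ nn * Q ^ (-nn) = 1 := by
      rw [← zpow_add₀ hQne]; simp
    have e4 : x0 ^ nn = Q ^ nn * (-s) ^ (-nn) := by
      rw [hx0def, ← div_neg, div_zpow, zpow_neg, div_eq_mul_inv]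
    have D1 : (0:ℝ) < 1 + t * Q ^ nn := by
      have : 0 < Q ^ nn := zpow_pos hQ0 nn
      positivity
    have D2 : (0:ℝ) < s + Q ^ (-(nn + m)) := by
      have : 0 < Q ^ (-(nn+m)) := zpow_pos hQ0 _
      positivity
    rw [div_mul_div_comm, e1, e4, div_eq_div_iff D1.ne' (by positivity : (Q ^ m * (s + Q ^ (-(nn+m)))) ≠ 0)]
    have e2' : Q ^ m * Q ^ (-(nn+m)) = Q ^ (-nn) := e2
    linear_combination ((-s:ℝ)) ^ (-nn) * e3 + (-(Q ^ nn * ((-s:ℝ)) ^ (-nn))) * ht'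
      + (Q ^ nn * ((-s:ℝ)) ^ (-nn)) * e2'
  -- the real-valued kernel sum vanishes
  have hT : ∑' nn : ℤ, x0 ^ nn / (1 + t * Q ^ nn) = 0 := by
    calc ∑' nn : ℤ, x0 ^ nn / (1 + t * Q ^ nn)
        = ∑' nn : ℤ, ((-s) ^ m / Q ^ m) * ((-s) ^ (-(nn + m)) / (s + Q ^ (-(nn + m)))) :=
          tsum_congr gterm
    _ = ((-s) ^ m / Q ^ m) * ∑' j : ℤ, ((-s) ^ j / (s + Q ^ j)) := by
          rw [tsum_mul_left]
          congr 1
          exact (Function.Involutive.toPerm (fun nn : ℤ => -(nn + m))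
            (fun nn => by ring)).tsum_eq (fun j : ℤ => (-s) ^ j / (s + Q ^ j))
    _ = 0 := by rw [keyS Q s hQ0 hQ1 hsQ hs1, mul_zero]
  -- choose the witnesses
  set r : ℝ := Real.sqrt ρ with hrdef
  have hr0 : 0 < r := Real.sqrt_pos.mpr hρ0
  have hrq : q < r := by
    have h := Real.sqrt_lt_sqrt hQ0.le hρQ
    rwa [hQdef, Real.sqrt_sq hq0.le] at h
  have hr1 : r < 1 := by
    have h := Real.sqrt_lt_sqrt hρ0.le hρ1
    rwa [Real.sqrt_one] at h
  have habsx0 : |x0| = ρ := by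
    rw [hx0def, abs_neg, abs_of_pos hρ0]
  have habsz : |x0 / r| = r := by
    rw [abs_div, habsx0, abs_of_pos hr0, hrdef, Real.div_sqrt]
  refine ⟨((x0 / r : ℝ) : ℂ), ((r : ℝ) : ℂ), ⟨?_, ?_⟩, ⟨?_, ?_⟩, ?_⟩
  · rw [Complex.norm_real, Real.norm_eq_abs, habsz]; exact hrq
  · rw [Complex.norm_real, Real.norm_eq_abs, habsz]; exact hr1
  · rw [Complex.norm_real, Real.norm_eq_abs, abs_of_pos hr0]; exact hrq
  · rw [Complex.norm_real, Real.norm_eq_abs, abs_of_pos hr0]; exact hr1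
  · -- the kernel vanishes
    have hzw : ((x0 / r : ℝ) : ℂ) * (starRingEnd ℂ) ((r : ℝ) : ℂ) = ((x0 : ℝ) : ℂ) := by
      rw [Complex.conj_ofReal, ← Complex.ofReal_mul, div_mul_cancel₀ _ hr0.ne']
    show annKerT q t _ _ = 0
    rw [annKerT]
    have hterm : ∀ nn : ℤ, (((x0 / r : ℝ) : ℂ) * (starRingEnd ℂ) ((r : ℝ) : ℂ)) ^ nn
        / (1 + (t : ℂ) * (q : ℂ) ^ (2 * nn)) = (((x0 ^ nn / (1 + t * Q ^ nn) : ℝ)) : ℂ) := by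
      intro nn
      rw [hzw]
      have hden : ((1 + t * Q ^ nn : ℝ) : ℂ) = 1 + (t:ℂ) * (q:ℂ) ^ (2 * nn) := by
        have h1 : ((q:ℂ)) ^ (2 * nn) = ((Q : ℝ) : ℂ) ^ nn := by
          rw [zpow_mul, hQdef]
          push_cast
          rfl
        rw [h1]
        push_cast [Complex.ofReal_zpow]
        ring
      rw [Complex.ofReal_div, hden, Complex.ofReal_zpow]
    calc ∑' nn : ℤ, (((x0 / r : ℝ) : ℂ) * (starRingEnd ℂ) ((r : ℝ) : ℂ)) ^ nn
        / (1 + (t : ℂ) * (q : ℂ) ^ (2 * nn))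
        = ∑' nn : ℤ, (((x0 ^ nn / (1 + t * Q ^ nn) : ℝ)) : ℂ) := tsum_congr hterm
    _ = (((∑' nn : ℤ, x0 ^ nn / (1 + t * Q ^ nn) : ℝ)) : ℂ) := (Complex.ofReal_tsum _).symm
    _ = 0 := by rw [hT, Complex.ofReal_zero]
end

section
/- For every bounded operator G on M, the series ∑_{n∈ℤ} T_n G T_n* and C′·∑_{n∈ℤ} (−1)^n T_n G T_n* converge absolutely in operator norm, and one has k(T,T*)((1/k)(T,T*)(G)) = G and (1/k)(T,T*)(k(T,T*)(G)) = G. -/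
open ContinuousLinearMap

variable {M : Type*} [NormedAddCommGroup M] [InnerProductSpace ℂ M] [CompleteSpace M]

/-- Integer powers `T^n` of an operator (using `Ring.inverse` for negative `n`). -/
noncomputable def zpowCLM (T : M →L[ℂ] M) (n : ℤ) : M →L[ℂ] M :=
  if 0 ≤ n then T ^ n.toNat else (Ring.inverse T) ^ (-n).toNat

/-- The operator `T_n := (1+q^{2n})^{-1/2} ⬝ T^n`. -/
noncomputable def annOp (q : ℝ) (T : M →L[ℂ] M) (n : ℤ) : M →L[ℂ] M :=
  (((Real.sqrt (1 + q ^ (2 * n)))⁻¹ : ℝ) : ℂ) • zpowCLM T n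

/-- `k(T,T^*)(G) := ∑_{n ∈ ℤ} T_n G T_n^*`. -/
noncomputable def kerCal (q : ℝ) (T G : M →L[ℂ] M) : M →L[ℂ] M :=
  ∑' n : ℤ, annOp q T n ∘L G ∘L adjoint (annOp q T n)

/-- `(1/k)(T,T^*)(G) := C′ ⬝ ∑_{n ∈ ℤ} (−1)^n T_n G T_n^*`. -/
noncomputable def invkerCal (q C' : ℝ) (T G : M →L[ℂ] M) : M →L[ℂ] M :=
  (C' : ℂ) • ∑' n : ℤ, ((-1 : ℂ) ^ n) • (annOp q T n ∘L G ∘L adjoint (annOp q T n))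

namespace Stmt4Aux

open Filter Topology


lemma summable_geo_int {r : ℝ} (h0 : 0 ≤ r) (h1 : r < 1) :
    Summable (fun n : ℤ => r ^ n.natAbs) := by
  apply Summable.of_nat_of_neg_add_one
  · simpa using summable_geometric_of_lt_one h0 h1
  · apply ((summable_geometric_of_lt_one h0 h1).mul_left r).congr
    intro n
    have h : ((-(↑n + 1) : ℤ)).natAbs = n + 1 := by omega
    rw [h, pow_succ]; ring

lemma summable_of_geo_bound {E : Type*} [NormedAddCommGroup E] {f : ℤ → E} {K r : ℝ}
    (h0 : 0 ≤ r) (h1 : r < 1) (h : ∀ n, ‖f n‖ ≤ K * r ^ n.natAbs) :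
    Summable (fun n => ‖f n‖) :=
  Summable.of_nonneg_of_le (fun _ => norm_nonneg _) h ((summable_geo_int h0 h1).mul_left K)

noncomputable def bb (q : ℝ) (n : ℤ) : ℝ := (1 + q ^ (2*n))⁻¹

noncomputable def eps (n : ℤ) : ℝ := (-1 : ℝ) ^ n

variable {q : ℝ}

lemma one_add_pos (hq : q ∈ Set.Ioo (0:ℝ) 1) (n : ℤ) : 0 < 1 + q ^ (2*n) := by
  have := zpow_pos hq.1 (2*n); linarith

lemma bb_pos (hq : q ∈ Set.Ioo (0:ℝ) 1) (n : ℤ) : 0 < bb q n := inv_pos.mpr (one_add_pos hq n)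

lemma bb_le_one (hq : q ∈ Set.Ioo (0:ℝ) 1) (n : ℤ) : bb q n ≤ 1 := by
  have h := one_add_pos hq n
  have := zpow_pos hq.1 (2*n)
  rw [bb, inv_le_one_iff₀]; right; linarith

lemma bb_add_neg (hq : q ∈ Set.Ioo (0:ℝ) 1) (n : ℤ) : bb q n + bb q (-n) = 1 := by
  have h1 := one_add_pos hq n
  have key : q ^ (2*(-n)) = (q ^ (2*n))⁻¹ := by
    rw [← zpow_neg]; ring_nf
  have ha : 0 < q ^ (2*n) := zpow_pos hq.1 _
  rw [bb, bb, key]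
  have hx1 : 1 + q ^ (2*n) ≠ 0 := by positivity
  have hx2 : 1 + (q ^ (2*n))⁻¹ ≠ 0 := by positivity
  field_simp
  ring

lemma one_sub_bb_le (hq : q ∈ Set.Ioo (0:ℝ) 1) (n : ℤ) : 1 - bb q n ≤ q ^ (2*n) := by
  have h := one_add_pos hq n
  have hx := zpow_pos hq.1 (2*n)
  rw [bb, sub_le_iff_le_add]
  have h2 : (1 + q ^ (2*n))⁻¹ * (1 + q^(2*n)) = 1 := inv_mul_cancel₀ (ne_of_gt h)
  nlinarith [inv_pos.mpr h]

lemma bb_le (hq : q ∈ Set.Ioo (0:ℝ) 1) (n : ℤ) : bb q n ≤ q ^ (-(2*n)) := by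
  have hx := zpow_pos hq.1 (2*n)
  rw [bb, zpow_neg]
  apply inv_anti₀ hx
  linarith

lemma eps_mul_self (n : ℤ) : eps n * eps n = 1 := by
  rw [eps, ← zpow_add₀ (by norm_num : (-1:ℝ) ≠ 0)]
  have h : (-1:ℝ) ^ (n+n) = ((-1:ℝ)^(2:ℤ)) ^ n := by
    rw [← zpow_mul]; ring_nf
  rw [h]; norm_num

lemma eps_abs (n : ℤ) : |eps n| = 1 := by
  rcases mul_self_eq_one_iff.mp (eps_mul_self n) with h | h <;> rw [h] <;> norm_num

lemma eps_add (m n : ℤ) : eps (m + n) = eps m * eps n := by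
  rw [eps, eps, eps, zpow_add₀ (by norm_num : (-1:ℝ) ≠ 0)]

lemma eps_one_sub (n : ℤ) : eps (1 - n) = -(eps n) := by
  have h : eps 1 = eps (1 - n) * eps n := by rw [← eps_add]; ring_nf
  have h3 : eps 1 = -1 := by rw [eps]; norm_num
  calc eps (1 - n) = (eps (1-n) * eps n) * eps n := by rw [mul_assoc, eps_mul_self, mul_one]
  _ = -1 * eps n := by rw [← h, h3]
  _ = -(eps n) := by ring

lemma q_zpow_le (hq : q ∈ Set.Ioo (0:ℝ) 1) {a b : ℤ} (h : b ≤ a) : q ^ a ≤ q ^ b :=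
  zpow_le_zpow_right_of_le_one₀ hq.1 hq.2.le h

lemma q_zpow_pos (hq : q ∈ Set.Ioo (0:ℝ) 1) (a : ℤ) : 0 < q ^ a := zpow_pos hq.1 a

lemma q2pow (n : ℕ) : (q^2 : ℝ) ^ n = q ^ (2 * (n : ℤ)) := by
  rw [zpow_mul, zpow_natCast, zpow_two, sq]

lemma bound_helper (hq : q ∈ Set.Ioo (0:ℝ) 1) (j n e : ℤ) (he : 2 * (n.natAbs:ℤ) - 2*|j| ≤ e) :
    q ^ e ≤ q ^ (-(2*|j|)) * (q^2) ^ n.natAbs := by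
  rw [q2pow, ← zpow_add₀ (ne_of_gt hq.1)]
  exact q_zpow_le hq (by linarith)

lemma abs_bb_sub_le (hq : q ∈ Set.Ioo (0:ℝ) 1) (j n : ℤ) :
    |bb q n - bb q (n - j)| ≤ (2 * q ^ (-(2*|j|))) * (q^2) ^ n.natAbs := by
  have hq2 : (0:ℝ) < q^2 := by nlinarith [hq.1]
  have hnn : (0:ℝ) ≤ q ^ (-(2*|j|)) * (q^2) ^ n.natAbs :=
    le_of_lt (mul_pos (zpow_pos hq.1 _) (pow_pos hq2 _))
  rw [abs_sub_le_iff]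
  rcases le_or_gt 0 n with hn | hn
  · have h1 : 1 - bb q n ≤ q ^ (-(2*|j|)) * (q^2) ^ n.natAbs := by
      refine le_trans (one_sub_bb_le hq n) (bound_helper hq j n _ ?_)
      have : (n.natAbs : ℤ) = n := Int.natAbs_of_nonneg hn
      have := abs_nonneg j
      omega
    have h2 : 1 - bb q (n - j) ≤ q ^ (-(2*|j|)) * (q^2) ^ n.natAbs := by
      refine le_trans (one_sub_bb_le hq (n-j)) (bound_helper hq j n _ ?_)
      have : (n.natAbs : ℤ) = n := Int.natAbs_of_nonneg hn
      have := abs_nonneg j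
      have := le_abs_self j
      omega
    have := bb_le_one hq n
    have := bb_le_one hq (n - j)
    constructor <;> nlinarith
  · have h1 : bb q n ≤ q ^ (-(2*|j|)) * (q^2) ^ n.natAbs := by
      refine le_trans (bb_le hq n) (bound_helper hq j n _ ?_)
      have : (n.natAbs : ℤ) = -n := Int.ofNat_natAbs_of_nonpos hn.le
      have := abs_nonneg j
      omega
    have h2 : bb q (n - j) ≤ q ^ (-(2*|j|)) * (q^2) ^ n.natAbs := by
      refine le_trans (bb_le hq (n-j)) (bound_helper hq j n _ ?_)
      have : (n.natAbs : ℤ) = -n := Int.ofNat_natAbs_of_nonpos hn.le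
      have := neg_abs_le j
      omega
    have := bb_pos hq n
    have := bb_pos hq (n - j)
    constructor <;> nlinarith

lemma q2_lt_one (hq : q ∈ Set.Ioo (0:ℝ) 1) : q^2 < 1 := by nlinarith [hq.1, hq.2]

lemma summable_eps_bb_diff (hq : q ∈ Set.Ioo (0:ℝ) 1) (j : ℤ) :
    Summable (fun n : ℤ => eps n * (bb q n - bb q (n - j))) := by
  apply Summable.of_norm
  have hq2 : (0:ℝ) ≤ q^2 := by nlinarith [hq.1]
  apply summable_of_geo_bound (K := 2 * q ^ (-(2*|j|))) hq2 (q2_lt_one hq)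
  intro n
  rw [norm_mul, Real.norm_eq_abs, Real.norm_eq_abs, eps_abs, one_mul]
  exact abs_bb_sub_le hq j n

lemma shiftW_zero (hq : q ∈ Set.Ioo (0:ℝ) 1) :
    ∑' n : ℤ, eps n * (bb q n - bb q (n - 1)) = 0 := by
  set f : ℤ → ℝ := fun n => eps n * (bb q n - bb q (n - 1)) with hf
  have key : ∀ n : ℤ, f (1 - n) = -(f n) := by
    intro n
    have e1 : bb q (1 - n) = 1 - bb q (n - 1) := by
      have := bb_add_neg hq (n - 1)
      have h : -(n-1) = 1 - n := by ring
      rw [h] at this; linarith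
    have e2 : bb q (1 - n - 1) = 1 - bb q n := by
      have := bb_add_neg hq n
      have h : (1 : ℤ) - n - 1 = -n := by ring
      rw [h]; linarith
    simp only [hf, e1, e2, eps_one_sub]
    ring
  have h1 : ∑' n, f n = ∑' n, f (1 - n) := ((Equiv.subLeft (1:ℤ)).tsum_eq f).symm
  have h2 : ∑' n : ℤ, f (1 - n) = -∑' n, f n := by
    rw [show (fun n : ℤ => f (1 - n)) = fun n => -(f n) from funext key, tsum_neg]
  linarith [h1, h2]


lemma shiftW (hq : q ∈ Set.Ioo (0:ℝ) 1) (j : ℤ) :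
    ∑' n : ℤ, eps n * (bb q (n - j) - bb q (n - j - 1)) = 0 := by
  have h1 : ∀ m : ℤ, eps (m + j) * (bb q (m + j - j) - bb q (m + j - j - 1))
      = eps j * (eps m * (bb q m - bb q (m - 1))) := by
    intro m
    have e : m + j - j = m := by ring
    rw [eps_add, e]; ring
  calc ∑' n : ℤ, eps n * (bb q (n - j) - bb q (n - j - 1))
      = ∑' m : ℤ, eps (m + j) * (bb q (m + j - j) - bb q (m + j - j - 1)) :=
        ((Equiv.addRight j).tsum_eq _).symm
    _ = ∑' m : ℤ, eps j * (eps m * (bb q m - bb q (m - 1))) := by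
        exact tsum_congr h1
    _ = eps j * ∑' m : ℤ, eps m * (bb q m - bb q (m - 1)) := tsum_mul_left
    _ = 0 := by rw [shiftW_zero hq, mul_zero]

lemma F_zero (hq : q ∈ Set.Ioo (0:ℝ) 1) (N : ℤ) :
    ∑' n : ℤ, eps n * (bb q n - bb q (n - N)) = 0 := by
  induction N using Int.induction_on with
  | zero => simp
  | succ k ih =>
    have hsum1 := summable_eps_bb_diff hq (k : ℤ)
    have hsum2 : Summable (fun n : ℤ => eps n * (bb q (n - k) - bb q (n - k - 1))) := by
      have h := summable_eps_bb_diff hq ((k : ℤ) + 1)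
      have h2 := hsum1
      have := h.sub h2
      apply this.congr
      intro n
      have e : n - ((k:ℤ)+1) = n - k - 1 := by ring
      rw [e]; ring
    have key : (fun n : ℤ => eps n * (bb q n - bb q (n - ((k:ℤ)+1))))
        = fun n => eps n * (bb q n - bb q (n - k)) + eps n * (bb q (n - k) - bb q (n - k - 1)) := by
      funext n
      have e : n - ((k:ℤ)+1) = n - k - 1 := by ring
      rw [e]; ring
    rw [key, Summable.tsum_add hsum1 hsum2, ih, shiftW hq, add_zero]
  | pred k ih =>
    have hsumA := summable_eps_bb_diff hq (-(k : ℤ))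
    have hsumB : Summable (fun n : ℤ =>
        eps n * (bb q (n - (-(k:ℤ)-1)) - bb q (n - (-(k:ℤ)-1) - 1))) := by
      apply (hsumA.sub (summable_eps_bb_diff hq (-(k:ℤ)-1))).congr
      intro n
      have e : n - (-(k:ℤ)-1) - 1 = n - (-(k:ℤ)) := by ring
      rw [e]; ring
    have key : (fun n : ℤ => eps n * (bb q n - bb q (n - (-(k:ℤ) - 1))))
        = fun n => eps n * (bb q n - bb q (n - (-(k:ℤ))))
          - eps n * (bb q (n - (-(k:ℤ)-1)) - bb q (n - (-(k:ℤ)-1) - 1)) := by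
      funext n
      have e : n - (-(k:ℤ)-1) - 1 = n - (-(k:ℤ)) := by ring
      rw [e]; ring
    rw [key, Summable.tsum_sub hsumA hsumB, ih, shiftW hq, sub_zero]


lemma summable_eps_bb_mul (hq : q ∈ Set.Ioo (0:ℝ) 1) (N : ℤ) :
    Summable (fun n : ℤ => eps n * (bb q n * bb q (N - n))) := by
  apply Summable.of_norm
  have hq2 : (0:ℝ) ≤ q^2 := by nlinarith [hq.1]
  apply summable_of_geo_bound (K := q ^ (-(2*|N|))) hq2 (q2_lt_one hq)
  intro n
  rw [norm_mul, Real.norm_eq_abs, Real.norm_eq_abs, eps_abs, one_mul,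
    abs_of_nonneg (le_of_lt (mul_pos (bb_pos hq n) (bb_pos hq (N - n))))]
  rcases le_or_gt 0 n with hn | hn
  · have h1 : bb q n * bb q (N - n) ≤ bb q (N - n) :=
      mul_le_of_le_one_left (le_of_lt (bb_pos hq _)) (bb_le_one hq n)
    refine h1.trans ((bb_le hq (N - n)).trans (bound_helper hq N n _ ?_))
    have : (n.natAbs : ℤ) = n := Int.natAbs_of_nonneg hn
    have := le_abs_self N
    omega
  · have h1 : bb q n * bb q (N - n) ≤ bb q n :=
      mul_le_of_le_one_right (le_of_lt (bb_pos hq _)) (bb_le_one hq (N - n))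
    refine h1.trans ((bb_le hq n).trans (bound_helper hq N n _ ?_))
    have : (n.natAbs : ℤ) = -n := Int.ofNat_natAbs_of_nonpos hn.le
    have := abs_nonneg N
    omega

lemma sN_zero (hq : q ∈ Set.Ioo (0:ℝ) 1) {N : ℤ} (hN : N ≠ 0) :
    ∑' n : ℤ, eps n * (bb q n * bb q (N - n)) = 0 := by
  have ht : 1 - q ^ (2*N) ≠ 0 := by
    intro h
    have : q ^ (2*N) = q ^ (0:ℤ) := by rw [zpow_zero]; linarith
    have := (zpow_right_strictAnti₀ hq.1 hq.2).injective this
    omega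
  have key : ∀ n : ℤ, eps n * (bb q n * bb q (N - n))
      = (1 - q ^ (2*N))⁻¹ * (eps n * (bb q n - bb q (n - N))) := by
    intro n
    have hbN : bb q (n - N) = 1 - bb q (N - n) := by
      have h := bb_add_neg hq (N - n)
      have e : -(N - n) = n - N := by ring
      rw [e] at h; linarith
    have h1 : 1 + q ^ (2*n) ≠ 0 := ne_of_gt (one_add_pos hq n)
    have h2 : 1 + q ^ (2*(N - n)) ≠ 0 := ne_of_gt (one_add_pos hq (N - n))
    have hac : q ^ (2*n) * q ^ (2*(N - n)) = q ^ (2*N) := by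
      rw [← zpow_add₀ (ne_of_gt hq.1)]
      congr 1
      ring
    have expand : (1 - q ^ (2*N)) * (bb q n * bb q (N - n))
        = bb q n - (1 - bb q (N - n)) := by
      rw [bb, bb, ← hac]
      field_simp
      ring
    rw [hbN, ← expand]
    field_simp
  rw [tsum_congr key, tsum_mul_left, F_zero hq N, mul_zero]


def eDelta : ℤ × ℤ ≃ ℤ × ℤ where
  toFun p := (p.1 - p.2, p.2)
  invFun p := (p.1 + p.2, p.2)
  left_inv p := by simp
  right_inv p := by simp

lemma x_mem (hq : q ∈ Set.Ioo (0:ℝ) 1) : (q+1)/2 ∈ Set.Ioo q 1 := by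
  constructor <;> [linarith [hq.2]; linarith [hq.2]]

lemma summable_norm_u (hq : q ∈ Set.Ioo (0:ℝ) 1) {u : ℝ} (hu1 : q^2 < u) (hu2 : u < 1) :
    Summable (fun n : ℤ => ‖u ^ n * bb q n‖) := by
  have hq2 : (0:ℝ) < q^2 := by nlinarith [hq.1]
  have hu0 : 0 < u := lt_trans hq2 hu1
  set ρ : ℝ := max u (q^2 / u) with hρ
  have hρ0 : 0 ≤ ρ := le_trans hu0.le (le_max_left _ _)
  have hρ1 : ρ < 1 := by
    apply max_lt hu2
    rw [div_lt_one hu0]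
    linarith
  apply summable_of_geo_bound (K := 1) hρ0 hρ1
  intro n
  rw [one_mul, Real.norm_eq_abs,
    abs_of_nonneg (le_of_lt (mul_pos (zpow_pos hu0 n) (bb_pos hq n)))]
  rcases le_or_gt 0 n with hn | hn
  · have h1 : u ^ n * bb q n ≤ u ^ n :=
      mul_le_of_le_one_right (le_of_lt (zpow_pos hu0 n)) (bb_le_one hq n)
    refine h1.trans ?_
    have e : u ^ n = u ^ n.natAbs := by
      rw [← zpow_natCast]
      congr 1
      omega
    rw [e]
    exact pow_le_pow_left₀ hu0.le (le_max_left _ _) _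
  · have h1 : u ^ n * bb q n ≤ u ^ n * q ^ (-(2*n)) :=
      mul_le_mul_of_nonneg_left (bb_le hq n) (le_of_lt (zpow_pos hu0 n))
    refine h1.trans ?_
    have en : (n.natAbs : ℤ) = -n := Int.ofNat_natAbs_of_nonpos hn.le
    have h2 : (q:ℝ) ^ (-(2*n)) = (q^2) ^ (-n : ℤ) := by
      rw [← zpow_natCast q 2, ← zpow_mul]
      congr 1
      push_cast
      ring
    have e : u ^ n * q ^ (-(2*n)) = (q^2 / u) ^ n.natAbs := by
      rw [← zpow_natCast (q^2/u), en, div_zpow, h2, zpow_neg u, div_eq_mul_inv, inv_inv]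
      ring
    rw [e]
    exact pow_le_pow_left₀ (by positivity) (le_max_right _ _) _

set_option maxHeartbeats 1000000 in
lemma AB_eq_s0 (hq : q ∈ Set.Ioo (0:ℝ) 1) {u : ℝ} (hu1 : q^2 < u) (hu2 : u < 1) :
    (∑' n : ℤ, u ^ n * bb q n) * (∑' n : ℤ, eps n * (u ^ n * bb q n))
      = ∑' n : ℤ, eps n * (bb q n * bb q (0 - n)) := by
  have hq2 : (0:ℝ) < q^2 := by nlinarith [hq.1]
  have hu0 : 0 < u := lt_trans hq2 hu1
  have hA := summable_norm_u hq hu1 hu2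
  have hB : Summable (fun n : ℤ => ‖eps n * (u ^ n * bb q n)‖) := by
    apply hA.congr
    intro n
    symm
    rw [norm_mul (eps n), Real.norm_eq_abs (eps n), eps_abs, one_mul]
  set g : ℤ × ℤ → ℝ := fun p => (u ^ p.1 * bb q p.1) * (eps p.2 * (u ^ p.2 * bb q p.2)) with hg
  have hgsum : Summable g := summable_mul_of_summable_norm hA hB
  have step1 : (∑' n : ℤ, u ^ n * bb q n) * (∑' n : ℤ, eps n * (u ^ n * bb q n))
      = ∑' p : ℤ × ℤ, g p := tsum_mul_tsum_of_summable_norm hA hB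
  have hgd : Summable (fun p : ℤ × ℤ => g (eDelta p)) := (eDelta.summable_iff).mpr hgsum
  have step2 : ∑' p : ℤ × ℤ, g p = ∑' p : ℤ × ℤ, g (eDelta p) := (eDelta.tsum_eq g).symm
  have step3 : ∑' p : ℤ × ℤ, g (eDelta p)
      = ∑' N : ℤ, ∑' n : ℤ, g (eDelta (N, n)) := Summable.tsum_prod hgd
  have step4 : ∀ N : ℤ, ∑' n : ℤ, g (eDelta (N, n))
      = u ^ N * ∑' n : ℤ, eps n * (bb q n * bb q (N - n)) := by
    intro N
    rw [← tsum_mul_left]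
    congr 1
    funext n
    show (u ^ (N - n) * bb q (N - n)) * (eps n * (u ^ n * bb q n)) = _
    have e : u ^ (N - n) * u ^ n = u ^ N := by
      rw [← zpow_add₀ (ne_of_gt hu0)]
      congr 1
      ring
    calc (u ^ (N - n) * bb q (N - n)) * (eps n * (u ^ n * bb q n))
        = (u ^ (N - n) * u ^ n) * (eps n * (bb q n * bb q (N - n))) := by ring
      _ = u ^ N * (eps n * (bb q n * bb q (N - n))) := by rw [e]
  have step5 : ∑' N : ℤ, ∑' n : ℤ, g (eDelta (N, n))
      = ∑' n : ℤ, eps n * (bb q n * bb q (0 - n)) := by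
    rw [tsum_eq_single (0 : ℤ)]
    · rw [step4 0, zpow_zero, one_mul]
    · intro N hN
      rw [step4 N, sN_zero hq hN, mul_zero]
  rw [step1, step2, step3, step5]


lemma Cs0 {q : ℝ} (hq : q ∈ Set.Ioo (0:ℝ) 1) (C' : ℝ)
    (hC' : ∀ z w : ℂ, z ∈ annulus q → w ∈ annulus q →
      (C' : ℂ) * annKer q z w * annKer q z (-w) = 1) :
    C' * ∑' n : ℤ, eps n * (bb q n * bb q (0 - n)) = 1 := by
  set x : ℝ := (q+1)/2 with hxdef
  have hx : x ∈ Set.Ioo q 1 := x_mem hq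
  have hx0 : 0 < x := lt_trans hq.1 hx.1
  set u : ℝ := x^2 with hudef
  have hu1 : q^2 < u := by nlinarith [hq.1, hx.1]
  have hu2 : u < 1 := by nlinarith [hx.2]
  have hz : (x:ℂ) ∈ annulus q := by
    constructor <;> rw [Complex.norm_real, Real.norm_of_nonneg hx0.le] <;> [exact hx.1; exact hx.2]
  have hden : ∀ n : ℤ, (1 + (q:ℂ) ^ (2*n)) = ((1 + q ^ (2*n) : ℝ) : ℂ) := by
    intro n
    push_cast [Complex.ofReal_zpow]
    ring
  have hdenne : ∀ n : ℤ, (1 + (q:ℂ) ^ (2*n)) ≠ 0 := by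
    intro n
    rw [hden n]
    exact_mod_cast ne_of_gt (one_add_pos hq n)
  have hker1 : annKer q (x:ℂ) (x:ℂ) = ((∑' n : ℤ, u ^ n * bb q n : ℝ) : ℂ) := by
    rw [annKer, Complex.ofReal_tsum]
    apply tsum_congr
    intro n
    rw [Complex.conj_ofReal]
    have e1 : (x:ℂ) * (x:ℂ) = ((u : ℝ) : ℂ) := by
      rw [← Complex.ofReal_mul]
      congr 1
      rw [hudef]; ring
    rw [e1, hden n, bb]
    push_cast [Complex.ofReal_zpow]
    rw [div_eq_mul_inv]
  have hker2 : annKer q (x:ℂ) (-(x:ℂ)) = ((∑' n : ℤ, eps n * (u ^ n * bb q n) : ℝ) : ℂ) := by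
    rw [annKer, Complex.ofReal_tsum]
    apply tsum_congr
    intro n
    rw [map_neg, Complex.conj_ofReal]
    have e0 : (x:ℂ) * (x:ℂ) = ((u : ℝ) : ℂ) := by
      rw [← Complex.ofReal_mul]
      congr 1
      rw [hudef]; ring
    have e1 : (x:ℂ) * (-(x:ℂ)) = ((-u : ℝ) : ℂ) := by
      have h' : (x:ℂ) * (-(x:ℂ)) = -((x:ℂ) * (x:ℂ)) := by ring
      rw [h', e0, ← Complex.ofReal_neg]
    rw [e1, hden n, bb, eps]
    have e2 : ((-u : ℝ) : ℂ) ^ n = (((-1 : ℝ) ^ n * u ^ n : ℝ) : ℂ) := by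
      rw [← mul_zpow]
      push_cast [Complex.ofReal_zpow]
      norm_num
    rw [e2]
    push_cast [Complex.ofReal_zpow]
    rw [div_eq_mul_inv]
    ring
  have hmain := hC' (x:ℂ) (x:ℂ) hz hz
  rw [hker1, hker2] at hmain
  have hreal : C' * ((∑' n : ℤ, u ^ n * bb q n) * ∑' n : ℤ, eps n * (u ^ n * bb q n)) = 1 := by
    apply Complex.ofReal_injective
    rw [Complex.ofReal_mul, Complex.ofReal_mul, Complex.ofReal_one, ← mul_assoc]
    exact hmain
  rw [AB_eq_s0 hq hu1 hu2] at hreal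
  exact hreal



lemma gelfand_bound {A : Type*} [NormedRing A] [NormedAlgebra ℂ A] [CompleteSpace A]
    (S : A) (r : ℝ) (hr : 0 < r) (h : spectralRadius ℂ S < ENNReal.ofReal r) :
    ∃ C : ℝ, 0 < C ∧ ∀ k : ℕ, ‖S ^ k‖ ≤ C * r ^ k := by
  have htend := spectrum.pow_nnnorm_pow_one_div_tendsto_nhds_spectralRadius S
  have hev : ∀ᶠ k : ℕ in atTop, (‖S ^ k‖₊ : ENNReal) ^ (1/(k:ℝ)) < ENNReal.ofReal r :=
    htend.eventually_lt_const h
  rw [eventually_atTop] at hev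
  obtain ⟨N, hN⟩ := hev
  have key : ∀ k : ℕ, max N 1 ≤ k → ‖S ^ k‖ ≤ r ^ k := by
    intro k hk
    have hk1 : 1 ≤ k := le_trans (le_max_right _ _) hk
    have h1 := hN k (le_trans (le_max_left _ _) hk)
    have h2 : ((‖S ^ k‖₊ : ENNReal) ^ (1/(k:ℝ))) ^ (k:ℝ) < (ENNReal.ofReal r) ^ (k:ℝ) :=
      ENNReal.rpow_lt_rpow h1 (by positivity)
    rw [← ENNReal.rpow_mul, one_div, inv_mul_cancel₀ (by positivity : (k:ℝ) ≠ 0),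
      ENNReal.rpow_one, ENNReal.ofReal_rpow_of_pos hr] at h2
    have h3 : (‖S ^ k‖₊ : ENNReal) < ENNReal.ofReal (r ^ k) := by
      rwa [Real.rpow_natCast] at h2
    rw [ENNReal.lt_ofReal_iff_toReal_lt ENNReal.coe_ne_top, ENNReal.coe_toReal,
      coe_nnnorm] at h3
    exact h3.le
  have hsum : (0:ℝ) ≤ ∑ j ∈ Finset.range (max N 1), ‖S ^ j‖ / r ^ j :=
    Finset.sum_nonneg fun j _ => by positivity
  refine ⟨1 + ∑ j ∈ Finset.range (max N 1), ‖S ^ j‖ / r ^ j, by linarith, fun k => ?_⟩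
  rcases le_or_gt (max N 1) k with hk | hk
  · calc ‖S ^ k‖ ≤ r ^ k := key k hk
    _ ≤ _ * r ^ k := le_mul_of_one_le_left (by positivity) (by linarith)
  · have hmem : ‖S ^ k‖ / r ^ k ≤ ∑ j ∈ Finset.range (max N 1), ‖S ^ j‖ / r ^ j :=
      Finset.single_le_sum (f := fun j => ‖S ^ j‖ / r ^ j)
        (fun j _ => by positivity) (Finset.mem_range.mpr hk)
    have h4 : ‖S ^ k‖ / r ^ k ≤ 1 + ∑ j ∈ Finset.range (max N 1), ‖S ^ j‖ / r ^ j := by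
      linarith
    calc ‖S ^ k‖ = (‖S ^ k‖ / r ^ k) * r ^ k := by field_simp
    _ ≤ _ * r ^ k := mul_le_mul_of_nonneg_right h4 (by positivity)

/-! ### Operator lemmas -/

section Operators

variable {M : Type*} [NormedAddCommGroup M] [InnerProductSpace ℂ M] [CompleteSpace M]
variable {q : ℝ} {T : M →L[ℂ] M}

lemma isUnit_T (hq : q ∈ Set.Ioo (0:ℝ) 1) (hT : spectrum ℂ T ⊆ annulus q) : IsUnit T := by
  have h0 : (0:ℂ) ∉ spectrum ℂ T := by
    intro h
    have h2 := hT h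
    simp only [annulus, Set.mem_setOf_eq, norm_zero] at h2
    linarith [h2.1, hq.1]
  have h1 := spectrum.notMem_iff.mp h0
  simp only [map_zero, zero_sub] at h1
  exact (IsUnit.neg_iff T).mp h1

lemma zpowCLM_eq (hU : IsUnit T) (n : ℤ) :
    zpowCLM T n = ((hU.unit ^ n : (M →L[ℂ] M)ˣ) : M →L[ℂ] M) := by
  rcases le_or_gt 0 n with hn | hn
  · obtain ⟨k, rfl⟩ : ∃ k : ℕ, n = (k : ℤ) := ⟨n.toNat, by omega⟩
    rw [zpowCLM, if_pos hn, zpow_natCast, Units.val_pow_eq_pow_val, IsUnit.unit_spec]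
    simp
  · obtain ⟨k, rfl⟩ : ∃ k : ℕ, n = -(k : ℤ) := ⟨(-n).toNat, by omega⟩
    have hinv : Ring.inverse T = ((hU.unit⁻¹ : (M →L[ℂ] M)ˣ) : M →L[ℂ] M) := by
      nth_rewrite 1 [← hU.unit_spec]
      rw [Ring.inverse_unit]
    rw [zpowCLM, if_neg (by omega), hinv, zpow_neg, zpow_natCast, ← inv_pow,
      Units.val_pow_eq_pow_val]
    simp

lemma zpowCLM_mul (hU : IsUnit T) (m n : ℤ) :
    zpowCLM T m * zpowCLM T n = zpowCLM T (m + n) := by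
  rw [zpowCLM_eq hU, zpowCLM_eq hU, zpowCLM_eq hU, ← Units.val_mul, ← zpow_add]

lemma zpowCLM_zero' (hU : IsUnit T) : zpowCLM T 0 = 1 := by
  rw [zpowCLM_eq hU, zpow_zero, Units.val_one]

lemma exists_opBound [Nontrivial M] (hq : q ∈ Set.Ioo (0:ℝ) 1)
    (hT : spectrum ℂ T ⊆ annulus q) :
    ∃ K ρ : ℝ, 0 < K ∧ 0 ≤ ρ ∧ ρ < 1 ∧
      ∀ n : ℤ, bb q n * ‖zpowCLM T n‖^2 ≤ K * ρ ^ n.natAbs := by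
  have hU := isUnit_T hq hT
  have hnontriv : Nontrivial (M →L[ℂ] M) := by
    obtain ⟨x, hx⟩ := exists_ne (0 : M)
    exact ⟨1, 0, fun h => hx (by simpa using DFunLike.congr_fun h x)⟩
  -- bound for T
  obtain ⟨z₀, hz₀mem, hz₀eq⟩ := spectrum.exists_nnnorm_eq_spectralRadius T
  have hz₀lt : ‖z₀‖ < 1 := by
    have := (hT hz₀mem).2
    exact this
  set r₁ : ℝ := (‖z₀‖ + 1)/2 with hr₁def
  have hr₁pos : 0 < r₁ := by rw [hr₁def]; positivity
  have hr₁lt : r₁ < 1 := by rw [hr₁def]; linarith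
  have hrad1 : spectralRadius ℂ T < ENNReal.ofReal r₁ := by
    rw [← hz₀eq, ← ENNReal.ofReal_coe_nnreal, coe_nnnorm]
    rw [ENNReal.ofReal_lt_ofReal_iff hr₁pos]
    rw [hr₁def]; linarith
  obtain ⟨C₁, hC₁pos, hC₁⟩ := gelfand_bound T r₁ hr₁pos hrad1
  -- bound for T⁻¹
  set S : M →L[ℂ] M := ((hU.unit⁻¹ : (M →L[ℂ] M)ˣ) : M →L[ℂ] M) with hSdef
  obtain ⟨z₁, hz₁mem, hz₁eq⟩ := spectrum.exists_nnnorm_eq_spectralRadius S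
  have hz₁ne : z₁ ≠ 0 := by
    intro h
    subst h
    exact spectrum.zero_notMem ℂ hU.unit⁻¹.isUnit hz₁mem
  have hz₁inv : z₁⁻¹ ∈ spectrum ℂ T := by
    have h := spectrum.inv_mem_iff (R := ℂ) (r := Units.mk0 z₁ hz₁ne) (a := hU.unit⁻¹)
    have h2 : ((Units.mk0 z₁ hz₁ne : ℂˣ) : ℂ) ∈ spectrum ℂ ((hU.unit⁻¹ : (M →L[ℂ] M)ˣ) : M →L[ℂ] M) := hz₁mem
    have h3 := h.mp h2
    simpa [hU.unit_spec] using h3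
  have hz₁lt : ‖z₁‖ < 1/q := by
    have hq' := (hT hz₁inv).1
    rw [norm_inv] at hq'
    have hz₁pos : 0 < ‖z₁‖ := norm_pos_iff.mpr hz₁ne
    have hcan : ‖z₁‖ * ‖z₁‖⁻¹ = 1 := mul_inv_cancel₀ (ne_of_gt hz₁pos)
    rw [lt_div_iff₀ hq.1]
    nlinarith [hq.1]
  set r₂ : ℝ := (‖z₁‖ + 1/q)/2 with hr₂def
  have hr₂pos : 0 < r₂ := by
    have : 0 < 1/q := div_pos one_pos hq.1
    have := norm_nonneg z₁
    rw [hr₂def]; linarith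
  have hqr₂ : q * r₂ < 1 := by
    have h1 : r₂ < 1/q := by rw [hr₂def]; linarith
    have := hq.1
    calc q * r₂ < q * (1/q) := by nlinarith
    _ = 1 := by field_simp
  have hrad2 : spectralRadius ℂ S < ENNReal.ofReal r₂ := by
    rw [← hz₁eq, ← ENNReal.ofReal_coe_nnreal, coe_nnnorm, ENNReal.ofReal_lt_ofReal_iff hr₂pos, hr₂def]
    linarith
  obtain ⟨C₂, hC₂pos, hC₂⟩ := gelfand_bound S r₂ hr₂pos hrad2
  refine ⟨max (C₁^2) (C₂^2), max (r₁^2) ((q*r₂)^2), ?_, ?_, ?_, ?_⟩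
  · exact lt_max_of_lt_left (by positivity)
  · exact le_max_of_le_left (by positivity)
  · apply max_lt
    · nlinarith
    · nlinarith [mul_pos hq.1 hr₂pos]
  · intro n
    rcases le_or_gt 0 n with hn | hn
    · obtain ⟨k, rfl⟩ : ∃ k : ℕ, n = (k : ℤ) := ⟨n.toNat, by omega⟩
      have hP : zpowCLM T (k:ℤ) = T ^ k := by
        rw [zpowCLM, if_pos hn]; simp
      have h1 : ‖zpowCLM T (k:ℤ)‖ ≤ C₁ * r₁ ^ k := by rw [hP]; exact hC₁ k
      have h2 : ‖zpowCLM T (k:ℤ)‖^2 ≤ (C₁ * r₁ ^ k)^2 :=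
        pow_le_pow_left₀ (norm_nonneg _) h1 2
      have h3 : (C₁ * r₁ ^ k)^2 = C₁^2 * (r₁^2)^k := by
        rw [mul_pow, ← pow_mul, ← pow_mul, Nat.mul_comm]
      have h4 : (r₁^2)^k ≤ (max (r₁^2) ((q*r₂)^2))^k :=
        pow_le_pow_left₀ (by positivity) (le_max_left _ _) k
      have h5 : k = ((k:ℤ)).natAbs := by omega
      have hbb1 : bb q (k:ℤ) ≤ 1 := bb_le_one hq _
      have hbb0 : 0 < bb q (k:ℤ) := bb_pos hq _
      have hnn : (0:ℝ) ≤ ‖zpowCLM T (k:ℤ)‖^2 := by positivity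
      calc bb q (k:ℤ) * ‖zpowCLM T (k:ℤ)‖^2 ≤ 1 * ‖zpowCLM T (k:ℤ)‖^2 := by
            exact mul_le_mul_of_nonneg_right hbb1 hnn
      _ = ‖zpowCLM T (k:ℤ)‖^2 := one_mul _
      _ ≤ C₁^2 * (r₁^2)^k := by rw [← h3]; exact h2
      _ ≤ max (C₁^2) (C₂^2) * (max (r₁^2) ((q*r₂)^2))^k := by
            apply mul_le_mul (le_max_left _ _) h4 (by positivity) (by positivity)
      _ = max (C₁^2) (C₂^2) * (max (r₁^2) ((q*r₂)^2))^(((k:ℤ)).natAbs) := by rw [← h5]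
    · obtain ⟨k, rfl⟩ : ∃ k : ℕ, n = -(k : ℤ) := ⟨(-n).toNat, by omega⟩
      have hP : zpowCLM T (-(k:ℤ)) = S ^ k := by
        rw [zpowCLM_eq hU, zpow_neg, zpow_natCast, ← inv_pow, hSdef,
          Units.val_pow_eq_pow_val]
      have h1 : ‖zpowCLM T (-(k:ℤ))‖ ≤ C₂ * r₂ ^ k := by rw [hP]; exact hC₂ k
      have h2 : ‖zpowCLM T (-(k:ℤ))‖^2 ≤ (C₂ * r₂ ^ k)^2 :=
        pow_le_pow_left₀ (norm_nonneg _) h1 2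
      have hbb : bb q (-(k:ℤ)) ≤ (q^2)^k := by
        have := bb_le hq (-(k:ℤ))
        rw [q2pow]
        have e : -(2 * -(k:ℤ)) = 2 * (k:ℤ) := by ring
        rwa [e] at this
      have h5 : ((-(k:ℤ))).natAbs = k := by omega
      have key : bb q (-(k:ℤ)) * ‖zpowCLM T (-(k:ℤ))‖^2 ≤ (q^2)^k * (C₂ * r₂ ^ k)^2 := by
        apply mul_le_mul hbb h2 (by positivity) (by positivity)
      have e2' : ∀ a b c : ℝ, (a^2)^k * (b * c^k)^2 = b^2 * ((a*c)^2)^k := fun a b c => by ring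
      have e2 : (q^2)^k * (C₂ * r₂ ^ k)^2 = C₂^2 * ((q*r₂)^2)^k := e2' q C₂ r₂
      rw [h5]
      calc bb q (-(k:ℤ)) * ‖zpowCLM T (-(k:ℤ))‖^2 ≤ C₂^2 * ((q*r₂)^2)^k := by
            rw [← e2]; exact key
      _ ≤ max (C₁^2) (C₂^2) * (max (r₁^2) ((q*r₂)^2))^k := by
            apply mul_le_mul (le_max_right _ _)
              (pow_le_pow_left₀ (by positivity) (le_max_right _ _) k)
              (by positivity) (by positivity)

lemma annOp_conj (hq : q ∈ Set.Ioo (0:ℝ) 1) (n : ℤ) (X : M →L[ℂ] M) :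
    annOp q T n ∘L X ∘L adjoint (annOp q T n)
      = ((bb q n : ℝ) : ℂ) • (zpowCLM T n ∘L X ∘L adjoint (zpowCLM T n)) := by
  set c : ℝ := (Real.sqrt (1 + q ^ (2*n)))⁻¹ with hc
  have hadj : adjoint (annOp q T n) = ((c : ℝ) : ℂ) • adjoint (zpowCLM T n) := by
    rw [annOp, ← hc, LinearIsometryEquiv.map_smulₛₗ, Complex.conj_ofReal]
  have hcc : (c : ℂ) * (c : ℂ) = ((bb q n : ℝ) : ℂ) := by
    rw [← Complex.ofReal_mul]
    congr 1
    rw [hc, ← mul_inv, Real.mul_self_sqrt (one_add_pos hq n).le, bb]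
  rw [hadj, annOp, ← hc, smul_comp, comp_smul, comp_smul, smul_smul, hcc]

lemma conj_RR (hU : IsUnit T) (Y : M →L[ℂ] M) (m n : ℤ) :
    zpowCLM T m ∘L ((zpowCLM T n ∘L Y ∘L adjoint (zpowCLM T n)) ∘L adjoint (zpowCLM T m))
      = zpowCLM T (m+n) ∘L Y ∘L adjoint (zpowCLM T (m+n)) := by
  rw [← zpowCLM_mul hU m n, mul_def, adjoint_comp]
  rfl

end Operators

end Stmt4Aux

set_option maxHeartbeats 4000000 in
open Stmt4Aux in
/-- Both series converge absolutely in operator norm, and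
`k(T,T^*)((1/k)(T,T^*)(G)) = G` and `(1/k)(T,T^*)(k(T,T^*)(G)) = G`. -/
theorem stmt4 (q : ℝ) (hq : q ∈ Set.Ioo (0 : ℝ) 1)
    (C' : ℝ) (hC'pos : 0 < C')
    (hC' : ∀ z w : ℂ, z ∈ annulus q → w ∈ annulus q →
      (C' : ℂ) * annKer q z w * annKer q z (-w) = 1)
    (T : M →L[ℂ] M) (hT : spectrum ℂ T ⊆ annulus q)
    (G : M →L[ℂ] M) :
    Summable (fun n : ℤ => ‖annOp q T n ∘L G ∘L adjoint (annOp q T n)‖) ∧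
    Summable (fun n : ℤ =>
      ‖(C' : ℂ) • (((-1 : ℂ) ^ n) • (annOp q T n ∘L G ∘L adjoint (annOp q T n)))‖) ∧
    kerCal q T (invkerCal q C' T G) = G ∧
    invkerCal q C' T (kerCal q T G) = G := by
  rcases subsingleton_or_nontrivial M with hM | hM
  · have hz : ∀ A : M →L[ℂ] M, A = 0 := fun A => Subsingleton.elim A 0
    refine ⟨?_, ?_, Subsingleton.elim _ _, Subsingleton.elim _ _⟩
    · have he : (fun n : ℤ => ‖annOp q T n ∘L G ∘L adjoint (annOp q T n)‖)
          = fun _ => (0:ℝ) := funext fun n => by rw [hz (annOp q T n ∘L G ∘L adjoint (annOp q T n)), norm_zero]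
      rw [he]; exact summable_zero
    · have he : (fun n : ℤ => ‖(C' : ℂ) • (((-1 : ℂ) ^ n) • (annOp q T n ∘L G ∘L adjoint (annOp q T n)))‖)
          = fun _ => (0:ℝ) := funext fun n => by
        rw [hz ((C' : ℂ) • (((-1 : ℂ) ^ n) • (annOp q T n ∘L G ∘L adjoint (annOp q T n)))), norm_zero]
      rw [he]; exact summable_zero
  have hU := isUnit_T hq hT
  obtain ⟨K, ρ, hK, hρ0, hρ1, hbound⟩ := exists_opBound hq hT
  -- abbreviations
  let RR : ℤ → M →L[ℂ] M := fun N => zpowCLM T N ∘L G ∘L adjoint (zpowCLM T N)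
  let bbC : ℤ → ℂ := fun m => ((bb q m : ℝ) : ℂ)
  let cC : ℤ → ℂ := fun n => ((eps n * bb q n : ℝ) : ℂ)
  have habs_bbC : ∀ m, ‖bbC m‖ = bb q m := fun m => by
    show ‖((bb q m : ℝ) : ℂ)‖ = bb q m
    rw [Complex.norm_real, Real.norm_eq_abs, abs_of_pos (bb_pos hq m)]
  have habs_cC : ∀ n, ‖cC n‖ = bb q n := fun n => by
    show ‖((eps n * bb q n : ℝ) : ℂ)‖ = bb q n
    rw [Complex.norm_real, Real.norm_eq_abs, abs_mul, eps_abs, one_mul,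
      abs_of_pos (bb_pos hq n)]
  have hPn : ∀ m n : ℤ, ‖zpowCLM T (m+n)‖ ≤ ‖zpowCLM T m‖ * ‖zpowCLM T n‖ := fun m n => by
    rw [← zpowCLM_mul hU]; exact norm_mul_le _ _
  have hRRnorm : ∀ N, ‖RR N‖ ≤ ‖zpowCLM T N‖^2 * ‖G‖ := by
    intro N
    calc ‖RR N‖ ≤ ‖zpowCLM T N‖ * ‖G ∘L adjoint (zpowCLM T N)‖ := opNorm_comp_le _ _
    _ ≤ ‖zpowCLM T N‖ * (‖G‖ * ‖adjoint (zpowCLM T N)‖) :=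
        mul_le_mul_of_nonneg_left (opNorm_comp_le _ _) (norm_nonneg _)
    _ = ‖zpowCLM T N‖^2 * ‖G‖ := by
        rw [LinearIsometryEquiv.norm_map (adjoint (𝕜 := ℂ) (E := M) (F := M))]
        ring
  have hterm : ∀ (co : ℤ → ℂ), (∀ n, ‖co n‖ = bb q n) → ∀ (d n : ℤ),
      ‖co n • RR (d + n)‖ ≤ (‖zpowCLM T d‖^2 * ‖G‖ * K) * ρ ^ n.natAbs := by
    intro co hco d n
    rw [norm_smul, hco]
    calc bb q n * ‖RR (d+n)‖
        ≤ bb q n * (‖zpowCLM T (d+n)‖^2 * ‖G‖) :=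
          mul_le_mul_of_nonneg_left (hRRnorm _) (bb_pos hq n).le
    _ ≤ bb q n * ((‖zpowCLM T d‖ * ‖zpowCLM T n‖)^2 * ‖G‖) := by
        apply mul_le_mul_of_nonneg_left _ (bb_pos hq n).le
        exact mul_le_mul_of_nonneg_right
          (pow_le_pow_left₀ (norm_nonneg _) (hPn d n) 2) (norm_nonneg G)
    _ = (‖zpowCLM T d‖^2 * ‖G‖) * (bb q n * ‖zpowCLM T n‖^2) := by ring
    _ ≤ (‖zpowCLM T d‖^2 * ‖G‖) * (K * ρ ^ n.natAbs) :=
        mul_le_mul_of_nonneg_left (hbound n) (by positivity)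
    _ = (‖zpowCLM T d‖^2 * ‖G‖ * K) * ρ ^ n.natAbs := by ring
  have hsum_shift : ∀ (co : ℤ → ℂ), (∀ n, ‖co n‖ = bb q n) → ∀ d : ℤ,
      Summable (fun n : ℤ => co n • RR (d + n)) := fun co hco d =>
    Summable.of_norm (summable_of_geo_bound hρ0 hρ1 (hterm co hco d))
  have hsum0 : ∀ (co : ℤ → ℂ), (∀ n, ‖co n‖ = bb q n) →
      Summable (fun n : ℤ => co n • RR n) := by
    intro co hco
    have h := hsum_shift co hco 0
    apply h.congr
    intro n
    rw [zero_add]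
  -- the two summability claims
  have heANN : ∀ (n : ℤ) (X : M →L[ℂ] M), annOp q T n ∘L X ∘L adjoint (annOp q T n)
      = bbC n • (zpowCLM T n ∘L X ∘L adjoint (zpowCLM T n)) := fun n X => annOp_conj hq n X
  have hS1 : Summable (fun n : ℤ => ‖annOp q T n ∘L G ∘L adjoint (annOp q T n)‖) := by
    apply summable_of_geo_bound hρ0 hρ1 (K := ‖zpowCLM T 0‖^2 * ‖G‖ * K)
    intro n
    rw [heANN n G]
    have h := hterm bbC habs_bbC 0 n
    rwa [zero_add] at h
  have hS2 : Summable (fun n : ℤ =>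
      ‖(C' : ℂ) • (((-1 : ℂ) ^ n) • (annOp q T n ∘L G ∘L adjoint (annOp q T n)))‖) := by
    apply (hS1.mul_left C').congr
    intro n
    rw [norm_smul, norm_smul, norm_zpow]
    have h1 : ‖(C' : ℂ)‖ = C' := by
      rw [Complex.norm_real, Real.norm_eq_abs, abs_of_pos hC'pos]
    have h2 : ‖(-1 : ℂ)‖ = 1 := by norm_num
    rw [h1, h2, one_zpow, one_mul]
  -- conjugation maps as continuous linear maps
  let φ : ℤ → (M →L[ℂ] M) →L[ℂ] (M →L[ℂ] M) := fun m =>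
    (compL ℂ M M M (zpowCLM T m)).comp ((compL ℂ M M M).flip (adjoint (zpowCLM T m)))
  have hφ : ∀ (m : ℤ) (X : M →L[ℂ] M),
      φ m X = zpowCLM T m ∘L X ∘L adjoint (zpowCLM T m) := fun m X => rfl
  have hφRR : ∀ m n : ℤ, φ m (RR n) = RR (m + n) := fun m n => conj_RR hU G m n
  -- generic product-family summability
  have hFnorm : ∀ (c1 c2 : ℤ → ℂ), (∀ n, ‖c1 n‖ = bb q n) → (∀ n, ‖c2 n‖ = bb q n) →
      Summable (fun p : ℤ × ℤ => ‖(c1 p.1 * c2 p.2) • RR (p.1 + p.2)‖) := by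
    intro c1 c2 h1 h2
    have hmaj : Summable (fun p : ℤ × ℤ =>
        (K * ρ ^ p.1.natAbs) * ((K * ‖G‖) * ρ ^ p.2.natAbs)) :=
      Summable.mul_of_nonneg ((summable_geo_int hρ0 hρ1).mul_left K)
        ((summable_geo_int hρ0 hρ1).mul_left (K * ‖G‖))
        (fun m => by positivity) (fun n => by positivity)
    apply Summable.of_nonneg_of_le (fun p => norm_nonneg _) _ hmaj
    rintro ⟨m, n⟩
    show ‖(c1 m * c2 n) • RR (m + n)‖ ≤ _
    rw [norm_smul, norm_mul, h1, h2]
    have hb1 := hbound m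
    have hb2 := hbound n
    have hbm := bb_pos hq m
    have hbn := bb_pos hq n
    calc bb q m * bb q n * ‖RR (m+n)‖
        ≤ bb q m * bb q n * (‖zpowCLM T (m+n)‖^2 * ‖G‖) := by
          apply mul_le_mul_of_nonneg_left (hRRnorm _) (by positivity)
    _ ≤ bb q m * bb q n * ((‖zpowCLM T m‖ * ‖zpowCLM T n‖)^2 * ‖G‖) := by
          apply mul_le_mul_of_nonneg_left _ (by positivity)
          exact mul_le_mul_of_nonneg_right
            (pow_le_pow_left₀ (norm_nonneg _) (hPn m n) 2) (norm_nonneg G)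
    _ = (bb q m * ‖zpowCLM T m‖^2) * ((bb q n * ‖zpowCLM T n‖^2) * ‖G‖) := by ring
    _ ≤ (K * ρ ^ m.natAbs) * ((K * ρ ^ n.natAbs) * ‖G‖) := by
          apply mul_le_mul hb1 (mul_le_mul_of_nonneg_right hb2 (norm_nonneg G))
            (by positivity) (by positivity)
    _ = (K * ρ ^ m.natAbs) * ((K * ‖G‖) * ρ ^ n.natAbs) := by ring
  -- central identity
  have central : (C' : ℂ) • ∑' p : ℤ × ℤ, (bbC p.1 * cC p.2) • RR (p.1 + p.2) = G := by
    set F : ℤ × ℤ → M →L[ℂ] M := fun p => (bbC p.1 * cC p.2) • RR (p.1 + p.2) with hFdef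
    have hF : Summable F := (hFnorm bbC cC habs_bbC habs_cC).of_norm
    have h1 : ∑' p, F p = ∑' p, F (eDelta p) := (eDelta.tsum_eq F).symm
    have hFd : Summable (fun p => F (eDelta p)) := (eDelta.summable_iff).mpr hF
    have h2 : HasSum (fun N => ∑' n, F (eDelta (N, n))) (∑' p, F (eDelta p)) :=
      hFd.hasSum.prod_fiberwise (fun b => (hFd.prod_factor b).hasSum)
    have hinner : ∀ N : ℤ, (∑' n : ℤ, F (eDelta (N, n)))
        = ((∑' n : ℤ, eps n * (bb q n * bb q (N - n)) : ℝ) : ℂ) • RR N := by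
      intro N
      have hterm' : ∀ n : ℤ, F (eDelta (N, n))
          = ((eps n * (bb q n * bb q (N - n)) : ℝ) : ℂ) • RR N := by
        intro n
        show (bbC (N - n) * cC n) • RR (N - n + n) = _
        rw [sub_add_cancel]
        congr 1
        show ((bb q (N - n) : ℝ) : ℂ) * ((eps n * bb q n : ℝ) : ℂ) = _
        rw [← Complex.ofReal_mul]
        congr 1
        ring
      rw [tsum_congr hterm',
        Summable.tsum_smul_const (Complex.summable_ofReal.mpr (summable_eps_bb_mul hq N))]
      congr 1
      exact (Complex.ofReal_tsum _).symm
    have h3 : ∑' N : ℤ, ∑' n : ℤ, F (eDelta (N, n))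
        = ((∑' n : ℤ, eps n * (bb q n * bb q (0 - n)) : ℝ) : ℂ) • RR 0 := by
      rw [tsum_congr hinner]
      apply tsum_eq_single
      intro N hN
      rw [sN_zero hq hN]
      simp
    have hRR0 : RR 0 = G := by
      show zpowCLM T 0 ∘L G ∘L adjoint (zpowCLM T 0) = G
      rw [zpowCLM_zero' hU, one_def, adjoint_id]
      ext x
      rfl
    have hall : ∑' p, F p
        = ((∑' n : ℤ, eps n * (bb q n * bb q (0 - n)) : ℝ) : ℂ) • G := by
      rw [h1, ← h2.tsum_eq, h3, hRR0]
    rw [hall, smul_smul, ← Complex.ofReal_mul, Cs0 hq C' hC', Complex.ofReal_one, one_smul]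
  refine ⟨hS1, hS2, ?_, ?_⟩
  · -- k(1/k) = G
    have hXeq : invkerCal q C' T G = (C' : ℂ) • ∑' n, cC n • RR n := by
      rw [invkerCal]
      congr 1
      apply tsum_congr
      intro n
      rw [heANN n G, smul_smul]
      congr 1
      show (-1 : ℂ) ^ n * ((bb q n : ℝ) : ℂ) = ((eps n * bb q n : ℝ) : ℂ)
      rw [Complex.ofReal_mul]
      congr 1
      rw [show ((eps n : ℝ) : ℂ) = ((-1 : ℝ) : ℂ) ^ n from by rw [eps, Complex.ofReal_zpow],
        Complex.ofReal_neg, Complex.ofReal_one]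
    set F : ℤ × ℤ → M →L[ℂ] M := fun p => (bbC p.1 * cC p.2) • RR (p.1 + p.2) with hFdef
    have hF : Summable F := (hFnorm bbC cC habs_bbC habs_cC).of_norm
    have hfib : HasSum (fun m => ∑' n, F (m, n)) (∑' p, F p) :=
      hF.hasSum.prod_fiberwise (fun b => (hF.prod_factor b).hasSum)
    have hterm2 : ∀ m : ℤ, annOp q T m ∘L (invkerCal q C' T G) ∘L adjoint (annOp q T m)
        = (C' : ℂ) • ∑' n, F (m, n) := by
      intro m
      rw [heANN m _, hXeq, ← hφ m, map_smul, (φ m).map_tsum (hsum0 cC habs_cC)]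
      have hterm3 : ∀ n : ℤ, φ m (cC n • RR n) = cC n • RR (m + n) := by
        intro n
        rw [map_smul, hφRR]
      rw [tsum_congr hterm3, smul_comm]
      congr 1
      rw [← Summable.tsum_const_smul (bbC m) (hsum_shift cC habs_cC m)]
      apply tsum_congr
      intro n
      rw [smul_smul]
    rw [kerCal, tsum_congr hterm2,
      Summable.tsum_const_smul ((C' : ℂ)) (hfib.summable), hfib.tsum_eq]
    exact central
  · -- (1/k)k = G
    have hKeq : kerCal q T G = ∑' m, bbC m • RR m := by
      rw [kerCal]
      exact tsum_congr fun m => heANN m G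
    set F : ℤ × ℤ → M →L[ℂ] M := fun p => (bbC p.1 * cC p.2) • RR (p.1 + p.2) with hFdef
    have hF : Summable F := (hFnorm bbC cC habs_bbC habs_cC).of_norm
    set F2 : ℤ × ℤ → M →L[ℂ] M := fun p => (cC p.1 * bbC p.2) • RR (p.1 + p.2) with hF2def
    have hF2 : Summable F2 := (hFnorm cC bbC habs_cC habs_bbC).of_norm
    have hfib2 : HasSum (fun n => ∑' m, F2 (n, m)) (∑' p, F2 p) :=
      hF2.hasSum.prod_fiberwise (fun b => (hF2.prod_factor b).hasSum)
    have hterm2 : ∀ n : ℤ, ((-1 : ℂ) ^ n) • (annOp q T n ∘L (kerCal q T G) ∘L adjoint (annOp q T n))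
        = ∑' m, F2 (n, m) := by
      intro n
      rw [heANN n _, smul_smul]
      have hco : (-1 : ℂ) ^ n * bbC n = cC n := by
        show (-1 : ℂ) ^ n * ((bb q n : ℝ) : ℂ) = ((eps n * bb q n : ℝ) : ℂ)
        rw [Complex.ofReal_mul]
        congr 1
        rw [show ((eps n : ℝ) : ℂ) = ((-1 : ℝ) : ℂ) ^ n from by rw [eps, Complex.ofReal_zpow],
          Complex.ofReal_neg, Complex.ofReal_one]
      rw [hco, hKeq, ← hφ n, (φ n).map_tsum (hsum0 bbC habs_bbC)]
      have hterm3 : ∀ m : ℤ, φ n (bbC m • RR m) = bbC m • RR (n + m) := by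
        intro m
        rw [map_smul, hφRR]
      rw [tsum_congr hterm3, ← Summable.tsum_const_smul (cC n) (hsum_shift bbC habs_bbC n)]
      apply tsum_congr
      intro m
      rw [smul_smul]
    have hswap : ∑' p, F2 p = ∑' p, F p := by
      have h1 : ∀ p : ℤ × ℤ, F2 p = F ((Equiv.prodComm ℤ ℤ) p) := by
        rintro ⟨a, b⟩
        show (cC a * bbC b) • RR (a + b) = (bbC b * cC a) • RR (b + a)
        rw [mul_comm, add_comm]
      rw [tsum_congr h1]
      exact (Equiv.prodComm ℤ ℤ).tsum_eq F
    rw [invkerCal, tsum_congr hterm2, hfib2.tsum_eq, hswap]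
    exact central
end

section
/- If (G_i) is a net of bounded operators on M which is bounded in operator norm and converges to G in the weak operator topology, then k(T,T*)(G_i) converges to k(T,T*)(G) in the weak operator topology, and (1/k)(T,T*)(G_i) converges to (1/k)(T,T*)(G) in the weak operator topology. -/
open ContinuousLinearMap

variable {M : Type*} [NormedAddCommGroup M] [InnerProductSpace ℂ M] [CompleteSpace M]

open Filter in
/-- If the spectral radius of `a` is `< r`, then eventually `‖a ^ n‖ ≤ r ^ n`. -/
lemma aux_pow_bound {A : Type*} [NormedRing A] [NormedAlgebra ℂ A] [CompleteSpace A]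
    (a : A) {r : ℝ} (hr0 : 0 ≤ r) (hr : spectralRadius ℂ a < ENNReal.ofReal r) :
    ∀ᶠ n : ℕ in atTop, ‖a ^ n‖ ≤ r ^ n := by
  have h := spectrum.pow_nnnorm_pow_one_div_tendsto_nhds_spectralRadius a
  have h2 : ∀ᶠ n : ℕ in atTop, (‖a ^ n‖₊ : ENNReal) ^ (1 / (n : ℝ)) < ENNReal.ofReal r :=
    h.eventually_lt_const hr
  filter_upwards [h2, eventually_ge_atTop 1] with n hn hn1
  have hne : ((n : ℝ)) ≠ 0 := Nat.cast_ne_zero.mpr (by omega)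
  have hx : (‖a ^ n‖₊ : ENNReal) ≤ (ENNReal.ofReal r) ^ n := by
    have h3 := ENNReal.rpow_le_rpow hn.le (Nat.cast_nonneg n : (0 : ℝ) ≤ (n : ℝ))
    rwa [← ENNReal.rpow_mul, one_div, inv_mul_cancel₀ hne, ENNReal.rpow_one,
      ENNReal.rpow_natCast] at h3
  rw [ENNReal.ofReal, ← ENNReal.coe_pow, ENNReal.coe_le_coe] at hx
  calc ‖a ^ n‖ = ((‖a ^ n‖₊ : ℝ)) := rfl
    _ ≤ ((r.toNNReal ^ n : NNReal) : ℝ) := by exact_mod_cast hx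
    _ = r ^ n := by rw [NNReal.coe_pow, Real.coe_toNNReal _ hr0]

open Filter in
lemma summable_annOp_sq (q : ℝ) (hq : q ∈ Set.Ioo (0 : ℝ) 1) [Nontrivial M] (T : M →L[ℂ] M)
    (hT : spectrum ℂ T ⊆ annulus q) : Summable (fun n : ℤ => ‖annOp q T n‖ ^ 2) := by
  have hq0 : 0 < q := hq.1
  haveI : Nontrivial (M →L[ℂ] M) :=
    nontrivial_of_ne (1 : M →L[ℂ] M) 0 (fun h => by simpa using congrArg norm h)
  -- T is a unit
  have h0 : (0 : ℂ) ∉ spectrum ℂ T := by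
    intro h
    have h1 := (hT h).1
    rw [norm_zero] at h1
    linarith
  have hTu : IsUnit T := spectrum.isUnit_of_zero_notMem ℂ h0
  obtain ⟨u, hu⟩ := hTu
  have hinv : Ring.inverse T = ((u⁻¹ : (M →L[ℂ] M)ˣ) : M →L[ℂ] M) := by
    rw [← hu, Ring.inverse_unit]
  -- bound on spectrum of T
  obtain ⟨w0, hw0mem, hw0max⟩ :=
    (spectrum.isCompact T).exists_isMaxOn (spectrum.nonempty T)
      continuous_norm.continuousOn
  set ρ : ℝ := (‖w0‖ + 1) / 2 with hρ
  have hw0nonneg : 0 ≤ ‖w0‖ := norm_nonneg w0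
  have hw01 : ‖w0‖ < 1 := (hT hw0mem).2
  have hρ0 : 0 ≤ ρ := by rw [hρ]; linarith
  have hρ1 : ρ < 1 := by rw [hρ]; linarith
  have hw0ρ : ‖w0‖ < ρ := by rw [hρ]; linarith
  have hsprT : spectralRadius ℂ T < ENNReal.ofReal ρ := by
    rw [ENNReal.ofReal]
    apply spectrum.spectralRadius_lt_of_forall_lt
    intro z hz
    rw [← NNReal.coe_lt_coe, Real.coe_toNNReal _ hρ0, coe_nnnorm]
    exact lt_of_le_of_lt (isMaxOn_iff.mp hw0max z hz) hw0ρ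
  have hev1 := aux_pow_bound T hρ0 hsprT
  -- bound on spectrum of the inverse
  obtain ⟨z0, hz0mem, hz0max⟩ :=
    (spectrum.isCompact ((u⁻¹ : (M →L[ℂ] M)ˣ) : M →L[ℂ] M)).exists_isMaxOn
      (spectrum.nonempty _) continuous_norm.continuousOn
  have hz0inv : z0⁻¹ ∈ spectrum ℂ T := by
    have h2 : z0 ∈ (spectrum ℂ ((u : M →L[ℂ] M)))⁻¹ := by
      rw [spectrum.map_inv]; exact hz0mem
    rw [Set.mem_inv] at h2
    rwa [hu] at h2
  have hq' : q < ‖z0‖⁻¹ := by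
    have := (hT hz0inv).1
    rwa [norm_inv] at this
  have hz0lt : ‖z0‖ < q⁻¹ := by
    have h3 := inv_strictAnti₀ hq0 hq'
    rwa [inv_inv] at h3
  set σr : ℝ := (‖z0‖ + q⁻¹) / 2 with hσr
  have hz0nonneg : 0 ≤ ‖z0‖ := norm_nonneg z0
  have hqinvpos : 0 < q⁻¹ := inv_pos.mpr hq0
  have hσr0 : 0 ≤ σr := by rw [hσr]; linarith
  have hz0σr : ‖z0‖ < σr := by rw [hσr]; linarith
  have hσrlt : σr < q⁻¹ := by rw [hσr]; linarith
  have hqσr : q * σr < 1 := by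
    calc q * σr < q * q⁻¹ := by
          exact mul_lt_mul_of_pos_left hσrlt hq0
      _ = 1 := mul_inv_cancel₀ hq0.ne'
  have hqσr0 : 0 ≤ q * σr := mul_nonneg hq0.le hσr0
  have hsprInv : spectralRadius ℂ ((u⁻¹ : (M →L[ℂ] M)ˣ) : M →L[ℂ] M) < ENNReal.ofReal σr := by
    rw [ENNReal.ofReal]
    apply spectrum.spectralRadius_lt_of_forall_lt
    intro z hz
    rw [← NNReal.coe_lt_coe, Real.coe_toNNReal _ hσr0, coe_nnnorm]
    exact lt_of_le_of_lt (isMaxOn_iff.mp hz0max z hz) hz0σr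
  have hev2 := aux_pow_bound ((u⁻¹ : (M →L[ℂ] M)ˣ) : M →L[ℂ] M) hσr0 hsprInv
  -- summability over ℤ via both halves
  apply Summable.of_nat_of_neg
  · -- nonnegative side
    apply Summable.of_norm_bounded_eventually_nat (g := fun n => (ρ ^ 2) ^ n)
      (summable_geometric_of_lt_one (by positivity) (by nlinarith))
    filter_upwards [hev1] with n hn
    have h1 : ‖annOp q T (n : ℤ)‖ ≤ ρ ^ n := by
      have hz : zpowCLM T (n : ℤ) = T ^ n := by
        simp only [zpowCLM, if_pos (Int.natCast_nonneg n), Int.toNat_natCast]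
      simp only [annOp, norm_smul, hz]
      have hc1 : ‖((((Real.sqrt (1 + q ^ (2 * (n : ℤ))))⁻¹ : ℝ)) : ℂ)‖ ≤ 1 := by
        rw [Complex.norm_real, Real.norm_eq_abs,
          abs_of_nonneg (inv_nonneg.mpr (Real.sqrt_nonneg _))]
        have hle : (1 : ℝ) ≤ Real.sqrt (1 + q ^ (2 * (n : ℤ))) := by
          have h4 : (1 : ℝ) ≤ 1 + q ^ (2 * (n : ℤ)) :=
            le_add_of_nonneg_right (zpow_pos hq0 _).le
          calc (1 : ℝ) = Real.sqrt 1 := Real.sqrt_one.symm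
            _ ≤ _ := Real.sqrt_le_sqrt h4
        exact inv_le_one_of_one_le₀ hle
      calc _ ≤ 1 * ‖T ^ n‖ := mul_le_mul_of_nonneg_right hc1 (norm_nonneg _)
        _ = ‖T ^ n‖ := one_mul _
        _ ≤ ρ ^ n := hn
    rw [Real.norm_eq_abs, abs_of_nonneg (by positivity)]
    calc ‖annOp q T (n : ℤ)‖ ^ 2 ≤ (ρ ^ n) ^ 2 := pow_le_pow_left₀ (norm_nonneg _) h1 2
      _ = (ρ ^ 2) ^ n := by rw [← pow_mul, mul_comm n 2, pow_mul]
  · -- negative side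
    apply Summable.of_norm_bounded_eventually_nat (g := fun m => ((q * σr) ^ 2) ^ m)
      (summable_geometric_of_lt_one (by positivity) (by nlinarith))
    filter_upwards [hev2, eventually_ge_atTop 1] with m hm hm1
    have h1 : ‖annOp q T (-(m : ℤ))‖ ≤ (q * σr) ^ m := by
      have hz : zpowCLM T (-(m : ℤ)) = ((u⁻¹ : (M →L[ℂ] M)ˣ) : M →L[ℂ] M) ^ m := by
        rw [zpowCLM, if_neg (by omega), hinv, neg_neg, Int.toNat_natCast]
      simp only [annOp, norm_smul, hz]
      have hc1 : ‖((((Real.sqrt (1 + q ^ (2 * (-(m : ℤ)))))⁻¹ : ℝ)) : ℂ)‖ ≤ q ^ m := by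
        rw [Complex.norm_real, Real.norm_eq_abs,
          abs_of_nonneg (inv_nonneg.mpr (Real.sqrt_nonneg _))]
        have hxpos : (0 : ℝ) < q ^ (-(m : ℤ)) := zpow_pos hq0 _
        have hsq : q ^ (-(m : ℤ)) ≤ Real.sqrt (1 + q ^ (2 * (-(m : ℤ)))) := by
          have h2 : q ^ (2 * (-(m : ℤ))) = (q ^ (-(m : ℤ))) ^ 2 := by
            rw [mul_comm, zpow_mul, zpow_two, sq]
          rw [h2]
          calc q ^ (-(m : ℤ)) = Real.sqrt ((q ^ (-(m : ℤ))) ^ 2) :=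
                (Real.sqrt_sq hxpos.le).symm
            _ ≤ _ := Real.sqrt_le_sqrt (by linarith)
        have h5 := inv_anti₀ hxpos hsq
        rwa [← zpow_neg, neg_neg, zpow_natCast] at h5
      calc _ ≤ q ^ m * σr ^ m :=
            mul_le_mul hc1 hm (norm_nonneg _) (by positivity)
        _ = (q * σr) ^ m := (mul_pow _ _ _).symm
    rw [Real.norm_eq_abs, abs_of_nonneg (by positivity)]
    calc ‖annOp q T (-(m : ℤ))‖ ^ 2 ≤ ((q * σr) ^ m) ^ 2 :=
          pow_le_pow_left₀ (norm_nonneg _) h1 2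
      _ = ((q * σr) ^ 2) ^ m := by rw [← pow_mul, mul_comm m 2, pow_mul]

lemma hasSum_inner_aux {F : ℤ → M →L[ℂ] M} {S : M →L[ℂ] M} (h : HasSum F S) (x y : M) :
    HasSum (fun n => (inner ℂ (F n x) y : ℂ)) (inner ℂ (S x) y) := by
  let φ : (M →L[ℂ] M) →+ ℂ := AddMonoidHom.mk' (fun A => (inner ℂ (A x) y : ℂ))
    (fun A B => by simp [ContinuousLinearMap.add_apply, inner_add_left])
  have h1 : Continuous fun A : M →L[ℂ] M => A x := (ContinuousLinearMap.apply ℂ M x).continuous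
  have hφ : Continuous φ := h1.inner continuous_const
  exact h.map φ hφ

/-- WOT-continuity of the maps `G ↦ k(T,T^*)(G)` and `G ↦ (1/k)(T,T^*)(G)` on
norm-bounded nets: if a norm-bounded net `Gnet` converges to `G` in the weak
operator topology, so do `k(T,T^*)(Gnet i)` to `k(T,T^*)(G)` and
`(1/k)(T,T^*)(Gnet i)` to `(1/k)(T,T^*)(G)`. -/
theorem stmt5 (q : ℝ) (hq : q ∈ Set.Ioo (0 : ℝ) 1)
    (C' : ℝ) (hC'pos : 0 < C')
    (hC' : ∀ z w : ℂ, z ∈ annulus q → w ∈ annulus q →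
      (C' : ℂ) * annKer q z w * annKer q z (-w) = 1)
    (T : M →L[ℂ] M) (hT : spectrum ℂ T ⊆ annulus q)
    {ι : Type*} (l : Filter ι) (Gnet : ι → (M →L[ℂ] M)) (G : M →L[ℂ] M)
    (hbdd : ∃ C : ℝ, ∀ i : ι, ‖Gnet i‖ ≤ C)
    (hwot : ∀ x y : M,
      Filter.Tendsto (fun i => (inner ℂ (Gnet i x) y : ℂ)) l (nhds (inner ℂ (G x) y))) :
    (∀ x y : M,
      Filter.Tendsto (fun i => (inner ℂ (kerCal q T (Gnet i) x) y : ℂ)) l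
        (nhds (inner ℂ (kerCal q T G x) y))) ∧
    (∀ x y : M,
      Filter.Tendsto (fun i => (inner ℂ (invkerCal q C' T (Gnet i) x) y : ℂ)) l
        (nhds (inner ℂ (invkerCal q C' T G x) y))) := by
  rcases subsingleton_or_nontrivial M with hM | hM
  · have h0 : ∀ (A : M →L[ℂ] M) (x y : M), (inner ℂ (A x) y : ℂ) = 0 := fun A x y => by
      rw [Subsingleton.elim (A x) 0, inner_zero_left]
    constructor <;> intro x y <;> simp only [h0] <;> exact tendsto_const_nhds
  · obtain ⟨C, hC⟩ := hbdd
    set C0 : ℝ := max C 0 with hC0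
    have hC0nonneg : 0 ≤ C0 := le_max_right _ _
    have hCle : ∀ i, ‖Gnet i‖ ≤ C0 := fun i => (hC i).trans (le_max_left _ _)
    have hb := summable_annOp_sq q hq T hT
    have hopn : ∀ (A : M →L[ℂ] M) (n : ℤ),
        ‖annOp q T n ∘L A ∘L adjoint (annOp q T n)‖ ≤ ‖annOp q T n‖ ^ 2 * ‖A‖ := by
      intro A n
      calc ‖annOp q T n ∘L A ∘L adjoint (annOp q T n)‖
          ≤ ‖annOp q T n‖ * ‖A ∘L adjoint (annOp q T n)‖ := opNorm_comp_le _ _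
        _ ≤ ‖annOp q T n‖ * (‖A‖ * ‖adjoint (annOp q T n)‖) := by
            apply mul_le_mul_of_nonneg_left (opNorm_comp_le _ _) (norm_nonneg _)
        _ = ‖annOp q T n‖ ^ 2 * ‖A‖ := by
            rw [LinearIsometryEquiv.norm_map]; ring
    have hGs : ∀ A : M →L[ℂ] M,
        Summable (fun n : ℤ => annOp q T n ∘L A ∘L adjoint (annOp q T n)) := by
      intro A
      apply Summable.of_norm_bounded (g := fun n => ‖annOp q T n‖ ^ 2 * ‖A‖) (hb.mul_right _)
      intro n
      exact hopn A n
    have hneg1 : ∀ n : ℤ, ‖((-1 : ℂ) ^ n)‖ = 1 := fun n => by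
      rw [norm_zpow, norm_neg, norm_one, one_zpow]
    have hGs' : ∀ A : M →L[ℂ] M,
        Summable (fun n : ℤ =>
          ((-1 : ℂ) ^ n) • (annOp q T n ∘L A ∘L adjoint (annOp q T n))) := by
      intro A
      apply Summable.of_norm_bounded (g := fun n => ‖annOp q T n‖ ^ 2 * ‖A‖) (hb.mul_right _)
      intro n
      rw [norm_smul, hneg1, one_mul]
      exact hopn A n
    -- representation of the inner products as sums
    have hrep : ∀ (A : M →L[ℂ] M) (x y : M), (inner ℂ (kerCal q T A x) y : ℂ)
        = ∑' n : ℤ, (inner ℂ ((annOp q T n ∘L A ∘L adjoint (annOp q T n)) x) y : ℂ) :=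
      fun A x y => (hasSum_inner_aux (hGs A).hasSum x y).tsum_eq.symm
    have hrep2 : ∀ (A : M →L[ℂ] M) (x y : M), (inner ℂ (invkerCal q C' T A x) y : ℂ)
        = (C' : ℂ) * ∑' n : ℤ,
          (inner ℂ ((((-1 : ℂ) ^ n) • (annOp q T n ∘L A ∘L adjoint (annOp q T n))) x) y : ℂ) := by
      intro A x y
      rw [invkerCal, ContinuousLinearMap.smul_apply, inner_smul_left, Complex.conj_ofReal]
      congr 1
      exact (hasSum_inner_aux (hGs' A).hasSum x y).tsum_eq.symm
    -- per-term limits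
    have hterm : ∀ (A : M →L[ℂ] M) (n : ℤ) (x y : M),
        (inner ℂ ((annOp q T n ∘L A ∘L adjoint (annOp q T n)) x) y : ℂ)
          = inner ℂ (A (adjoint (annOp q T n) x)) (adjoint (annOp q T n) y) := by
      intro A n x y
      rw [ContinuousLinearMap.comp_apply, ContinuousLinearMap.comp_apply,
        ← ContinuousLinearMap.adjoint_inner_right]
    -- bounds
    have hbound : ∀ (i : ι) (n : ℤ) (x y : M),
        ‖(inner ℂ ((annOp q T n ∘L Gnet i ∘L adjoint (annOp q T n)) x) y : ℂ)‖
          ≤ ‖annOp q T n‖ ^ 2 * (C0 * (‖x‖ * ‖y‖)) := by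
      intro i n x y
      calc ‖(inner ℂ ((annOp q T n ∘L Gnet i ∘L adjoint (annOp q T n)) x) y : ℂ)‖
          ≤ ‖(annOp q T n ∘L Gnet i ∘L adjoint (annOp q T n)) x‖ * ‖y‖ :=
            norm_inner_le_norm _ _
        _ ≤ (‖annOp q T n ∘L Gnet i ∘L adjoint (annOp q T n)‖ * ‖x‖) * ‖y‖ :=
            mul_le_mul_of_nonneg_right (le_opNorm _ _) (norm_nonneg _)
        _ ≤ ((‖annOp q T n‖ ^ 2 * C0) * ‖x‖) * ‖y‖ := by
            apply mul_le_mul_of_nonneg_right _ (norm_nonneg _)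
            apply mul_le_mul_of_nonneg_right _ (norm_nonneg _)
            exact (hopn _ n).trans
              (mul_le_mul_of_nonneg_left (hCle i) (by positivity))
        _ = ‖annOp q T n‖ ^ 2 * (C0 * (‖x‖ * ‖y‖)) := by ring
    -- the main dominated-convergence limit for the unsigned sums
    have hmain : ∀ x y : M,
        Filter.Tendsto
          (fun i => ∑' n : ℤ,
            (inner ℂ ((annOp q T n ∘L Gnet i ∘L adjoint (annOp q T n)) x) y : ℂ)) l
          (nhds (∑' n : ℤ,
            (inner ℂ ((annOp q T n ∘L G ∘L adjoint (annOp q T n)) x) y : ℂ))) := by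
      intro x y
      apply tendsto_tsum_of_dominated_convergence
        (bound := fun n : ℤ => ‖annOp q T n‖ ^ 2 * (C0 * (‖x‖ * ‖y‖)))
      · exact hb.mul_right _
      · intro n
        simp only [hterm]
        exact hwot _ _
      · exact Filter.Eventually.of_forall fun i n => hbound i n x y
    have hmain2 : ∀ x y : M,
        Filter.Tendsto
          (fun i => ∑' n : ℤ,
            (inner ℂ ((((-1 : ℂ) ^ n) •
              (annOp q T n ∘L Gnet i ∘L adjoint (annOp q T n))) x) y : ℂ)) l
          (nhds (∑' n : ℤ,
            (inner ℂ ((((-1 : ℂ) ^ n) •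
              (annOp q T n ∘L G ∘L adjoint (annOp q T n))) x) y : ℂ))) := by
      intro x y
      apply tendsto_tsum_of_dominated_convergence
        (bound := fun n : ℤ => ‖annOp q T n‖ ^ 2 * (C0 * (‖x‖ * ‖y‖)))
      · exact hb.mul_right _
      · intro n
        simp only [ContinuousLinearMap.smul_apply, inner_smul_left, hterm]
        exact Filter.Tendsto.const_mul _ (hwot _ _)
      · apply Filter.Eventually.of_forall
        intro i n
        simp only [ContinuousLinearMap.smul_apply, inner_smul_left, norm_mul,
          RingHomIsometric.norm_map]
        calc ‖((-1 : ℂ) ^ n)‖ *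
              ‖(inner ℂ ((annOp q T n ∘L Gnet i ∘L adjoint (annOp q T n)) x) y : ℂ)‖
            = ‖(inner ℂ ((annOp q T n ∘L Gnet i ∘L adjoint (annOp q T n)) x) y : ℂ)‖ := by
              rw [hneg1, one_mul]
          _ ≤ _ := hbound i n x y
    constructor
    · intro x y
      simp only [hrep]
      exact hmain x y
    · intro x y
      simp only [hrep2]
      exact Filter.Tendsto.const_mul _ (hmain2 x y)
end

section
/- If R : M → H is a bounded operator satisfying ∑_{n∈ℤ} ‖R T_n* h‖² = ‖h‖² for every h ∈ M, then Vh := (R T_n* h)_{n∈ℤ} defines an isometry V : M → ℓ²(ℤ,H) satisfying V∘T* = S_H*∘V (a lifting of T); moreover, for every m ∈ ℤ and g ∈ H one has V*(e_m g) = T_m R* g, where e_m g ∈ ℓ²(ℤ,H) denotes the sequence equal to g at index m and 0 at every other index. -/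
open ContinuousLinearMap
open scoped ENNReal ComplexInnerProductSpace

variable {M : Type*} [NormedAddCommGroup M] [InnerProductSpace ℂ M] [CompleteSpace M]

lemma zpowCLM_unit (T : M →L[ℂ] M) (u : (M →L[ℂ] M)ˣ) (hu : (u : M →L[ℂ] M) = T) (n : ℤ) :
    zpowCLM T n = ((u ^ n : (M →L[ℂ] M)ˣ) : M →L[ℂ] M) := by
  unfold zpowCLM
  split_ifs with h
  · rw [← hu, ← Units.val_pow_eq_pow_val, ← zpow_natCast, Int.toNat_of_nonneg h]
  · rw [← hu, Ring.inverse_unit, ← Units.val_pow_eq_pow_val, ← zpow_natCast,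
      Int.toNat_of_nonneg (by omega), zpow_neg, inv_zpow, inv_inv]

variable {H : Type*} [NormedAddCommGroup H] [InnerProductSpace ℂ H] [CompleteSpace H]

/-- If `R : M → H` satisfies `∑_{n ∈ ℤ} ‖R T_n^* h‖² = ‖h‖²` for all `h`, then
`Vh := (R T_n^* h)_{n ∈ ℤ}` defines an isometric lifting of `T`, and
`V^*(e_m g) = T_m R^* g` for all `m ∈ ℤ`, `g ∈ H`. -/
theorem stmt7 (q : ℝ) (hq : q ∈ Set.Ioo (0 : ℝ) 1)
    (T : M →L[ℂ] M) (hT : spectrum ℂ T ⊆ annulus q)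
    (S : lp (fun _ : ℤ => H) 2 →L[ℂ] lp (fun _ : ℤ => H) 2)
    (hS : ∀ (x : lp (fun _ : ℤ => H) 2) (n : ℤ),
      (S x) n = ((Real.sqrt ((1 + q ^ (2 * n)) / (1 + q ^ (2 * n - 2))) : ℝ) : ℂ) • x (n - 1))
    (R : M →L[ℂ] H)
    (hR : ∀ h : M, HasSum (fun n : ℤ => ‖R (adjoint (annOp q T n) h)‖ ^ 2) (‖h‖ ^ 2)) :
    ∃ V : M →L[ℂ] lp (fun _ : ℤ => H) 2,
      (∀ (h : M) (n : ℤ), (V h) n = R (adjoint (annOp q T n) h)) ∧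
      Isometry V ∧
      V ∘L adjoint T = adjoint S ∘L V ∧
      (∀ (m : ℤ) (g : H), adjoint V (lp.single 2 m g) = annOp q T m (adjoint R g)) := by
  obtain ⟨hq0, hq1⟩ := hq
  -- `T` is invertible
  have hu0 : IsUnit T := by
    rw [← spectrum.zero_notMem_iff ℂ]
    intro h0
    have := (hT h0).1
    simp only [map_zero, norm_zero] at this
    linarith
  obtain ⟨u, hu⟩ := hu0
  have hpos : ∀ n : ℤ, (0 : ℝ) < 1 + q ^ n := fun n => by
    have := zpow_pos hq0 n; linarith
  -- the coefficient appearing in `S`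
  set c : ℤ → ℝ := fun n => Real.sqrt ((1 + q ^ (2 * n)) / (1 + q ^ (2 * n - 2))) with hc
  -- the key operator identity `T ∘ T_n = c (n+1) • T_{n+1}`
  have hop : ∀ n : ℤ, T ∘L annOp q T n = ((c (n + 1) : ℝ) : ℂ) • annOp q T (n + 1) := by
    intro n
    have hcoef : (Real.sqrt (1 + q ^ (2 * n)))⁻¹
        = c (n + 1) * (Real.sqrt (1 + q ^ (2 * (n + 1))))⁻¹ := by
      have h1 : 2 * (n + 1) - 2 = 2 * n := by ring
      simp only [hc, h1]
      rw [Real.sqrt_div (hpos _).le, div_mul_eq_mul_div,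
        mul_inv_cancel₀ (Real.sqrt_pos.mpr (hpos _)).ne', one_div]
    have hTe : T ∘L ((u ^ n : (M →L[ℂ] M)ˣ) : M →L[ℂ] M)
        = ((u ^ (n + 1) : (M →L[ℂ] M)ˣ) : M →L[ℂ] M) := by
      rw [add_comm, zpow_one_add, Units.val_mul, hu]; rfl
    unfold annOp
    rw [zpowCLM_unit T u hu, zpowCLM_unit T u hu, comp_smulₛₗ, hTe, smul_smul,
      ← Complex.ofReal_mul, ← hcoef]
    simp
  -- pointwise adjoint version
  have hadj : ∀ (n : ℤ) (h : M), adjoint (annOp q T n) (adjoint T h)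
      = ((c (n + 1) : ℝ) : ℂ) • adjoint (annOp q T (n + 1)) h := by
    intro n h
    have h1 := congrArg adjoint (hop n)
    rw [adjoint_comp] at h1
    have h2 : adjoint (((c (n + 1) : ℝ) : ℂ) • annOp q T (n + 1))
        = ((c (n + 1) : ℝ) : ℂ) • adjoint (annOp q T (n + 1)) := by
      rw [← star_eq_adjoint, ← star_eq_adjoint, star_smul, Complex.star_def,
        Complex.conj_ofReal]
    rw [h2] at h1
    calc adjoint (annOp q T n) (adjoint T h)
        = (adjoint (annOp q T n) ∘L adjoint T) h := rfl
      _ = (((c (n + 1) : ℝ) : ℂ) • adjoint (annOp q T (n + 1))) h := by rw [h1]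
      _ = ((c (n + 1) : ℝ) : ℂ) • adjoint (annOp q T (n + 1)) h := rfl
  -- construction of V
  have hmem : ∀ h : M, Memℓp (fun n : ℤ => R (adjoint (annOp q T n) h)) 2 := by
    intro h
    apply memℓp_gen
    have hs := (hR h).summable
    have h2 : ((2 : ℝ≥0∞)).toReal = ((2 : ℕ) : ℝ) := by norm_num
    rw [h2]
    simpa [Real.rpow_natCast] using hs
  let V₀ : M →ₗ[ℂ] lp (fun _ : ℤ => H) 2 :=
    { toFun := fun h => ⟨fun n => R (adjoint (annOp q T n) h), hmem h⟩
      map_add' := fun x y => lp.ext <| funext fun n => by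
        simp [lp.coeFn_add, map_add]
        rfl
      map_smul' := fun a x => lp.ext <| funext fun n => by
        simp [lp.coeFn_smul, map_smul] }
  have hVnorm : ∀ h : M, ‖V₀ h‖ = ‖h‖ := by
    intro h
    have h2 : (0 : ℝ) < (2 : ℝ≥0∞).toReal := by norm_num
    have hn := lp.norm_rpow_eq_tsum h2 (V₀ h)
    have h2' : ((2 : ℝ≥0∞)).toReal = ((2 : ℕ) : ℝ) := by norm_num
    rw [h2'] at hn
    simp only [Real.rpow_natCast] at hn
    have hn2 : ‖V₀ h‖ ^ (2 : ℕ) = ‖h‖ ^ 2 := hn.trans (hR h).tsum_eq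
    have h3 := congrArg Real.sqrt hn2
    rwa [Real.sqrt_sq (norm_nonneg _), Real.sqrt_sq (norm_nonneg _)] at h3
  let V : M →L[ℂ] lp (fun _ : ℤ => H) 2 :=
    V₀.mkContinuous 1 (fun h => by rw [hVnorm h, one_mul])
  have hVapp : ∀ (x : M) (n : ℤ), (V x) n = R (adjoint (annOp q T n) x) := fun x n => rfl
  -- computation of S on single vectors and adjoint of S
  have hSsingle : ∀ (n : ℤ) (g : H),
      S (lp.single 2 n g) = lp.single 2 (n + 1) (((c (n + 1) : ℝ) : ℂ) • g) := by
    intro n g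
    apply lp.ext
    funext m
    rw [hS]
    by_cases hm : m = n + 1
    · subst hm
      rw [lp.single_apply_self]
      have hmn : n + 1 - 1 = n := by ring
      rw [hmn, lp.single_apply_self, hc]
    · rw [lp.single_apply_ne _ _ _ hm, lp.single_apply_ne _ _ _ (by omega : m - 1 ≠ n),
        smul_zero]
  have hSadj : ∀ (y : lp (fun _ : ℤ => H) 2) (n : ℤ),
      (adjoint S y) n = ((c (n + 1) : ℝ) : ℂ) • y (n + 1) := by
    intro y n
    apply ext_inner_left ℂ
    intro g
    calc ⟪g, (adjoint S y) n⟫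
        = ⟪lp.single 2 n g, adjoint S y⟫ := (lp.inner_single_left (𝕜 := ℂ) (G := fun _ : ℤ => H) _ _ _).symm
      _ = ⟪S (lp.single 2 n g), y⟫ := adjoint_inner_right S _ _
      _ = ⟪lp.single 2 (n + 1) (((c (n + 1) : ℝ) : ℂ) • g), y⟫ := by rw [hSsingle]
      _ = ⟪((c (n + 1) : ℝ) : ℂ) • g, y (n + 1)⟫ := lp.inner_single_left (𝕜 := ℂ) (G := fun _ : ℤ => H) _ _ _
      _ = ⟪g, ((c (n + 1) : ℝ) : ℂ) • y (n + 1)⟫ := by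
          rw [inner_smul_left, inner_smul_right, Complex.conj_ofReal]
  refine ⟨V, hVapp, AddMonoidHomClass.isometry_of_norm V hVnorm, ?_, ?_⟩
  · -- intertwining
    refine ContinuousLinearMap.ext fun h => lp.ext (funext fun n => ?_)
    simp only [ContinuousLinearMap.comp_apply]
    rw [hSadj, hVapp, hVapp, hadj n h, map_smul]
  · -- adjoint of V on single vectors
    intro m g
    apply ext_inner_right ℂ
    intro h
    rw [adjoint_inner_left, lp.inner_single_left, hVapp, ← adjoint_inner_left R,
      adjoint_inner_right]
end

section
/- If F : 𝕋 → M and G : 𝕋 → M are both ν-admissible, then the net (P,S) ↦ ⟨F(P,S), G(P,S)⟩_ν converges: there exists L ∈ ℂ such that for every ε > 0 there is a finite Borel partition Q of 𝕋 with |⟨F(P,S), G(P,S)⟩_ν − L| < ε for every tagged partition (P,S) whose partition P refines Q. Moreover, every measurable simple function H = ∑_j 1_{ω_j}·c_j (where (ω_j) is a finite Borel partition of 𝕋 and c_j ∈ M) is ν-admissible. -/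
open ContinuousLinearMap

/-- The unit circle `𝕋 ⊆ ℂ` as a type, with its Borel σ-algebra (induced from `ℂ`). -/
abbrev Torus : Type := ↥(Metric.sphere (0 : ℂ) 1)

/-- A finite Borel partition of `X`. -/
structure BorelPartition (X : Type*) [MeasurableSpace X] where
  n : ℕ
  piece : Fin n → Set X
  meas : ∀ i, MeasurableSet (piece i)
  disj : Pairwise (Function.onFun Disjoint piece)
  cover : (⋃ i, piece i) = Set.univ

/-- A tagged finite Borel partition of `X`: a finite Borel partition together
with a tag `tag i ∈ piece i` for each piece. -/
structure TaggedPartition (X : Type*) [MeasurableSpace X] where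
  n : ℕ
  piece : Fin n → Set X
  meas : ∀ i, MeasurableSet (piece i)
  disj : Pairwise (Function.onFun Disjoint piece)
  cover : (⋃ i, piece i) = Set.univ
  tag : Fin n → X
  tag_mem : ∀ i, tag i ∈ piece i

/-- The (untagged) partition of a tagged partition `P` refines `Q`. -/
def TaggedPartition.Refines {X : Type*} [MeasurableSpace X]
    (P : TaggedPartition X) (Q : BorelPartition X) : Prop :=
  ∀ i : Fin P.n, ∃ j : Fin Q.n, P.piece i ⊆ Q.piece j

variable {M : Type*} [NormedAddCommGroup M] [InnerProductSpace ℂ M] [CompleteSpace M]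

/-- An operator-valued measure on `X`: positive operator values on Borel sets and
weak countable additivity. -/
structure OpMeasure (X : Type*) [MeasurableSpace X] (M : Type*) [NormedAddCommGroup M]
    [InnerProductSpace ℂ M] [CompleteSpace M] where
  toFun : Set X → (M →L[ℂ] M)
  pos : ∀ ω : Set X, MeasurableSet ω → (toFun ω).IsPositive
  countably_additive : ∀ (e f : M) (g : ℕ → Set X), (∀ k, MeasurableSet (g k)) →
    Pairwise (Function.onFun Disjoint g) →
    HasSum (fun k => (inner ℂ (toFun (g k) e) f : ℂ)) (inner ℂ (toFun (⋃ k, g k) e) f)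

/-- `⟨F(P,S), G(P,S)⟩_ν := ∑_j ⟨ν(ω_j) F(s_j), G(s_j)⟩`. -/
noncomputable def pairSumNu {X : Type*} [MeasurableSpace X]
    (ν : Set X → (M →L[ℂ] M)) (P : TaggedPartition X) (F G : X → M) : ℂ :=
  ∑ i : Fin P.n, (inner ℂ (ν (P.piece i) (F (P.tag i))) (G (P.tag i)) : ℂ)

/-- `‖F(P,S)‖_ν²`. -/
noncomputable def normSqNu {X : Type*} [MeasurableSpace X]
    (ν : Set X → (M →L[ℂ] M)) (P : TaggedPartition X) (F : X → M) : ℝ :=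
  (pairSumNu ν P F F).re

/-- `‖F(P,S) − F(P′,S′)‖_ν²` (the mixed-refinement square distance). -/
noncomputable def crossSqNu {X : Type*} [MeasurableSpace X]
    (ν : Set X → (M →L[ℂ] M)) (P P' : TaggedPartition X) (F : X → M) : ℝ :=
  ∑ i : Fin P.n, ∑ j : Fin P'.n,
    ((inner ℂ (ν (P.piece i ∩ P'.piece j) (F (P.tag i) - F (P'.tag j)))
        (F (P.tag i) - F (P'.tag j)) : ℂ)).re

/-- `F` is ν-admissible: the net of simple approximants `F(P,S)` is bounded and
Cauchy in the ν-seminorm. -/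
def NuAdmissible {X : Type*} [MeasurableSpace X]
    (ν : Set X → (M →L[ℂ] M)) (F : X → M) : Prop :=
  (∃ C : ℝ, ∀ P : TaggedPartition X, Real.sqrt (normSqNu ν P F) ≤ C) ∧
  ∀ ε : ℝ, 0 < ε → ∃ Q : BorelPartition X, ∀ P P' : TaggedPartition X,
    P.Refines Q → P'.Refines Q → Real.sqrt (crossSqNu ν P P' F) < ε

lemma posSA {T : M →L[ℂ] M} (hT : T.IsPositive) (a b : M) :
    (inner ℂ (T a) b : ℂ) = inner ℂ a (T b) := by
  have h := ContinuousLinearMap.adjoint_inner_left T b a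
  rwa [hT.isSelfAdjoint.adjoint_eq] at h

lemma pos_re_nonneg {T : M →L[ℂ] M} (hT : T.IsPositive) (x : M) :
    0 ≤ ((inner ℂ (T x) x : ℂ)).re := by
  have := hT.re_inner_nonneg_left x
  simpa using this

/-- Cauchy–Schwarz for a positive operator. -/
lemma posCS {T : M →L[ℂ] M} (hT : T.IsPositive) (x y : M) :
    ‖(inner ℂ (T x) y : ℂ)‖ ≤
      Real.sqrt ((inner ℂ (T x) x : ℂ)).re * Real.sqrt ((inner ℂ (T y) y : ℂ)).re := by
  let c : PreInnerProductSpace.Core ℂ M :=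
    { inner := fun a b => inner ℂ (T a) b
      conj_inner_symm := fun a b => by
        show (starRingEnd ℂ) (inner ℂ (T b) a) = inner ℂ (T a) b
        rw [inner_conj_symm]
        exact (posSA hT a b).symm
      re_inner_nonneg := fun a => hT.re_inner_nonneg_left a
      add_left := fun a b z => by simp [inner_add_left]
      smul_left := fun a b r => by simp [inner_smul_left, mul_comm] }
  have h := @InnerProductSpace.Core.inner_mul_inner_self_le ℂ M _ _ _ c x y
  have hswap : ‖(inner ℂ (T y) x : ℂ)‖ = ‖(inner ℂ (T x) y : ℂ)‖ := by
    rw [← inner_conj_symm, RCLike.norm_conj, posSA hT]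
  change ‖(inner ℂ (T x) y : ℂ)‖ * ‖(inner ℂ (T y) x : ℂ)‖ ≤
      RCLike.re (inner ℂ (T x) x : ℂ) * RCLike.re (inner ℂ (T y) y : ℂ) at h
  rw [hswap, ← sq] at h
  simp only [RCLike.re_to_complex] at h
  have h1 : ‖(inner ℂ (T x) y : ℂ)‖ = ‖(inner ℂ (T x) y : ℂ)‖ := rfl
  rw [h1, ← Real.sqrt_sq (norm_nonneg _), ← Real.sqrt_mul (pos_re_nonneg hT x)]
  exact Real.sqrt_le_sqrt h

variable {X : Type*} [MeasurableSpace X]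

lemma nu_empty (ν : OpMeasure X M) (e f : M) : (inner ℂ (ν.toFun ∅ e) f : ℂ) = 0 := by
  have h := ν.countably_additive e f (fun _ => ∅) (fun _ => MeasurableSet.empty)
    (fun i j hij => by simp [Function.onFun])
  simp only [Set.iUnion_empty] at h
  exact tendsto_nhds_unique tendsto_const_nhds h.summable.tendsto_atTop_zero

lemma nu_add (ν : OpMeasure X M) (e f : M) {ω ω' : Set X} (hω : MeasurableSet ω)
    (hω' : MeasurableSet ω') (hd : Disjoint ω ω') :
    (inner ℂ (ν.toFun (ω ∪ ω') e) f : ℂ) = inner ℂ (ν.toFun ω e) f + inner ℂ (ν.toFun ω' e) f := by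
  set g : ℕ → Set X := fun k => if k = 0 then ω else if k = 1 then ω' else ∅ with hg
  have hmeas : ∀ k, MeasurableSet (g k) := by
    intro k
    rcases k with _ | _ | k <;> simpa [g] using ‹_›
  have hdisj : Pairwise (Function.onFun Disjoint g) := by
    intro i j hij
    rcases i with _ | _ | i <;> rcases j with _ | _ | j <;>
      simp_all [Function.onFun, g, hd, hd.symm, Set.disjoint_empty, Set.empty_disjoint]
  have hU : (⋃ k, g k) = ω ∪ ω' := by
    ext x
    simp only [Set.mem_iUnion, Set.mem_union]
    constructor
    · rintro ⟨k, hk⟩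
      rcases k with _ | _ | k
      · exact Or.inl hk
      · exact Or.inr hk
      · simp [g] at hk
    · rintro (h | h)
      exacts [⟨0, h⟩, ⟨1, h⟩]
  have h := ν.countably_additive e f g hmeas hdisj
  rw [hU] at h
  have h2 : HasSum (fun k => (inner ℂ (ν.toFun (g k) e) f : ℂ))
      (∑ k ∈ ({0, 1} : Finset ℕ), (inner ℂ (ν.toFun (g k) e) f : ℂ)) := by
    apply hasSum_sum_of_ne_finset_zero
    intro k hk
    rcases k with _ | _ | k
    · simp at hk
    · simp at hk
    · simpa [g] using nu_empty ν e f
  have := h.unique h2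
  rw [this]
  norm_num [g]

lemma nu_biUnion (ν : OpMeasure X M) (e f : M) {ι : Type*} [DecidableEq ι] (A : Finset ι)
    (g : ι → Set X) (hm : ∀ i ∈ A, MeasurableSet (g i))
    (hd : ∀ i ∈ A, ∀ j ∈ A, i ≠ j → Disjoint (g i) (g j)) :
    (inner ℂ (ν.toFun (⋃ i ∈ A, g i) e) f : ℂ) = ∑ i ∈ A, (inner ℂ (ν.toFun (g i) e) f : ℂ) := by
  induction A using Finset.induction_on with
  | empty => simpa using nu_empty ν e f
  | @insert a A ha ih =>
    have hUA : (⋃ i ∈ insert a A, g i) = g a ∪ ⋃ i ∈ A, g i := by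
      simp [Set.biUnion_insert]
    rw [hUA, nu_add ν e f (hm a (Finset.mem_insert_self a A))
        (A.measurableSet_biUnion (fun i hi => hm i (Finset.mem_insert_of_mem hi)))
        (Set.disjoint_iUnion₂_right.2 fun i hi =>
          hd a (Finset.mem_insert_self a A) i (Finset.mem_insert_of_mem hi)
            (fun h => ha (h ▸ hi))),
      Finset.sum_insert ha,
      ih (fun i hi => hm i (Finset.mem_insert_of_mem hi))
        (fun i hi j hj hij => hd i (Finset.mem_insert_of_mem hi) j
          (Finset.mem_insert_of_mem hj) hij)]

lemma nu_inter_sum (ν : OpMeasure X M) (e f : M) (P' : TaggedPartition X) {ω : Set X}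
    (hω : MeasurableSet ω) :
    ∑ j : Fin P'.n, (inner ℂ (ν.toFun (ω ∩ P'.piece j) e) f : ℂ) = inner ℂ (ν.toFun ω e) f := by
  have h := nu_biUnion ν e f (Finset.univ : Finset (Fin P'.n)) (fun j => ω ∩ P'.piece j)
    (fun j _ => hω.inter (P'.meas j))
    (fun i _ j _ hij =>
      Disjoint.mono Set.inter_subset_right Set.inter_subset_right (P'.disj hij))
  have hU : (⋃ j ∈ (Finset.univ : Finset (Fin P'.n)), (ω ∩ P'.piece j)) = ω := by
    simp [← Set.inter_iUnion, P'.cover]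
  rw [hU] at h
  exact h.symm

lemma nu_mono (ν : OpMeasure X M) (e : M) {ω : Set X} (hω : MeasurableSet ω) :
    ((inner ℂ (ν.toFun ω e) e : ℂ)).re ≤ ((inner ℂ (ν.toFun Set.univ e) e : ℂ)).re := by
  have h := nu_add ν e e hω hω.compl disjoint_compl_right
  rw [Set.union_compl_self] at h
  have h2 := pos_re_nonneg (ν.pos ωᶜ hω.compl) e
  rw [h, Complex.add_re]
  linarith

lemma normSq_nonneg (ν : OpMeasure X M) (P : TaggedPartition X) (F : X → M) :
    0 ≤ normSqNu ν.toFun P F := by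
  rw [normSqNu, pairSumNu, Complex.re_sum]
  exact Finset.sum_nonneg fun i _ => pos_re_nonneg (ν.pos _ (P.meas i)) _

lemma crossSq_nonneg (ν : OpMeasure X M) (P P' : TaggedPartition X) (F : X → M) :
    0 ≤ crossSqNu ν.toFun P P' F := by
  rw [crossSqNu]
  refine Finset.sum_nonneg fun i _ => Finset.sum_nonneg fun j _ =>
    pos_re_nonneg (ν.pos _ ((P.meas i).inter (P'.meas j))) _

lemma pair_est (ν : OpMeasure X M) (F G : X → M) (P P' : TaggedPartition X) :
    ‖pairSumNu ν.toFun P F G - pairSumNu ν.toFun P' F G‖ ≤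
      Real.sqrt (crossSqNu ν.toFun P P' F) * Real.sqrt (normSqNu ν.toFun P G) +
      Real.sqrt (normSqNu ν.toFun P' F) * Real.sqrt (crossSqNu ν.toFun P P' G) := by
  classical
  set ω : Fin P.n × Fin P'.n → Set X := fun p => P.piece p.1 ∩ P'.piece p.2 with hωdef
  have hmeas : ∀ p, MeasurableSet (ω p) := fun p => (P.meas p.1).inter (P'.meas p.2)
  -- the two pair sums as sums over the product
  have hP : pairSumNu ν.toFun P F G =
      ∑ p : Fin P.n × Fin P'.n, (inner ℂ (ν.toFun (ω p) (F (P.tag p.1))) (G (P.tag p.1)) : ℂ) := by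
    rw [Fintype.sum_prod_type, pairSumNu]
    exact Finset.sum_congr rfl fun i _ =>
      (nu_inter_sum ν (F (P.tag i)) (G (P.tag i)) P' (P.meas i)).symm
  have hP' : pairSumNu ν.toFun P' F G =
      ∑ p : Fin P.n × Fin P'.n,
        (inner ℂ (ν.toFun (ω p) (F (P'.tag p.2))) (G (P'.tag p.2)) : ℂ) := by
    rw [Fintype.sum_prod_type, Finset.sum_comm, pairSumNu]
    refine Finset.sum_congr rfl fun j _ => ?_
    rw [← nu_inter_sum ν (F (P'.tag j)) (G (P'.tag j)) P (P'.meas j)]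
    exact Finset.sum_congr rfl fun i _ => by rw [hωdef]; rw [Set.inter_comm]
  -- decompose the difference
  have hdiff : pairSumNu ν.toFun P F G - pairSumNu ν.toFun P' F G =
      ∑ p : Fin P.n × Fin P'.n,
        ((inner ℂ (ν.toFun (ω p) (F (P.tag p.1) - F (P'.tag p.2))) (G (P.tag p.1)) : ℂ)
          + (inner ℂ (ν.toFun (ω p) (F (P'.tag p.2))) (G (P.tag p.1) - G (P'.tag p.2)) : ℂ)) := by
    rw [hP, hP', ← Finset.sum_sub_distrib]
    refine Finset.sum_congr rfl fun p _ => ?_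
    rw [map_sub, inner_sub_left, inner_sub_right]
    ring
  rw [hdiff]
  -- triangle inequality and Cauchy–Schwarz
  calc ‖∑ p : Fin P.n × Fin P'.n, _‖
      ≤ ∑ p : Fin P.n × Fin P'.n,
          (‖(inner ℂ (ν.toFun (ω p) (F (P.tag p.1) - F (P'.tag p.2)))
              (G (P.tag p.1)) : ℂ)‖
          + ‖(inner ℂ (ν.toFun (ω p) (F (P'.tag p.2)))
              (G (P.tag p.1) - G (P'.tag p.2)) : ℂ)‖) := by
        refine le_trans (norm_sum_le _ _) (Finset.sum_le_sum fun p _ => ?_)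
        exact norm_add_le _ _
    _ = (∑ p : Fin P.n × Fin P'.n,
          ‖(inner ℂ (ν.toFun (ω p) (F (P.tag p.1) - F (P'.tag p.2)))
              (G (P.tag p.1)) : ℂ)‖)
        + ∑ p : Fin P.n × Fin P'.n,
          ‖(inner ℂ (ν.toFun (ω p) (F (P'.tag p.2)))
              (G (P.tag p.1) - G (P'.tag p.2)) : ℂ)‖ := Finset.sum_add_distrib
    _ ≤ Real.sqrt (crossSqNu ν.toFun P P' F) * Real.sqrt (normSqNu ν.toFun P G) +
        Real.sqrt (normSqNu ν.toFun P' F) * Real.sqrt (crossSqNu ν.toFun P P' G) := by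
        gcongr
        · -- first factor
          calc ∑ p : Fin P.n × Fin P'.n,
                ‖(inner ℂ (ν.toFun (ω p) (F (P.tag p.1) - F (P'.tag p.2)))
                    (G (P.tag p.1)) : ℂ)‖
              ≤ ∑ p : Fin P.n × Fin P'.n,
                Real.sqrt ((inner ℂ (ν.toFun (ω p) (F (P.tag p.1) - F (P'.tag p.2)))
                    (F (P.tag p.1) - F (P'.tag p.2)) : ℂ)).re *
                Real.sqrt ((inner ℂ (ν.toFun (ω p) (G (P.tag p.1))) (G (P.tag p.1)) : ℂ)).re :=
                Finset.sum_le_sum fun p _ => posCS (ν.pos _ (hmeas p)) _ _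
            _ ≤ Real.sqrt (∑ p : Fin P.n × Fin P'.n,
                  ((inner ℂ (ν.toFun (ω p) (F (P.tag p.1) - F (P'.tag p.2)))
                      (F (P.tag p.1) - F (P'.tag p.2)) : ℂ)).re) *
                Real.sqrt (∑ p : Fin P.n × Fin P'.n,
                  ((inner ℂ (ν.toFun (ω p) (G (P.tag p.1))) (G (P.tag p.1)) : ℂ)).re) := by
                refine Real.sum_sqrt_mul_sqrt_le _ (fun p => ?_) (fun p => ?_) <;>
                  exact pos_re_nonneg (ν.pos _ (hmeas p)) _
            _ = Real.sqrt (crossSqNu ν.toFun P P' F) * Real.sqrt (normSqNu ν.toFun P G) := by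
                congr 1
                · congr 1
                  rw [crossSqNu, Fintype.sum_prod_type]
                · congr 1
                  rw [normSqNu, pairSumNu, Complex.re_sum, Fintype.sum_prod_type]
                  refine Finset.sum_congr rfl fun i _ => ?_
                  simp only [hωdef]
                  rw [← Complex.re_sum, nu_inter_sum ν _ _ P' (P.meas i)]
        · -- second factor
          calc ∑ p : Fin P.n × Fin P'.n,
                ‖(inner ℂ (ν.toFun (ω p) (F (P'.tag p.2)))
                    (G (P.tag p.1) - G (P'.tag p.2)) : ℂ)‖
              ≤ ∑ p : Fin P.n × Fin P'.n,
                Real.sqrt ((inner ℂ (ν.toFun (ω p) (F (P'.tag p.2))) (F (P'.tag p.2)) : ℂ)).re *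
                Real.sqrt ((inner ℂ (ν.toFun (ω p) (G (P.tag p.1) - G (P'.tag p.2)))
                    (G (P.tag p.1) - G (P'.tag p.2)) : ℂ)).re :=
                Finset.sum_le_sum fun p _ => posCS (ν.pos _ (hmeas p)) _ _
            _ ≤ Real.sqrt (∑ p : Fin P.n × Fin P'.n,
                  ((inner ℂ (ν.toFun (ω p) (F (P'.tag p.2))) (F (P'.tag p.2)) : ℂ)).re) *
                Real.sqrt (∑ p : Fin P.n × Fin P'.n,
                  ((inner ℂ (ν.toFun (ω p) (G (P.tag p.1) - G (P'.tag p.2)))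
                      (G (P.tag p.1) - G (P'.tag p.2)) : ℂ)).re) := by
                refine Real.sum_sqrt_mul_sqrt_le _ (fun p => ?_) (fun p => ?_) <;>
                  exact pos_re_nonneg (ν.pos _ (hmeas p)) _
            _ = Real.sqrt (normSqNu ν.toFun P' F) * Real.sqrt (crossSqNu ν.toFun P P' G) := by
                congr 1
                · congr 1
                  rw [normSqNu, pairSumNu, Complex.re_sum, Fintype.sum_prod_type,
                    Finset.sum_comm]
                  refine Finset.sum_congr rfl fun j _ => ?_
                  simp only [hωdef]
                  rw [← Complex.re_sum, ← nu_inter_sum ν (F (P'.tag j)) (F (P'.tag j)) P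
                    (P'.meas j)]
                  refine congrArg Complex.re (Finset.sum_congr rfl fun i _ => ?_)
                  rw [Set.inter_comm]
                · congr 1
                  rw [crossSqNu, Fintype.sum_prod_type]

/-- Refinement between (untagged) Borel partitions. -/
def SubRef {X : Type*} [MeasurableSpace X] (R Q : BorelPartition X) : Prop :=
  ∀ i : Fin R.n, ∃ j : Fin Q.n, R.piece i ⊆ Q.piece j

lemma SubRef.trans' {X : Type*} [MeasurableSpace X] {A B C : BorelPartition X}
    (h1 : SubRef A B) (h2 : SubRef B C) : SubRef A C := fun i => by
  obtain ⟨j, hj⟩ := h1 i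
  obtain ⟨k, hk⟩ := h2 j
  exact ⟨k, hj.trans hk⟩

lemma TaggedPartition.Refines.trans_sub {X : Type*} [MeasurableSpace X]
    {P : TaggedPartition X} {A B : BorelPartition X}
    (h1 : P.Refines A) (h2 : SubRef A B) : P.Refines B := fun i => by
  obtain ⟨j, hj⟩ := h1 i
  obtain ⟨k, hk⟩ := h2 j
  exact ⟨k, hj.trans hk⟩

/-- Common refinement of two Borel partitions. -/
def commonRef {X : Type*} [MeasurableSpace X] (A B : BorelPartition X) : BorelPartition X where
  n := A.n * B.n
  piece k := A.piece (finProdFinEquiv.symm k).1 ∩ B.piece (finProdFinEquiv.symm k).2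
  meas k := (A.meas _).inter (B.meas _)
  disj := by
    intro k l hkl
    have h : finProdFinEquiv.symm k ≠ finProdFinEquiv.symm l :=
      fun h => hkl (finProdFinEquiv.symm.injective h)
    rcases (not_and_or.1 (fun hh => h (Prod.ext hh.1 hh.2))) with h1 | h1
    · exact Disjoint.mono Set.inter_subset_left Set.inter_subset_left (A.disj h1)
    · exact Disjoint.mono Set.inter_subset_right Set.inter_subset_right (B.disj h1)
  cover := by
    apply Set.eq_univ_of_forall
    intro x
    have hxa : x ∈ ⋃ i, A.piece i := A.cover.symm ▸ Set.mem_univ x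
    have hxb : x ∈ ⋃ i, B.piece i := B.cover.symm ▸ Set.mem_univ x
    obtain ⟨i, hi⟩ := Set.mem_iUnion.1 hxa
    obtain ⟨j, hj⟩ := Set.mem_iUnion.1 hxb
    refine Set.mem_iUnion.2 ⟨finProdFinEquiv (i, j), ?_⟩
    rw [Equiv.symm_apply_apply]
    exact ⟨hi, hj⟩

lemma commonRef_left {X : Type*} [MeasurableSpace X] (A B : BorelPartition X) :
    SubRef (commonRef A B) A :=
  fun k => ⟨(finProdFinEquiv.symm k).1, Set.inter_subset_left⟩

lemma commonRef_right {X : Type*} [MeasurableSpace X] (A B : BorelPartition X) :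
    SubRef (commonRef A B) B :=
  fun k => ⟨(finProdFinEquiv.symm k).2, Set.inter_subset_right⟩

lemma exists_tagged {X : Type*} [MeasurableSpace X] (Q : BorelPartition X) :
    ∃ P : TaggedPartition X, P.Refines Q := by
  classical
  set S := Finset.univ.filter (fun i => (Q.piece i).Nonempty) with hS
  set e : Fin S.card → Fin Q.n := fun k => (S.orderIsoOfFin rfl k : Fin Q.n) with he
  have hmem : ∀ k, e k ∈ S := fun k => (S.orderIsoOfFin rfl k).2
  have hne : ∀ k, (Q.piece (e k)).Nonempty := fun k => (Finset.mem_filter.1 (hmem k)).2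
  have hinj : Function.Injective e := fun a b h =>
    (S.orderIsoOfFin rfl).injective (Subtype.ext h)
  refine ⟨{ n := S.card
            piece := fun k => Q.piece (e k)
            meas := fun k => Q.meas _
            disj := fun a b hab => Q.disj (fun h => hab (hinj h))
            cover := ?_
            tag := fun k => (hne k).choose
            tag_mem := fun k => (hne k).choose_spec },
    fun k => ⟨e k, subset_rfl⟩⟩
  apply Set.eq_univ_of_forall
  intro x
  have hx : x ∈ ⋃ i, Q.piece i := Q.cover.symm ▸ Set.mem_univ x
  obtain ⟨i, hi⟩ := Set.mem_iUnion.1 hx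
  have hiS : i ∈ S := Finset.mem_filter.2 ⟨Finset.mem_univ i, ⟨x, hi⟩⟩
  obtain ⟨k, hk⟩ := (S.orderIsoOfFin rfl).surjective ⟨i, hiS⟩
  have hek : e k = i := by simp only [he]; rw [hk]
  exact Set.mem_iUnion.2 ⟨k, hek ▸ hi⟩

lemma simple_admissible (ν : OpMeasure X M) (Q : BorelPartition X) (c : Fin Q.n → M) :
    NuAdmissible ν.toFun (fun s => ∑ j : Fin Q.n, (Q.piece j).indicator (fun _ => c j) s) := by
  classical
  set H : X → M := fun s => ∑ j : Fin Q.n, (Q.piece j).indicator (fun _ => c j) s with hH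
  have hval : ∀ {s : X} {a : Fin Q.n}, s ∈ Q.piece a → H s = c a := by
    intro s a hs
    rw [hH]
    simp only
    rw [Finset.sum_eq_single a]
    · simp [Set.indicator_of_mem hs]
    · intro b _ hb
      apply Set.indicator_of_notMem
      intro hsb
      exact Set.disjoint_left.1 (Q.disj hb) hsb hs
    · intro h
      exact absurd (Finset.mem_univ a) h
  constructor
  · refine ⟨Real.sqrt (∑ j : Fin Q.n, ((inner ℂ (ν.toFun Set.univ (c j)) (c j) : ℂ)).re),
      fun P => ?_⟩
    apply Real.sqrt_le_sqrt
    have hidx : ∀ i : Fin P.n, ∃ a : Fin Q.n, P.tag i ∈ Q.piece a := by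
      intro i
      have hx : P.tag i ∈ ⋃ a, Q.piece a := Q.cover.symm ▸ Set.mem_univ _
      exact Set.mem_iUnion.1 hx
    choose idx hidxmem using hidx
    rw [normSqNu, pairSumNu, Complex.re_sum]
    have hre : ∀ i : Fin P.n,
        ((inner ℂ (ν.toFun (P.piece i) (H (P.tag i))) (H (P.tag i)) : ℂ)).re
          = ((inner ℂ (ν.toFun (P.piece i) (c (idx i))) (c (idx i)) : ℂ)).re := fun i => by
      rw [hval (hidxmem i)]
    rw [Finset.sum_congr rfl (fun i _ => hre i)]
    rw [← Finset.sum_fiberwise_of_maps_to (g := idx) (fun i _ => Finset.mem_univ (idx i))]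
    refine Finset.sum_le_sum fun j _ => ?_
    have hcong : ∀ i ∈ Finset.univ.filter (fun i => idx i = j),
        ((inner ℂ (ν.toFun (P.piece i) (c (idx i))) (c (idx i)) : ℂ)).re
          = ((inner ℂ (ν.toFun (P.piece i) (c j)) (c j) : ℂ)).re := by
      intro i hi
      rw [(Finset.mem_filter.1 hi).2]
    rw [Finset.sum_congr rfl hcong]
    have hbi := nu_biUnion ν (c j) (c j) (Finset.univ.filter fun i => idx i = j)
      (fun i => P.piece i) (fun i _ => P.meas i)
      (fun a _ b _ hab => P.disj hab)
    calc ∑ i ∈ Finset.univ.filter (fun i => idx i = j),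
          ((inner ℂ (ν.toFun (P.piece i) (c j)) (c j) : ℂ)).re
        = ((inner ℂ (ν.toFun (⋃ i ∈ Finset.univ.filter (fun i => idx i = j), P.piece i)
            (c j)) (c j) : ℂ)).re := by rw [hbi, Complex.re_sum]
      _ ≤ _ := nu_mono ν (c j)
          ((Finset.univ.filter fun i => idx i = j).measurableSet_biUnion fun i _ => P.meas i)
  · intro ε hε
    refine ⟨Q, fun P P' hP hP' => ?_⟩
    have hzero : crossSqNu ν.toFun P P' H = 0 := by
      rw [crossSqNu]
      refine Finset.sum_eq_zero fun i _ => Finset.sum_eq_zero fun j _ => ?_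
      rcases Set.eq_empty_or_nonempty (P.piece i ∩ P'.piece j) with hemp | ⟨t, ht⟩
      · rw [hemp, nu_empty]
        simp
      · obtain ⟨a, ha⟩ := hP i
        obtain ⟨b, hb⟩ := hP' j
        have hab : a = b := by
          by_contra hne
          exact Set.disjoint_left.1 (Q.disj hne) (ha ht.1) (hb ht.2)
        have h1 : H (P.tag i) = c a := hval (ha (P.tag_mem i))
        have h2 : H (P'.tag j) = c b := hval (hb (P'.tag_mem j))
        rw [h1, h2, hab, sub_self]
        simp
    rw [hzero, Real.sqrt_zero]
    exact hε

/-- If `F` and `G` are ν-admissible, the net `(P,S) ↦ ⟨F(P,S), G(P,S)⟩_ν`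
converges (in the refinement-directed sense); moreover every measurable simple
function is ν-admissible. -/
theorem stmt13 (ν : OpMeasure Torus M) (F G : Torus → M)
    (hF : NuAdmissible ν.toFun F) (hG : NuAdmissible ν.toFun G) :
    (∃ L : ℂ, ∀ ε : ℝ, 0 < ε → ∃ Q : BorelPartition Torus,
      ∀ P : TaggedPartition Torus, P.Refines Q →
        ‖pairSumNu ν.toFun P F G - L‖ < ε) ∧
    (∀ (Q : BorelPartition Torus) (c : Fin Q.n → M),
      NuAdmissible ν.toFun (fun s => ∑ j : Fin Q.n, (Q.piece j).indicator (fun _ => c j) s)) := by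

  constructor
  · obtain ⟨⟨CF, hCF⟩, hFc⟩ := hF
    obtain ⟨⟨CG, hCG⟩, hGc⟩ := hG
    choose QF hQF using fun k : ℕ => hFc (1/((k:ℝ)+1)) (by positivity)
    choose QG hQG using fun k : ℕ => hGc (1/((k:ℝ)+1)) (by positivity)
    let R : ℕ → BorelPartition Torus := fun k =>
      Nat.rec (commonRef (QF 0) (QG 0))
        (fun k Rk => commonRef (commonRef (QF (k+1)) (QG (k+1))) Rk) k
    have hRF : ∀ k, SubRef (R k) (QF k) := by
      intro k
      cases k with
      | zero => exact commonRef_left _ _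
      | succ k => exact SubRef.trans' (commonRef_left _ _) (commonRef_left _ _)
    have hRG : ∀ k, SubRef (R k) (QG k) := by
      intro k
      cases k with
      | zero => exact commonRef_right _ _
      | succ k => exact SubRef.trans' (commonRef_left _ _) (commonRef_right _ _)
    have hRchain : ∀ k, SubRef (R (k+1)) (R k) := fun k => commonRef_right _ _
    have hRle : ∀ {k l : ℕ}, k ≤ l → SubRef (R l) (R k) := by
      intro k l hkl
      induction hkl with
      | refl => exact fun i => ⟨i, subset_rfl⟩
      | step h ih => exact SubRef.trans' (hRchain _) ih
    choose Pt hPt using fun k => exists_tagged (R k)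
    set z : ℕ → ℂ := fun k => pairSumNu ν.toFun (Pt k) F G with hz
    have hCF0 : 0 ≤ CF := le_trans (Real.sqrt_nonneg _) (hCF (Pt 0))
    have hCG0 : 0 ≤ CG := le_trans (Real.sqrt_nonneg _) (hCG (Pt 0))
    have key : ∀ (k : ℕ) (P P' : TaggedPartition Torus), P.Refines (QF k) →
        P'.Refines (QF k) → P.Refines (QG k) → P'.Refines (QG k) →
        ‖pairSumNu ν.toFun P F G - pairSumNu ν.toFun P' F G‖
          ≤ (1/((k:ℝ)+1)) * (CG + CF) := by
      intro k P P' h1 h2 h3 h4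
      have e1 := pair_est ν F G P P'
      have e2 := hQF k P P' h1 h2
      have e3 := hQG k P P' h3 h4
      have m1 : Real.sqrt (crossSqNu ν.toFun P P' F) * Real.sqrt (normSqNu ν.toFun P G)
          ≤ (1/((k:ℝ)+1)) * CG :=
        mul_le_mul e2.le (hCG P) (Real.sqrt_nonneg _) (by positivity)
      have m2 : Real.sqrt (normSqNu ν.toFun P' F) * Real.sqrt (crossSqNu ν.toFun P P' G)
          ≤ CF * (1/((k:ℝ)+1)) :=
        mul_le_mul (hCF P') e3.le (Real.sqrt_nonneg _) hCF0
      have hring : (1/((k:ℝ)+1)) * (CG + CF) = (1/((k:ℝ)+1)) * CG + CF * (1/((k:ℝ)+1)) := by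
        ring
      linarith
    have hzc : ∀ k l, k ≤ l → ‖z k - z l‖ ≤ (1/((k:ℝ)+1)) * (CG + CF) :=
      fun k l hkl =>
        key k (Pt k) (Pt l) ((hPt k).trans_sub (hRF k))
          ((hPt l).trans_sub (SubRef.trans' (hRle hkl) (hRF k)))
          ((hPt k).trans_sub (hRG k))
          ((hPt l).trans_sub (SubRef.trans' (hRle hkl) (hRG k)))
    have hsmall : ∀ δ : ℝ, 0 < δ → ∃ N : ℕ, (1/((N:ℝ)+1)) * (CG + CF) < δ := by
      intro δ hδ
      obtain ⟨N, hN⟩ := exists_nat_gt ((CG + CF)/δ)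
      refine ⟨N, ?_⟩
      have hN1 : (CG + CF)/δ < (N:ℝ)+1 := hN.trans (by linarith)
      have h2 : CG + CF < δ * ((N:ℝ)+1) := by
        have := (div_lt_iff₀ hδ).1 hN1
        linarith
      rw [one_div_mul_eq_div, div_lt_iff₀ (by positivity)]
      linarith
    have hmono : ∀ {k l : ℕ}, k ≤ l → (1/((l:ℝ)+1)) * (CG + CF) ≤ (1/((k:ℝ)+1)) * (CG + CF) := by
      intro k l hkl
      have : (1/((l:ℝ)+1)) ≤ (1/((k:ℝ)+1)) := by
        apply one_div_le_one_div_of_le (by positivity)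
        have : (k:ℝ) ≤ (l:ℝ) := Nat.cast_le.2 hkl
        linarith
      exact mul_le_mul_of_nonneg_right this (by linarith)
    have hcauchy : CauchySeq z := by
      rw [Metric.cauchySeq_iff]
      intro ε hε
      obtain ⟨N, hN⟩ := hsmall ε hε
      refine ⟨N, fun m hm n hn => ?_⟩
      rw [Complex.dist_eq]
      rcases le_total m n with h | h
      · exact lt_of_le_of_lt ((hzc m n h).trans (hmono hm)) hN
      · rw [norm_sub_rev]
        exact lt_of_le_of_lt ((hzc n m h).trans (hmono hn)) hN
    obtain ⟨L, hL⟩ := cauchySeq_tendsto_of_complete hcauchy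
    refine ⟨L, fun ε hε => ?_⟩
    obtain ⟨N, hN⟩ := hsmall ε hε
    refine ⟨R N, fun P hPR => ?_⟩
    have hb : ∀ l, N ≤ l →
        ‖pairSumNu ν.toFun P F G - z l‖ ≤ (1/((N:ℝ)+1)) * (CG + CF) := by
      intro l hl
      exact key N P (Pt l) (hPR.trans_sub (hRF N))
        ((hPt l).trans_sub (SubRef.trans' (hRle hl) (hRF N)))
        (hPR.trans_sub (hRG N))
        ((hPt l).trans_sub (SubRef.trans' (hRle hl) (hRG N)))
    have htend : Filter.Tendsto (fun l => ‖pairSumNu ν.toFun P F G - z l‖)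
        Filter.atTop (nhds (‖pairSumNu ν.toFun P F G - L‖)) :=
      (continuous_norm.tendsto _).comp (tendsto_const_nhds.sub hL)
    exact lt_of_le_of_lt (le_of_tendsto htend (Filter.eventually_atTop.2 ⟨N, hb⟩)) hN
  · exact fun Q c => simple_admissible ν Q c
end

section
/- Let f : 𝕋 → B(M) be continuous in the operator norm and let C ≥ 0 be such that for all s, t ∈ 𝕋 and all Borel sets ω ⊆ 𝕋 one has f(s)·ν(ω)·f(s)* ⪯ C·ν(ω) and (f(s) − f(t))·ν(ω)·(f(s) − f(t))* ⪯ ‖f(s) − f(t)‖²·ν(ω) (inequalities of positive operators). Then for every m ∈ M the function F : 𝕋 → M defined by F(s) := f(s)* m is ν-admissible. -/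
open ContinuousLinearMap

variable {M : Type*} [NormedAddCommGroup M] [InnerProductSpace ℂ M] [CompleteSpace M]

section Aux

variable {X : Type*} [MeasurableSpace X]

/-- `ν(∅)` pairs to zero. -/
lemma opm_inner_empty (ν : OpMeasure X M) (e g : M) :
    (inner ℂ (ν.toFun ∅ e) g : ℂ) = 0 := by
  have h := ν.countably_additive e g (fun _ => ∅) (fun _ => MeasurableSet.empty)
    (fun i j hij => by simp [Function.onFun])
  rw [Set.iUnion_empty] at h
  exact tendsto_nhds_unique tendsto_const_nhds h.summable.tendsto_atTop_zero

/-- Finite additivity of the pairings of `ν`. -/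
lemma opm_inner_finadd (ν : OpMeasure X M) (e g : M)
    {n : ℕ} (w : Fin n → Set X) (hm : ∀ i, MeasurableSet (w i))
    (hd : Pairwise (Function.onFun Disjoint w)) :
    ∑ i, (inner ℂ (ν.toFun (w i) e) g : ℂ) = inner ℂ (ν.toFun (⋃ i, w i) e) g := by
  set w' : ℕ → Set X := fun k => if h : k < n then w ⟨k, h⟩ else ∅ with hw'
  have hm' : ∀ k, MeasurableSet (w' k) := by
    intro k; rw [hw']; dsimp only; split
    · exact hm _
    · exact MeasurableSet.empty
  have hd' : Pairwise (Function.onFun Disjoint w') := by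
    intro i j hij
    simp only [Function.onFun, hw']
    split <;> split
    · exact hd (fun h => hij (by simpa using congrArg Fin.val h))
    · exact Set.disjoint_empty _
    · exact Set.empty_disjoint _
    · exact Set.disjoint_empty _
  have hU : (⋃ k, w' k) = ⋃ i, w i := by
    ext x
    simp only [Set.mem_iUnion, hw']
    constructor
    · rintro ⟨k, hk⟩
      by_cases h : k < n
      · exact ⟨⟨k, h⟩, by simpa [dif_pos h] using hk⟩
      · simp [dif_neg h] at hk
    · rintro ⟨i, hi⟩
      exact ⟨i, by simpa [i.isLt] using hi⟩
  have h1 := ν.countably_additive e g w' hm' hd'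
  rw [hU] at h1
  have h2 : HasSum (fun k => (inner ℂ (ν.toFun (w' k) e) g : ℂ))
      (∑ k ∈ Finset.range n, (inner ℂ (ν.toFun (w' k) e) g : ℂ)) := by
    apply hasSum_sum_of_ne_finset_zero
    intro k hk
    have : ¬ k < n := by simpa using hk
    simp only [hw', dif_neg this]
    exact opm_inner_empty ν e g
  have h3 : ∑ i : Fin n, (inner ℂ (ν.toFun (w i) e) g : ℂ)
      = ∑ k ∈ Finset.range n, (inner ℂ (ν.toFun (w' k) e) g : ℂ) := by
    rw [← Fin.sum_univ_eq_sum_range (fun k => (inner ℂ (ν.toFun (w' k) e) g : ℂ)) n]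
    refine Finset.sum_congr rfl (fun i _ => ?_)
    simp [hw', i.isLt]
  rw [h3, h2.unique h1]

/-- From positivity of `c • B - A`, a quadratic-form inequality. -/
lemma inner_re_le_of_pos_sub {A B : M →L[ℂ] M} {c : ℝ}
    (h : ((c : ℂ) • B - A).IsPositive) (x : M) :
    (inner ℂ (A x) x : ℂ).re ≤ c * (inner ℂ (B x) x : ℂ).re := by
  have h2 := (Complex.nonneg_iff.1 (h.inner_nonneg_left x)).1
  simp only [RCLike.re_to_complex, ContinuousLinearMap.sub_apply,
    ContinuousLinearMap.smul_apply, inner_sub_left, inner_smul_left,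
    Complex.sub_re, Complex.conj_ofReal, Complex.re_ofReal_mul] at h2
  linarith

lemma inner_adjoint_conj (A T : M →L[ℂ] M) (m : M) :
    (inner ℂ (T (adjoint A m)) (adjoint A m) : ℂ)
      = inner ℂ ((A ∘L T ∘L adjoint A) m) m := by
  simp [ContinuousLinearMap.comp_apply, ← ContinuousLinearMap.adjoint_inner_left]

/-- A fine Borel partition of the torus. -/
lemma exists_fine_partition {δ : ℝ} (hδ : 0 < δ) :
    ∃ Q : BorelPartition Torus,
      ∀ j : Fin Q.n, ∀ s ∈ Q.piece j, ∀ t ∈ Q.piece j, dist s t < δ := by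
  have hcov : (Set.univ : Set Torus) ⊆ ⋃ x : Torus, Metric.ball x (δ / 2) := by
    intro x _
    exact Set.mem_iUnion.2 ⟨x, Metric.mem_ball_self (half_pos hδ)⟩
  obtain ⟨t, ht⟩ := isCompact_univ.elim_finite_subcover
    (fun x : Torus => Metric.ball x (δ / 2)) (fun _ => Metric.isOpen_ball) hcov
  set n := t.card with hn
  set c : Fin n → Torus := fun i => (t.equivFin.symm i : Torus) with hc
  set B : Fin n → Set Torus := fun i => Metric.ball (c i) (δ / 2) with hB
  set piece : Fin n → Set Torus :=
    fun i => B i \ ⋃ l : Fin n, ⋃ (_ : (l : ℕ) < (i : ℕ)), B l with hpiece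
  have hsub : ∀ i, piece i ⊆ B i := fun i => Set.diff_subset
  refine ⟨⟨n, piece, ?_, ?_, ?_⟩, ?_⟩
  · intro i
    exact measurableSet_ball.diff
      (MeasurableSet.iUnion fun l => MeasurableSet.iUnion fun _ => measurableSet_ball)
  · have key : ∀ i j : Fin n, (i : ℕ) < (j : ℕ) → Disjoint (piece i) (piece j) := by
      intro i j hij
      rw [Set.disjoint_left]
      intro x hxi hxj
      have hxB : x ∈ B i := hsub i hxi
      exact hxj.2 (Set.mem_iUnion.2 ⟨i, Set.mem_iUnion.2 ⟨hij, hxB⟩⟩)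
    intro i j hij
    rcases lt_or_gt_of_ne (fun h : (i : ℕ) = (j : ℕ) => hij (Fin.ext h)) with h | h
    · exact key i j h
    · exact (key j i h).symm
  · apply Set.eq_univ_of_forall
    intro x
    have hx : ∃ k : ℕ, ∃ h : k < n, x ∈ B ⟨k, h⟩ := by
      have := ht (Set.mem_univ x)
      simp only [Set.mem_iUnion] at this
      obtain ⟨y, hy, hxy⟩ := this
      refine ⟨(t.equivFin ⟨y, hy⟩ : ℕ), (t.equivFin ⟨y, hy⟩).isLt, ?_⟩
      simpa [hB, hc] using hxy
    classical
    let k0 := Nat.find hx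
    obtain ⟨hk0n, hk0⟩ := Nat.find_spec hx
    refine Set.mem_iUnion.2 ⟨⟨k0, hk0n⟩, hk0, ?_⟩
    intro hmem
    simp only [Set.mem_iUnion] at hmem
    obtain ⟨l, hl, hxl⟩ := hmem
    exact Nat.find_min hx (m := (l : ℕ)) hl ⟨l.isLt, by simpa using hxl⟩
  · intro j s hs u hu
    have h1 : dist s (c j) < δ / 2 := Metric.mem_ball.1 (hsub j hs)
    have h2 : dist u (c j) < δ / 2 := Metric.mem_ball.1 (hsub j hu)
    calc dist s u ≤ dist s (c j) + dist (c j) u := dist_triangle _ _ _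
      _ < δ / 2 + δ / 2 := by rw [dist_comm (c j) u]; linarith
      _ = δ := by ring

end Aux

/-- If `f : 𝕋 → B(M)` is norm-continuous with `f(s) ν(ω) f(s)^* ⪯ C ν(ω)` and
`(f(s)−f(t)) ν(ω) (f(s)−f(t))^* ⪯ ‖f(s)−f(t)‖² ν(ω)` for all `s, t` and Borel
`ω`, then for each `m ∈ M` the function `s ↦ f(s)^* m` is ν-admissible. -/
theorem stmt14 (ν : OpMeasure Torus M)
    (f : Torus → (M →L[ℂ] M)) (hf : Continuous f)
    (C : ℝ) (hC : 0 ≤ C)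
    (hbd : ∀ (s : Torus) (ω : Set Torus), MeasurableSet ω →
      ((C : ℂ) • ν.toFun ω - f s ∘L ν.toFun ω ∘L adjoint (f s)).IsPositive)
    (hdiff : ∀ (s t : Torus) (ω : Set Torus), MeasurableSet ω →
      (((‖f s - f t‖ ^ 2 : ℝ) : ℂ) • ν.toFun ω -
        (f s - f t) ∘L ν.toFun ω ∘L adjoint (f s - f t)).IsPositive) :
    ∀ m : M, NuAdmissible ν.toFun (fun s => adjoint (f s) m) := by
  intro m
  have hK0 : 0 ≤ ((inner ℂ (ν.toFun Set.univ m) m : ℂ)).re := by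
    exact (Complex.nonneg_iff.1
      ((ν.pos Set.univ MeasurableSet.univ).inner_nonneg_left m)).1
  set K : ℝ := ((inner ℂ (ν.toFun Set.univ m) m : ℂ)).re with hK
  have hpiecesum : ∀ P : TaggedPartition Torus,
      ∑ i : Fin P.n, ((inner ℂ (ν.toFun (P.piece i) m) m : ℂ)).re = K := by
    intro P
    have h := opm_inner_finadd ν m m P.piece P.meas P.disj
    rw [P.cover] at h
    rw [← Complex.re_sum, h]
  have key : ∀ (s : Torus) (ω : Set Torus), MeasurableSet ω →
      ((inner ℂ (ν.toFun ω (adjoint (f s) m)) (adjoint (f s) m) : ℂ)).re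
        ≤ C * ((inner ℂ (ν.toFun ω m) m : ℂ)).re := by
    intro s ω hω
    rw [inner_adjoint_conj]
    exact inner_re_le_of_pos_sub (hbd s ω hω) m
  constructor
  · refine ⟨Real.sqrt (C * K), fun P => ?_⟩
    apply Real.sqrt_le_sqrt
    calc normSqNu ν.toFun P (fun s => adjoint (f s) m)
        = ∑ i : Fin P.n,
            ((inner ℂ (ν.toFun (P.piece i) (adjoint (f (P.tag i)) m))
              (adjoint (f (P.tag i)) m) : ℂ)).re := by
          simp [normSqNu, pairSumNu, Complex.re_sum]
      _ ≤ ∑ i : Fin P.n, C * ((inner ℂ (ν.toFun (P.piece i) m) m : ℂ)).re :=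
          Finset.sum_le_sum (fun i _ => key (P.tag i) (P.piece i) (P.meas i))
      _ = C * K := by rw [← Finset.mul_sum, hpiecesum P]
  · intro ε hε
    set η : ℝ := ε ^ 2 / (K + 1) with hη
    have hη0 : 0 < η := div_pos (pow_pos hε 2) (by linarith)
    have hr0 : 0 < Real.sqrt η := Real.sqrt_pos.2 hη0
    have hfu : UniformContinuous f := CompactSpace.uniformContinuous_of_continuous hf
    obtain ⟨δ, hδ0, hδ⟩ := Metric.uniformContinuous_iff.1 hfu _ hr0
    obtain ⟨Q, hQ⟩ := exists_fine_partition hδ0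
    refine ⟨Q, fun P P' hP hP' => ?_⟩
    have hterm : ∀ (i : Fin P.n) (j : Fin P'.n),
        ((inner ℂ (ν.toFun (P.piece i ∩ P'.piece j)
            (adjoint (f (P.tag i)) m - adjoint (f (P'.tag j)) m))
          (adjoint (f (P.tag i)) m - adjoint (f (P'.tag j)) m) : ℂ)).re
        ≤ η * ((inner ℂ (ν.toFun (P.piece i ∩ P'.piece j) m) m : ℂ)).re := by
      intro i j
      by_cases hω : P.piece i ∩ P'.piece j = ∅
      · simp only [hω, opm_inner_empty, Complex.zero_re, mul_zero, le_refl]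
      · obtain ⟨x, hx⟩ := Set.nonempty_iff_ne_empty.2 hω
        obtain ⟨j1, hj1⟩ := hP i
        obtain ⟨j2, hj2⟩ := hP' j
        have hjj : j1 = j2 := by
          by_contra hne
          exact (Set.disjoint_left.1 (Q.disj hne)) (hj1 hx.1) (hj2 hx.2)
        have hdist : dist (P.tag i) (P'.tag j) < δ :=
          hQ j1 _ (hj1 (P.tag_mem i)) _ (hjj ▸ hj2 (P'.tag_mem j))
        have hnorm : ‖f (P.tag i) - f (P'.tag j)‖ < Real.sqrt η := by
          have h := hδ hdist
          rwa [dist_eq_norm] at h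
        have hnorm2 : ‖f (P.tag i) - f (P'.tag j)‖ ^ 2 ≤ η := by
          have h2 := Real.sq_sqrt hη0.le
          nlinarith [norm_nonneg (f (P.tag i) - f (P'.tag j))]
        have hmeas := (P.meas i).inter (P'.meas j)
        have hpos : 0 ≤ ((inner ℂ (ν.toFun (P.piece i ∩ P'.piece j) m) m : ℂ)).re := by
          exact (Complex.nonneg_iff.1
            ((ν.pos _ hmeas).inner_nonneg_left m)).1
        have hsubA : adjoint (f (P.tag i)) m - adjoint (f (P'.tag j)) m
            = adjoint (f (P.tag i) - f (P'.tag j)) m := by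
          rw [map_sub]
          rfl
        calc ((inner ℂ (ν.toFun (P.piece i ∩ P'.piece j)
                (adjoint (f (P.tag i)) m - adjoint (f (P'.tag j)) m))
              (adjoint (f (P.tag i)) m - adjoint (f (P'.tag j)) m) : ℂ)).re
            ≤ ‖f (P.tag i) - f (P'.tag j)‖ ^ 2
                * ((inner ℂ (ν.toFun (P.piece i ∩ P'.piece j) m) m : ℂ)).re := by
              rw [hsubA, inner_adjoint_conj]
              exact inner_re_le_of_pos_sub (hdiff (P.tag i) (P'.tag j) _ hmeas) m
          _ ≤ η * ((inner ℂ (ν.toFun (P.piece i ∩ P'.piece j) m) m : ℂ)).re :=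
              mul_le_mul_of_nonneg_right hnorm2 hpos
    have hsum : crossSqNu ν.toFun P P' (fun s => adjoint (f s) m) ≤ η * K := by
      have hrow : ∀ i : Fin P.n,
          ∑ j : Fin P'.n, ((inner ℂ (ν.toFun (P.piece i ∩ P'.piece j) m) m : ℂ)).re
            = ((inner ℂ (ν.toFun (P.piece i) m) m : ℂ)).re := by
        intro i
        have h := opm_inner_finadd ν m m (fun j => P.piece i ∩ P'.piece j)
          (fun j => (P.meas i).inter (P'.meas j))
          (fun j j' hjj => Disjoint.mono Set.inter_subset_right Set.inter_subset_right
            (P'.disj hjj))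
        rw [← Set.inter_iUnion, P'.cover, Set.inter_univ] at h
        rw [← Complex.re_sum, h]
      calc crossSqNu ν.toFun P P' (fun s => adjoint (f s) m)
          ≤ ∑ i : Fin P.n, ∑ j : Fin P'.n,
              η * ((inner ℂ (ν.toFun (P.piece i ∩ P'.piece j) m) m : ℂ)).re := by
            refine Finset.sum_le_sum (fun i _ => Finset.sum_le_sum (fun j _ => ?_))
            exact hterm i j
        _ = η * K := by
            rw [← hpiecesum P]
            rw [Finset.mul_sum]
            refine Finset.sum_congr rfl (fun i _ => ?_)
            rw [← Finset.mul_sum, hrow i]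
    have hηK : η * K < ε ^ 2 := by
      rw [hη, div_mul_eq_mul_div, div_lt_iff₀ (by linarith : (0:ℝ) < K + 1)]
      nlinarith
    calc Real.sqrt (crossSqNu ν.toFun P P' (fun s => adjoint (f s) m))
        ≤ Real.sqrt (η * K) := Real.sqrt_le_sqrt hsum
      _ < ε := by
          have h := Real.sqrt_lt_sqrt (mul_nonneg hη0.le hK0) hηK
          rwa [Real.sqrt_sq hε.le] at h
end
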